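/- arXiv:1405.2441 — 6 statements merged into one kernel-verified Lean document; each statement's English description precedes it below -/
import Mathlib

section
/- Fix n ≥ 1 and a subset S = {s_1, s_2, ..., s_k} of {1, ..., n-1} with s_1 < s_2 < ... < s_k, and set s_0 = 0 and s_{k+1} = n. Then the number of permutations π of {1, ..., n} whose set of ascent bottoms A(π) is contained in S equals ∏_{r=1}^{k+1} r^{s_r - s_{r-1}}. -/
/-- The `i`-th value (1-indexed) of the permutation `π` of `{1, …, n}`, i.e. `a_i ∈ {1, …, n}`.
For `i` outside `{1, …, n}` a junk value is returned. -/
def pval {n : ℕ} (π : Equiv.Perm (Fin n)) (i : ℕ) : ℕ :=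
  if h : i - 1 < n then (π ⟨i - 1, h⟩ : ℕ) + 1 else 0

/-- The set of ascent bottoms `A(π) = { a_i : i ∈ {1, …, n-1}, a_i < a_{i+1} }`. -/
def ascentBottoms {n : ℕ} (π : Equiv.Perm (Fin n)) : Finset ℕ :=
  ((Finset.Icc 1 (n - 1)).filter fun i => pval π i < pval π (i + 1)).image (pval π)

/-- For `S = {s_1 < s_2 < ⋯ < s_k} ⊆ {1, …, n-1}`, `sVal n S r` is `s_r`, with the
conventions `s_0 = 0` and `s_{k+1} = n`. -/
def sVal (n : ℕ) (S : Finset ℕ) (r : ℕ) : ℕ :=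
  if r = 0 then 0 else if r = S.card + 1 then n else (S.sort (· ≤ ·)).getD (r - 1) 0

namespace AscAux

open Finset List

/-- The chain condition on a word equivalent to "all ascent bottoms lie in `S`". -/
def ok (S : Finset ℕ) (l : List ℕ) : Prop :=
  List.Chain' (fun a b => a < b → a ∈ S) l

instance (S : Finset ℕ) : DecidablePred (ok S) := fun l => by unfold ok List.Chain'; infer_instance

/-- Insert `x` at position `p` in the list `l`. -/
def ins (p : ℕ) (x : ℕ) (l : List ℕ) : List ℕ := l.take p ++ x :: l.drop p

/-- The finite set of words that are permutations of `1, …, m` and satisfy `ok S`. -/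
noncomputable def P (S : Finset ℕ) (m : ℕ) : Finset (List ℕ) :=
  ((Finset.Icc 1 m).toList.permutations.toFinset).filter (ok S)

lemma mem_P {S : Finset ℕ} {m : ℕ} {l : List ℕ} :
    l ∈ P S m ↔ l.Perm (Finset.Icc 1 m).toList ∧ ok S l := by
  simp [P, List.mem_toFinset, List.mem_permutations]

lemma ins_perm (p x : ℕ) (l : List ℕ) : (ins p x l).Perm (x :: l) := by
  have := List.perm_middle (a := x) (l₁ := l.take p) (l₂ := l.drop p)
  simpa [ins, List.take_append_drop] using this

lemma takeWhile_helper (x : ℕ) (a b : List ℕ) (h : ∀ y ∈ a, y ≠ x) :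
    (a ++ x :: b).takeWhile (fun y => y ≠ x) = a ∧
      (a ++ x :: b).dropWhile (fun y => y ≠ x) = x :: b := by
  induction a with
  | nil => simp
  | cons y a ih =>
      have hy : y ≠ x := h y (by simp)
      have := ih (fun z hz => h z (by simp [hz]))
      simp only [decide_not] at this ⊢
      simp [List.takeWhile_cons, List.dropWhile_cons, hy, this.1, this.2]

lemma ins_inj {x : ℕ} {l l' : List ℕ} {p p' : ℕ} (hp : p ≤ l.length) (hp' : p' ≤ l'.length)
    (hx : x ∉ l) (hx' : x ∉ l') (h : ins p x l = ins p' x l') : l = l' ∧ p = p' := by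
  have h1 := takeWhile_helper x (l.take p) (l.drop p)
    (fun y hy => fun hc => hx (hc ▸ List.mem_of_mem_take hy))
  have h2 := takeWhile_helper x (l'.take p') (l'.drop p')
    (fun y hy => fun hc => hx' (hc ▸ List.mem_of_mem_take hy))
  unfold ins at h
  rw [h] at h1
  have ht : l.take p = l'.take p' := h1.1.symm.trans h2.1
  have hd : l.drop p = l'.drop p' := List.cons_injective (h1.2.symm.trans h2.2)
  constructor
  · rw [← List.take_append_drop p l, ← List.take_append_drop p' l', ht, hd]
  · have : (l.take p).length = (l'.take p').length := by rw [ht]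
    simpa [List.length_take, Nat.min_eq_left hp, Nat.min_eq_left hp'] using this

lemma ok_ins {S : Finset ℕ} {x : ℕ} {l : List ℕ} (p : ℕ) (hl : ∀ y ∈ l, y < x) :
    ok S (ins p x l) ↔ ok S l ∧ ∀ a ∈ (l.take p).getLast?, a ∈ S := by
  have hmemt : ∀ y ∈ l.take p, y < x := fun y hy => hl y (List.mem_of_mem_take hy)
  have hmemd : ∀ y ∈ l.drop p, y < x := fun y hy => hl y (List.mem_of_mem_drop hy)
  unfold ok ins List.Chain'
  rw [List.isChain_append, List.isChain_cons]
  have hsplit : List.Chain' (fun a b => a < b → a ∈ S) l ↔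
      List.Chain' (fun a b => a < b → a ∈ S) (l.take p) ∧
      List.Chain' (fun a b => a < b → a ∈ S) (l.drop p) ∧
      ∀ a ∈ (l.take p).getLast?, ∀ y ∈ (l.drop p).head?, a < y → a ∈ S := by
    conv_lhs => rw [← List.take_append_drop p l]
    unfold List.Chain'
    rw [List.isChain_append]
  unfold List.Chain' at hsplit
  rw [hsplit]
  constructor
  · rintro ⟨hct, ⟨hhd, hcd⟩, hlast⟩
    have hS : ∀ a ∈ (l.take p).getLast?, a ∈ S := by
      intro a ha
      have := hlast a ha x (by simp)
      exact this (hmemt a (List.mem_of_mem_getLast? ha))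
    exact ⟨⟨hct, hcd, fun a ha y hy _ => hS a ha⟩, hS⟩
  · rintro ⟨⟨hct, hcd, _⟩, hS⟩
    refine ⟨hct, ⟨?_, hcd⟩, ?_⟩
    · intro y hy hxy
      exact absurd hxy (Nat.not_lt.mpr (le_of_lt (hmemd y (List.mem_of_mem_head? hy))))
    · intro a ha y hy
      simp only [List.head?_cons, Option.mem_def, Option.some.injEq] at hy
      exact fun _ => hS a ha

/-- The valid insertion positions. -/
def slots (S : Finset ℕ) (l : List ℕ) : Finset ℕ :=
  insert 0 (((Finset.range l.length).filter (fun i => l.getD i 0 ∈ S)).image (· + 1))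

lemma getLast?_take {l : List ℕ} {p : ℕ} (h1 : 1 ≤ p) (h2 : p ≤ l.length) :
    (l.take p).getLast? = some (l.getD (p - 1) 0) := by
  have hplen : (l.take p).length = p := by simp [List.length_take, Nat.min_eq_left h2]
  rw [List.getLast?_eq_getElem?, hplen, List.getElem?_take]
  have h3 : p - 1 < p := by omega
  have h4 : p - 1 < l.length := by omega
  rw [if_pos h3, List.getElem?_eq_getElem h4, List.getD_eq_getElem l 0 h4]

lemma mem_slots {S : Finset ℕ} {l : List ℕ} {p : ℕ} :
    p ∈ slots S l ↔ p ≤ l.length ∧ ∀ a ∈ (l.take p).getLast?, a ∈ S := by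
  simp only [slots, Finset.mem_insert, Finset.mem_image, Finset.mem_filter, Finset.mem_range]
  constructor
  · rintro (rfl | ⟨i, ⟨hi, hiS⟩, rfl⟩)
    · simp
    · refine ⟨by omega, ?_⟩
      rw [getLast?_take (by omega) (by omega)]
      intro a ha
      simp only [Option.mem_def, Option.some.injEq] at ha
      subst ha
      simpa using hiS
  · rintro ⟨hp, hS⟩
    rcases Nat.eq_zero_or_pos p with rfl | hpos
    · exact Or.inl rfl
    · refine Or.inr ⟨p - 1, ⟨by omega, ?_⟩, by omega⟩
      apply hS
      rw [getLast?_take hpos hp]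
      rfl

lemma card_filter_range_getD (l : List ℕ) (S : Finset ℕ) :
    ((Finset.range l.length).filter (fun i => l.getD i 0 ∈ S)).card
      = l.countP (· ∈ S) := by
  induction l using List.reverseRecOn with
  | nil => simp
  | append_singleton t x ih =>
      have hlen : (t ++ [x]).length = t.length + 1 := by simp
      rw [hlen, Finset.range_add_one, Finset.filter_insert]
      have hfe : Finset.filter (fun i => (t ++ [x]).getD i 0 ∈ S) (Finset.range t.length)
          = Finset.filter (fun i => t.getD i 0 ∈ S) (Finset.range t.length) := by
        apply Finset.filter_congr
        intro i hi
        rw [Finset.mem_range] at hi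
        rw [List.getD_eq_getElem _ 0 (by simp; omega), List.getD_eq_getElem _ 0 hi,
          List.getElem_append_left hi]
      have hx : (t ++ [x]).getD t.length 0 = x := by
        rw [List.getD_eq_getElem _ 0 (by simp), List.getElem_append_right (le_refl _)]
        simp
      have hcount : (t ++ [x]).countP (· ∈ S) = t.countP (· ∈ S) + if x ∈ S then 1 else 0 := by
        rw [List.countP_append]
        simp [List.countP_cons]
      rw [hcount, hx]
      by_cases hxs : x ∈ S
      · rw [if_pos hxs, Finset.card_insert_of_notMem (by simp), hfe, ih, if_pos hxs]
      · rw [if_neg hxs, hfe, ih, if_neg hxs]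
        omega

lemma card_slots {S : Finset ℕ} (l : List ℕ) :
    (slots S l).card = l.countP (· ∈ S) + 1 := by
  unfold slots
  rw [Finset.card_insert_of_notMem (by simp),
    Finset.card_image_of_injective _ (fun a b h => by omega), card_filter_range_getD]

lemma countP_toList (T : Finset ℕ) (p : ℕ → Prop) [DecidablePred p] :
    T.toList.countP (fun a => p a) = (T.filter p).card := by
  rw [List.countP_eq_length_filter]
  have hperm : T.toList.filter (fun a => decide (p a)) ~ (T.filter p).toList := by
    apply List.perm_of_nodup_nodup_toFinset_eq
    · exact (Finset.nodup_toList T).filter _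
    · exact Finset.nodup_toList _
    · ext a
      simp [List.mem_filter]
  rw [hperm.length_eq, Finset.length_toList]

lemma mem_le_of_mem_P {S : Finset ℕ} {m : ℕ} {l : List ℕ} (h : l ∈ P S m) :
    ∀ y ∈ l, y ≤ m := by
  intro y hy
  have := (mem_P.mp h).1.subset hy
  rw [Finset.mem_toList, Finset.mem_Icc] at this
  exact this.2

lemma not_mem_of_mem_P {S : Finset ℕ} {m : ℕ} {l : List ℕ} (h : l ∈ P S m) :
    m + 1 ∉ l := fun hc => by have := mem_le_of_mem_P h _ hc; omega

lemma Icc_succ_perm (m : ℕ) :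
    (Finset.Icc 1 (m + 1)).toList.Perm ((m + 1) :: (Finset.Icc 1 m).toList) := by
  have h1 : Finset.Icc 1 (m + 1) = insert (m + 1) (Finset.Icc 1 m) := by
    ext a; simp [Finset.mem_Icc]; omega
  rw [h1]
  exact Finset.toList_insert (by simp)

lemma P_succ (S : Finset ℕ) (m : ℕ) :
    P S (m + 1) = (P S m).biUnion (fun l => (slots S l).image (fun p => ins p (m + 1) l)) := by
  ext r
  simp only [Finset.mem_biUnion, Finset.mem_image]
  constructor
  · intro hr
    obtain ⟨hperm, hok⟩ := mem_P.mp hr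
    have hmem : (m + 1) ∈ r := by
      rw [hperm.mem_iff, Finset.mem_toList, Finset.mem_Icc]; omega
    obtain ⟨a, b, rfl⟩ := List.append_of_mem hmem
    set l := a ++ b with hl
    have hins : a ++ (m + 1) :: b = ins a.length (m + 1) l := by
      rw [ins, hl, List.take_left, List.drop_left]
    have hpl : a.length ≤ l.length := by simp [hl]
    have hperm2 : l.Perm (Finset.Icc 1 m).toList := by
      have h3 : ((m+1) :: l).Perm ((m + 1) :: (Finset.Icc 1 m).toList) :=
        (List.perm_middle.symm.trans hperm).trans (Icc_succ_perm m)
      exact h3.cons_inv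
    have hlt : ∀ y ∈ l, y < m + 1 := by
      intro y hy
      have := hperm2.subset hy
      rw [Finset.mem_toList, Finset.mem_Icc] at this
      omega
    rw [hins] at hok
    rw [ok_ins _ hlt] at hok
    refine ⟨l, mem_P.mpr ⟨hperm2, hok.1⟩, a.length, mem_slots.mpr ⟨hpl, hok.2⟩, hins.symm⟩
  · rintro ⟨l, hlP, p, hp, rfl⟩
    obtain ⟨hperm, hok⟩ := mem_P.mp hlP
    have hlt : ∀ y ∈ l, y < m + 1 := fun y hy => by
      have := mem_le_of_mem_P hlP y hy; omega
    refine mem_P.mpr ⟨?_, (ok_ins p hlt).mpr ⟨hok, (mem_slots.mp hp).2⟩⟩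
    exact ((ins_perm p (m+1) l).trans (hperm.cons (m+1))).trans (Icc_succ_perm m).symm

lemma card_P_succ (S : Finset ℕ) (m : ℕ) :
    (P S (m + 1)).card = (((Finset.Icc 1 m).filter (· ∈ S)).card + 1) * (P S m).card := by
  rw [P_succ, Finset.card_biUnion]
  · have hc : ∀ l ∈ P S m,
        ((slots S l).image (fun p => ins p (m + 1) l)).card
          = ((Finset.Icc 1 m).filter (· ∈ S)).card + 1 := by
      intro l hl
      rw [Finset.card_image_of_injOn, card_slots]
      · congr 1
        rw [← countP_toList]
        exact ((mem_P.mp hl).1.countP_eq _)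
      · intro p hp q hq hpq
        exact (ins_inj (mem_slots.mp hp).1 (mem_slots.mp hq).1
          (not_mem_of_mem_P hl) (not_mem_of_mem_P hl) hpq).2
    rw [Finset.sum_congr rfl hc, Finset.sum_const, smul_eq_mul, Nat.mul_comm]
  · intro l₁ h₁ l₂ h₂ hne
    rw [Function.onFun, Finset.disjoint_left]
    rintro r hr₁ hr₂
    obtain ⟨p, hp, rfl⟩ := Finset.mem_image.mp hr₁
    obtain ⟨q, hq, heq⟩ := Finset.mem_image.mp hr₂
    exact hne ((ins_inj (mem_slots.mp hq).1 (mem_slots.mp hp).1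
      (not_mem_of_mem_P h₂) (not_mem_of_mem_P h₁) heq).1.symm)

lemma card_P_zero (S : Finset ℕ) : (P S 0).card = 1 := by
  have : P S 0 = {[]} := by
    ext l
    rw [mem_P]
    simp only [Finset.mem_singleton]
    constructor
    · rintro ⟨h1, -⟩
      simpa using h1
    · rintro rfl
      exact ⟨by simp, by simp [ok, List.Chain']⟩
  rw [this, Finset.card_singleton]

lemma card_P (S : Finset ℕ) (n : ℕ) :
    (P S n).card = ∏ m ∈ Finset.range n, (((Finset.Icc 1 m).filter (· ∈ S)).card + 1) := by
  induction n with
  | zero => simpa using card_P_zero S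
  | succ n ih => rw [card_P_succ, ih, Finset.prod_range_succ]; ring

lemma sv_zero (n : ℕ) (S : Finset ℕ) : sVal n S 0 = 0 := by simp [sVal]

lemma sv_top (n : ℕ) (S : Finset ℕ) : sVal n S (S.card + 1) = n := by simp [sVal]

lemma sv_mid (n : ℕ) (S : Finset ℕ) {j : ℕ} (h1 : 1 ≤ j) (h2 : j ≤ S.card) :
    sVal n S j = (S.sort (· ≤ ·))[j - 1]'(by rw [Finset.length_sort]; omega) := by
  rw [sVal, if_neg (by omega), if_neg (by omega)]
  rw [List.getD_eq_getElem _ 0 (by rw [Finset.length_sort]; omega)]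

lemma sv_mem (n : ℕ) (S : Finset ℕ) {j : ℕ} (h1 : 1 ≤ j) (h2 : j ≤ S.card) :
    sVal n S j ∈ S := by
  rw [sv_mid n S h1 h2]
  rw [← Finset.mem_sort (α := ℕ) (· ≤ ·)]
  exact List.getElem_mem _

lemma sv_lt_of_lt (n : ℕ) (S : Finset ℕ) {i j : ℕ} (h0 : 1 ≤ i) (hij : i < j)
    (hj : j ≤ S.card) : sVal n S i < sVal n S j := by
  rw [sv_mid n S h0 (by omega), sv_mid n S (by omega) hj]
  have hs := (Finset.sortedLT_sort S).pairwise
  rw [List.pairwise_iff_get] at hs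
  exact hs ⟨i - 1, by rw [Finset.length_sort]; omega⟩ ⟨j - 1, by rw [Finset.length_sort]; omega⟩
    (by simp only [Fin.mk_lt_mk]; omega)

lemma sv_mono (n : ℕ) (S : Finset ℕ) (hS : S ⊆ Finset.Icc 1 (n - 1)) (hn : 1 ≤ n)
    {j : ℕ} (hj : j ≤ S.card) : sVal n S j ≤ sVal n S (j + 1) := by
  rcases Nat.eq_zero_or_pos j with rfl | hpos
  · simp [sv_zero]
  rcases eq_or_lt_of_le hj with rfl | hlt
  · rw [sv_top]
    have := hS (sv_mem n S hpos hj)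
    rw [Finset.mem_Icc] at this
    omega
  · exact le_of_lt (sv_lt_of_lt n S hpos (by omega) (by omega))

lemma count_eq (n : ℕ) (S : Finset ℕ) (hS : S ⊆ Finset.Icc 1 (n - 1)) {j m : ℕ}
    (hj : j ≤ S.card) (h1 : sVal n S j ≤ m) (h2 : m < sVal n S (j + 1)) :
    ((Finset.Icc 1 m).filter (· ∈ S)).card = j := by
  have hIS : (Finset.Icc 1 m).filter (· ∈ S) = S.filter (· ≤ m) := by
    ext x
    simp only [Finset.mem_filter, Finset.mem_Icc]
    constructor
    · rintro ⟨⟨-, hxm⟩, hxS⟩; exact ⟨hxS, hxm⟩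
    · rintro ⟨hxS, hxm⟩
      have := hS hxS
      rw [Finset.mem_Icc] at this
      exact ⟨⟨this.1, hxm⟩, hxS⟩
  rw [hIS]
  set L := S.sort (· ≤ ·) with hL
  have hlen : L.length = S.card := Finset.length_sort _
  have hlen2 : (S.sort (· ≤ ·)).length = S.card := Finset.length_sort _
  have hs := (Finset.sortedLT_sort S).pairwise
  rw [List.pairwise_iff_get] at hs
  change ∀ (i j : Fin L.length), i < j → L.get i < L.get j at hs
  have hcard : (S.filter (· ≤ m)).card = L.countP (· ≤ m) := by
    rw [← countP_toList S (· ≤ m)]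
    exact ((Finset.sort_perm_toList S (r := (· ≤ ·))).countP_eq _).symm
  rw [hcard, ← List.take_append_drop j L, List.countP_append]
  have htake : (L.take j).countP (· ≤ m) = j := by
    have hlt : (L.take j).length = j := by
      rw [List.length_take]; omega
    conv_rhs => rw [← hlt]
    apply List.countP_eq_length.mpr
    intro a ha
    obtain ⟨i, hi, rfl⟩ := List.mem_iff_getElem.mp ha
    have hi' : i < j := by rw [List.length_take] at hi; omega
    have hiL : i < L.length := by omega
    rw [List.getElem_take]
    simp only [decide_eq_true_eq]
    have hj1 : 1 ≤ j := by omega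
    have hjm : L[j-1]'(by omega) ≤ m := by rw [← sv_mid n S hj1 hj]; exact h1
    rcases eq_or_lt_of_le (by omega : i ≤ j - 1) with heq | hlt2
    · exact heq ▸ hjm
    · have := hs ⟨i, by omega⟩ ⟨j - 1, by omega⟩ (by simp only [Fin.mk_lt_mk]; omega)
      simp only [List.get_eq_getElem] at this
      omega
  have hdrop : (L.drop j).countP (· ≤ m) = 0 := by
    apply List.countP_eq_zero.mpr
    intro a ha
    obtain ⟨i, hi, rfl⟩ := List.mem_iff_getElem.mp ha
    have hi' : j + i < L.length := by rw [List.length_drop] at hi; omega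
    have hjk : j < S.card := by omega
    rw [List.getElem_drop]
    simp only [decide_eq_true_eq, Nat.not_le]
    have hjm : m < L[j]'(by omega) := by
      have h2' := h2
      rw [sv_mid n S (by omega) (by omega : j + 1 ≤ S.card)] at h2'
      simpa using h2'
    rcases Nat.eq_zero_or_pos i with rfl | hpos
    · simpa using hjm
    · have := hs ⟨j, by omega⟩ ⟨j + i, by omega⟩ (by simp only [Fin.mk_lt_mk]; omega)
      simp only [List.get_eq_getElem] at this
      omega
  omega

lemma prod_count (n : ℕ) (S : Finset ℕ) (hS : S ⊆ Finset.Icc 1 (n - 1)) (hn : 1 ≤ n) :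
    ∏ m ∈ Finset.range n, (((Finset.Icc 1 m).filter (· ∈ S)).card + 1)
      = ∏ r ∈ Finset.Icc 1 (S.card + 1), r ^ (sVal n S r - sVal n S (r - 1)) := by
  suffices h : ∀ j, j ≤ S.card + 1 →
      ∏ m ∈ Finset.range (sVal n S j), (((Finset.Icc 1 m).filter (· ∈ S)).card + 1)
        = ∏ r ∈ Finset.Icc 1 j, r ^ (sVal n S r - sVal n S (r - 1)) by
    have := h (S.card + 1) le_rfl
    rwa [sv_top] at this
  intro j
  induction j with
  | zero => intro _; simp [sv_zero]
  | succ j ih =>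
      intro hj
      have hj' : j ≤ S.card := by omega
      have hmono := sv_mono n S hS hn hj'
      rw [Finset.prod_Icc_succ_top (by omega), ← ih (by omega),
        Finset.range_eq_Ico, Finset.range_eq_Ico,
        ← Finset.prod_Ico_consecutive _ (Nat.zero_le (sVal n S j)) hmono]
      congr 1
      have hconst : ∀ m ∈ Finset.Ico (sVal n S j) (sVal n S (j + 1)),
          ((Finset.Icc 1 m).filter (· ∈ S)).card + 1 = j + 1 := by
        intro m hm
        rw [Finset.mem_Ico] at hm
        rw [count_eq n S hS hj' hm.1 hm.2]
      rw [Finset.prod_congr rfl hconst, Finset.prod_const, Nat.card_Ico]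
      simp

/-- The word associated to a permutation. -/
def F {n : ℕ} (π : Equiv.Perm (Fin n)) : List ℕ := List.ofFn (fun i => (π i : ℕ) + 1)

lemma F_length {n : ℕ} (π : Equiv.Perm (Fin n)) : (F π).length = n := by simp [F]

lemma F_get {n : ℕ} (π : Equiv.Perm (Fin n)) (i : ℕ) (h : i < n) :
    (F π)[i]'(by simp [F, h]) = (π ⟨i, h⟩ : ℕ) + 1 := by
  simp [F]

lemma F_inj {n : ℕ} : Function.Injective (F (n := n)) := by
  intro π π' h
  unfold F at h
  rw [List.ofFn_inj] at h
  ext i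
  have h2 := congrFun h i
  omega

lemma F_perm {n : ℕ} (π : Equiv.Perm (Fin n)) : (F π).Perm (Finset.Icc 1 n).toList := by
  apply List.perm_of_nodup_nodup_toFinset_eq
  · rw [F, List.nodup_ofFn]
    intro i j hij
    have : (π i : ℕ) = (π j : ℕ) := by simpa using hij
    exact π.injective (Fin.val_injective this)
  · exact Finset.nodup_toList _
  · ext x
    simp only [List.mem_toFinset, F, List.mem_ofFn, Set.mem_range, Finset.toList_toFinset,
      Finset.mem_Icc]
    constructor
    · rintro ⟨i, rfl⟩
      have := (π i).isLt
      omega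
    · rintro ⟨h1, h2⟩
      refine ⟨π.symm ⟨x - 1, by omega⟩, ?_⟩
      rw [Equiv.apply_symm_apply]
      simp
      omega

lemma pval_eq {n : ℕ} (π : Equiv.Perm (Fin n)) (i : ℕ) (h : i < n) :
    pval π (i + 1) = (π ⟨i, h⟩ : ℕ) + 1 := by
  simp only [pval, Nat.add_sub_cancel, dif_pos h]

lemma ok_iff {n : ℕ} (hn : 1 ≤ n) (π : Equiv.Perm (Fin n)) (S : Finset ℕ) :
    ok S (F π) ↔ ascentBottoms π ⊆ S := by
  have key : ∀ (i : ℕ) (h : i < n), (F π)[i]'(by rw [F_length]; exact h) = pval π (i + 1) :=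
    fun i h => (F_get π i h).trans (pval_eq π i h).symm
  rw [ok, List.Chain', List.isChain_iff_getElem, ascentBottoms, Finset.image_subset_iff]
  constructor
  · intro h j hj
    rw [Finset.mem_filter, Finset.mem_Icc] at hj
    obtain ⟨⟨hj1, hj2⟩, hlt⟩ := hj
    have this1 := h (j - 1) (by rw [F_length]; omega)
    rw [key (j - 1) (by omega), key (j - 1 + 1) (by omega)] at this1
    rw [show j - 1 + 1 = j by omega] at this1
    exact this1 hlt
  · intro h i hi
    rw [F_length] at hi
    rw [key i (by omega), key (i + 1) (by omega)]
    intro hlt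
    apply h
    rw [Finset.mem_filter, Finset.mem_Icc]
    exact ⟨⟨by omega, by omega⟩, hlt⟩

lemma image_F {n : ℕ} (hn : 1 ≤ n) (S : Finset ℕ) :
    (Finset.univ.filter (fun π : Equiv.Perm (Fin n) => ascentBottoms π ⊆ S)).image F
      = P S n := by
  ext r
  simp only [Finset.mem_image, Finset.mem_filter, Finset.mem_univ, true_and]
  constructor
  · rintro ⟨π, hπ, rfl⟩
    exact mem_P.mpr ⟨F_perm π, (ok_iff hn π S).mpr hπ⟩
  · intro hr
    obtain ⟨hperm, hok⟩ := mem_P.mp hr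
    have hlen : r.length = n := by
      rw [hperm.length_eq, Finset.length_toList, Nat.card_Icc]
      omega
    have hmem : ∀ i (h : i < n), r[i]'(by omega) ∈ Finset.Icc 1 n := by
      intro i h
      rw [← Finset.mem_toList, ← hperm.mem_iff]
      exact List.getElem_mem _
    have hbound : ∀ i (h : i < n), r[i]'(by omega) - 1 < n := by
      intro i h
      have := hmem i h
      rw [Finset.mem_Icc] at this
      omega
    have hnodup : r.Nodup := hperm.symm.nodup (Finset.nodup_toList _)
    set f : Fin n → Fin n := fun i => (⟨r[(i : ℕ)]'(by omega) - 1, hbound i i.isLt⟩ : Fin n)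
      with hf
    have finj : Function.Injective f := by
      intro i j hij
      have hval : r[(i : ℕ)]'(by omega) - 1 = r[(j : ℕ)]'(by omega) - 1 :=
        congrArg Fin.val hij
      have h1 := hmem i i.isLt
      have h2 := hmem j j.isLt
      rw [Finset.mem_Icc] at h1 h2
      have heq : r[(i : ℕ)]'(by omega) = r[(j : ℕ)]'(by omega) := by omega
      exact Fin.ext (hnodup.getElem_inj_iff.mp heq)
    set π : Equiv.Perm (Fin n) :=
      Equiv.ofBijective f (Finite.injective_iff_bijective.mp finj) with hπdef
    have hFπ : F π = r := by
      apply List.ext_getElem (by rw [F_length, hlen])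
      intro i h1 h2
      rw [F_get π i (by rwa [F_length] at h1)]
      have hπi : (π ⟨i, by rwa [F_length] at h1⟩ : ℕ) = r[i]'h2 - 1 := by
        rfl
      rw [hπi]
      have := hmem i (by omega)
      rw [Finset.mem_Icc] at this
      omega
    exact ⟨π, (ok_iff hn π S).mp (hFπ ▸ hok), hFπ⟩

end AscAux

/-- The number of permutations of `{1, …, n}` whose set of ascent bottoms is contained in
`S = {s_1 < ⋯ < s_k} ⊆ {1, …, n-1}` equals `∏_{r=1}^{k+1} r^(s_r - s_{r-1})`,
where `s_0 = 0` and `s_{k+1} = n`. -/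
theorem card_ascentBottoms_subset (n : ℕ) (hn : 1 ≤ n) (S : Finset ℕ)
    (hS : S ⊆ Finset.Icc 1 (n - 1)) :
    Nat.card {π : Equiv.Perm (Fin n) // ascentBottoms π ⊆ S} =
      ∏ r ∈ Finset.Icc 1 (S.card + 1), r ^ (sVal n S r - sVal n S (r - 1)) := by
  rw [Nat.card_eq_fintype_card, Fintype.card_subtype]
  have h1 : (Finset.univ.filter (fun π : Equiv.Perm (Fin n) => ascentBottoms π ⊆ S)).card
      = (AscAux.P S n).card := by
    rw [← AscAux.image_F hn S, Finset.card_image_of_injective _ AscAux.F_inj]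
  rw [h1, AscAux.card_P, AscAux.prod_count n S hS hn]
end

section
/- Fix n ≥ 1 and a subset S = {s_1, ..., s_k} of {1, ..., n-1} with s_1 < ... < s_k. Then the number of permutations π of {1, ..., n} with A(π) ⊆ S equals the number of inversion tables b_1 b_2 ... b_n of length n whose set of distinct entries is contained in {0} ∪ S, i.e. dent(b) ⊆ {0, s_1, ..., s_k}. -/
/-- `b : Fin n → ℕ` is an inversion table of length `n` if `b_i ≤ n - i` for every
(1-indexed) `i ∈ {1, …, n}`. -/
def IsInvTable {n : ℕ} (b : Fin n → ℕ) : Prop :=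
  ∀ i : Fin n, b i ≤ n - ((i : ℕ) + 1)

/-- `dent b` is the set of distinct entries of `b`. -/
def dent {n : ℕ} (b : Fin n → ℕ) : Finset ℕ :=
  Finset.image b Finset.univ

open Finset

/-- Positions `p` strictly left of the position of value `v` holding a value smaller than `v`. -/
def posSet {n : ℕ} (π : Equiv.Perm (Fin n)) (v : Fin n) : Finset (Fin n) :=
  Finset.univ.filter fun p => p < π.symm v ∧ π p < v

/-- `codeAt π v` is `j + 1` where `j` is the value at the rightmost position left of the
position of `v` holding a value smaller than `v`, or `0` if there is no such position. -/
def codeAt {n : ℕ} (π : Equiv.Perm (Fin n)) (v : Fin n) : ℕ :=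
  if h : (posSet π v).Nonempty then (π ((posSet π v).max' h) : ℕ) + 1 else 0

/-- The code (inversion-table-like statistic) of a permutation. -/
def code {n : ℕ} (π : Equiv.Perm (Fin n)) : Fin n → ℕ := fun i => codeAt π i.rev

lemma mem_posSet {n : ℕ} {π : Equiv.Perm (Fin n)} {v p : Fin n} :
    p ∈ posSet π v ↔ p < π.symm v ∧ π p < v := by
  simp [posSet]

lemma codeAt_le {n : ℕ} (π : Equiv.Perm (Fin n)) (v : Fin n) : codeAt π v ≤ (v : ℕ) := by
  unfold codeAt
  split
  · next h =>
    have hm := (posSet π v).max'_mem h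
    rw [mem_posSet] at hm
    exact hm.2
  · exact Nat.zero_le _

lemma isInvTable_code {n : ℕ} (π : Equiv.Perm (Fin n)) : IsInvTable (code π) := by
  intro i
  show codeAt π i.rev ≤ n - ((i : ℕ) + 1)
  have h := codeAt_le π i.rev
  have h2 : (i.rev : ℕ) = n - ((i : ℕ) + 1) := by
    rw [Fin.val_rev]
  omega

/-- Characterization of membership in `ascentBottoms` in terms of `Fin` positions. -/
lemma mem_ascentBottoms_iff {n : ℕ} (π : Equiv.Perm (Fin n)) (x : ℕ) :
    x ∈ ascentBottoms π ↔
      ∃ p : Fin n, ∃ hp : (p : ℕ) + 1 < n, π p < π ⟨(p : ℕ) + 1, hp⟩ ∧ x = (π p : ℕ) + 1 := by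
  unfold ascentBottoms
  simp only [Finset.mem_image, Finset.mem_filter, Finset.mem_Icc]
  constructor
  · rintro ⟨i, ⟨⟨h1, h2⟩, hlt⟩, rfl⟩
    have hn : 1 ≤ n := by
      by_contra h
      omega
    have hi : i - 1 < n := by omega
    have hi1 : (i + 1) - 1 < n := by omega
    have hps : ((⟨i - 1, hi⟩ : Fin n) : ℕ) + 1 < n := by
      show (i - 1) + 1 < n
      omega
    refine ⟨⟨i - 1, hi⟩, hps, ?_, ?_⟩
    · have he : (⟨((⟨i - 1, hi⟩ : Fin n) : ℕ) + 1, hps⟩ : Fin n) = ⟨(i + 1) - 1, hi1⟩ :=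
        Fin.ext (show (i - 1) + 1 = (i + 1) - 1 by omega)
      rw [he, Fin.lt_def]
      rw [pval, dif_pos hi, pval, dif_pos hi1] at hlt
      omega
    · rw [pval, dif_pos hi]
  · rintro ⟨p, hp, hlt, rfl⟩
    have hpn : (p : ℕ) < n := p.isLt
    refine ⟨(p : ℕ) + 1, ⟨⟨by omega, by omega⟩, ?_⟩, ?_⟩
    · have h1 : ((p : ℕ) + 1) - 1 < n := by omega
      have h2 : ((p : ℕ) + 1 + 1) - 1 < n := by omega
      rw [pval, dif_pos h1, pval, dif_pos h2]
      have e1 : (⟨((p : ℕ) + 1) - 1, h1⟩ : Fin n) = p :=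
        Fin.ext (show (p : ℕ) + 1 - 1 = (p : ℕ) by omega)
      have e2 : (⟨((p : ℕ) + 1 + 1) - 1, h2⟩ : Fin n) = ⟨(p : ℕ) + 1, hp⟩ :=
        Fin.ext (show (p : ℕ) + 1 + 1 - 1 = (p : ℕ) + 1 by omega)
      rw [e1, e2]
      rw [Fin.lt_def] at hlt
      omega
    · have h1 : ((p : ℕ) + 1) - 1 < n := by omega
      rw [pval, dif_pos h1]
      have e1 : (⟨((p : ℕ) + 1) - 1, h1⟩ : Fin n) = p :=
        Fin.ext (show (p : ℕ) + 1 - 1 = (p : ℕ) by omega)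
      rw [e1]

/-- Nonzero code values are ascent bottoms. -/
lemma codeAt_mem_ascentBottoms {n : ℕ} (π : Equiv.Perm (Fin n)) (v : Fin n)
    (h : codeAt π v ≠ 0) : codeAt π v ∈ ascentBottoms π := by
  unfold codeAt at *
  by_cases hne : (posSet π v).Nonempty
  · rw [dif_pos hne] at *
    set p := (posSet π v).max' hne with hp
    have hpm : p ∈ posSet π v := (posSet π v).max'_mem hne
    rw [mem_posSet] at hpm
    have hps : (p : ℕ) + 1 < n := by
      have := hpm.1
      have h2 : (p : ℕ) < (π.symm v : ℕ) := this
      have := (π.symm v).isLt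
      omega
    rw [mem_ascentBottoms_iff]
    refine ⟨p, hps, ?_, rfl⟩
    by_cases hq : (⟨(p : ℕ) + 1, hps⟩ : Fin n) = π.symm v
    · have : π ⟨(p : ℕ) + 1, hps⟩ = v := by rw [hq]; simp
      rw [this]; exact hpm.2
    · have hlt : (⟨(p : ℕ) + 1, hps⟩ : Fin n) < π.symm v := by
        have h1 : (p : ℕ) < (π.symm v : ℕ) := hpm.1
        have : (p : ℕ) + 1 ≤ (π.symm v : ℕ) := h1
        rcases lt_or_eq_of_le this with h | h
        · exact h
        · exact absurd (Fin.ext h) hq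
      have hnm : (⟨(p : ℕ) + 1, hps⟩ : Fin n) ∉ posSet π v := by
        intro hmem
        have := (posSet π v).le_max' _ hmem
        rw [← hp] at this
        have : (p : ℕ) + 1 ≤ (p : ℕ) := this
        omega
      rw [mem_posSet] at hnm
      push_neg at hnm
      have := hnm hlt
      calc π p < v := hpm.2
        _ ≤ π ⟨(p : ℕ) + 1, hps⟩ := this
  · rw [dif_neg hne] at h
    exact absurd rfl h

/-- Every ascent bottom arises as a code value. -/
lemma ascentBottom_eq_codeAt {n : ℕ} (π : Equiv.Perm (Fin n)) {x : ℕ}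
    (h : x ∈ ascentBottoms π) : ∃ v : Fin n, codeAt π v = x := by
  rw [mem_ascentBottoms_iff] at h
  obtain ⟨p, hp, hlt, rfl⟩ := h
  set v := π ⟨(p : ℕ) + 1, hp⟩ with hv
  refine ⟨v, ?_⟩
  have hsymm : π.symm v = ⟨(p : ℕ) + 1, hp⟩ := by rw [hv]; simp
  have hpm : p ∈ posSet π v := by
    rw [mem_posSet, hsymm]
    constructor
    · exact Nat.lt_succ_self _
    · exact hlt
  have hne : (posSet π v).Nonempty := ⟨p, hpm⟩
  have hmax : (posSet π v).max' hne = p := by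
    apply le_antisymm
    · apply Finset.max'_le
      intro q hq
      rw [mem_posSet, hsymm] at hq
      have : (q : ℕ) < (p : ℕ) + 1 := hq.1
      exact Nat.lt_succ_iff.mp this
    · exact Finset.le_max' _ _ hpm
  rw [codeAt, dif_pos hne, hmax]

lemma dent_code_subset_iff {n : ℕ} (π : Equiv.Perm (Fin n)) (S : Finset ℕ) :
    dent (code π) ⊆ insert 0 S ↔ ascentBottoms π ⊆ S := by
  constructor
  · intro h x hx
    obtain ⟨v, hv⟩ := ascentBottom_eq_codeAt π hx
    have hxd : x ∈ dent (code π) := by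
      rw [dent, Finset.mem_image]
      exact ⟨v.rev, Finset.mem_univ _, by rw [code, Fin.rev_rev, hv]⟩
    have := h hxd
    rw [Finset.mem_insert] at this
    rcases this with h0 | hS
    · exfalso
      rw [mem_ascentBottoms_iff] at hx
      obtain ⟨p, _, _, hx⟩ := hx
      omega
    · exact hS
  · intro h x hx
    rw [dent, Finset.mem_image] at hx
    obtain ⟨i, _, rfl⟩ := hx
    rw [code]
    by_cases h0 : codeAt π i.rev = 0
    · rw [h0]; exact Finset.mem_insert_self _ _
    · exact Finset.mem_insert_of_mem (h (codeAt_mem_ascentBottoms π i.rev h0))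

/-- Key characterization: for `u < w`, the position of `u` is left of the position of `w`
iff `u`'s position is at most that of the value recorded by `codeAt π w`. -/
lemma pos_lt_iff_codeAt {n : ℕ} (π : Equiv.Perm (Fin n)) {u w : Fin n} (huw : u < w) :
    π.symm u < π.symm w ↔
      ∃ j : Fin n, codeAt π w = (j : ℕ) + 1 ∧ π.symm u ≤ π.symm j := by
  constructor
  · intro hlt
    have hum : π.symm u ∈ posSet π w := by
      rw [mem_posSet]
      exact ⟨hlt, by simpa using huw⟩
    have hne : (posSet π w).Nonempty := ⟨_, hum⟩
    refine ⟨π ((posSet π w).max' hne), ?_, ?_⟩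
    · rw [codeAt, dif_pos hne]
    · have := Finset.le_max' _ _ hum
      simpa using this
  · rintro ⟨j, hc, hle⟩
    have hne : (posSet π w).Nonempty := by
      by_contra hne
      rw [codeAt, dif_neg hne] at hc
      omega
    rw [codeAt, dif_pos hne] at hc
    have hj : π ((posSet π w).max' hne) = j := by
      have : ((π ((posSet π w).max' hne)) : ℕ) = (j : ℕ) := by omega
      exact Fin.ext this
    have hjm : π.symm j = (posSet π w).max' hne := by
      rw [← hj]; simp
    have hmax := (posSet π w).max'_mem hne
    rw [mem_posSet] at hmax
    calc π.symm u ≤ π.symm j := hle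
      _ = (posSet π w).max' hne := hjm
      _ < π.symm w := hmax.1

lemma code_injective {n : ℕ} : Function.Injective (code (n := n)) := by
  intro π π' h
  have hca : ∀ v : Fin n, codeAt π v = codeAt π' v := by
    intro v
    have := congrFun h v.rev
    rwa [code, code, Fin.rev_rev] at this
  -- main claim by strong induction on the value w
  have main : ∀ m : ℕ, ∀ w : Fin n, (w : ℕ) = m → ∀ u : Fin n, u < w →
      (π.symm u < π.symm w ↔ π'.symm u < π'.symm w) := by
    intro m
    induction m using Nat.strong_induction_on with
    | _ m IH =>
      intro w hw u huw
      -- symmetric comparison for values < w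
      have sym : ∀ a b : Fin n, a < w → b < w →
          (π.symm a < π.symm b ↔ π'.symm a < π'.symm b) := by
        intro a b ha hb
        rcases lt_trichotomy a b with hab | hab | hab
        · exact IH (b : ℕ) (by omega) b rfl a hab
        · subst hab; simp
        · have hiff := IH (a : ℕ) (by omega) a rfl b hab
          constructor
          · intro hlt
            rcases lt_trichotomy (π'.symm a) (π'.symm b) with h1 | h1 | h1
            · exact h1
            · exact absurd (π'.symm.injective h1) (ne_of_gt hab)
            · exact absurd (hiff.mpr h1) (asymm hlt)
          · intro hlt
            rcases lt_trichotomy (π.symm a) (π.symm b) with h1 | h1 | h1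
            · exact h1
            · exact absurd (π.symm.injective h1) (ne_of_gt hab)
            · exact absurd (hiff.mp h1) (asymm hlt)
      have symle : ∀ a b : Fin n, a < w → b < w →
          (π.symm a ≤ π.symm b ↔ π'.symm a ≤ π'.symm b) := by
        intro a b ha hb
        rcases eq_or_ne a b with rfl | hab
        · simp
        · have h1 : π.symm a ≠ π.symm b := fun hc => hab (π.symm.injective hc)
          have h2 : π'.symm a ≠ π'.symm b := fun hc => hab (π'.symm.injective hc)
          rw [le_iff_lt_or_eq, le_iff_lt_or_eq]
          simp only [h1, h2, or_false]
          exact sym a b ha hb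
      rw [pos_lt_iff_codeAt π huw, pos_lt_iff_codeAt π' huw]
      constructor
      · rintro ⟨j, hj, hle⟩
        have hjw : j < w := by
          have := codeAt_le π w
          rw [hj] at this
          exact Fin.lt_def.mpr (by omega)
        exact ⟨j, by rw [← hca]; exact hj, (symle u j huw hjw).mp hle⟩
      · rintro ⟨j, hj, hle⟩
        have hjw : j < w := by
          have := codeAt_le π' w
          rw [hj] at this
          exact Fin.lt_def.mpr (by omega)
        exact ⟨j, by rw [hca]; exact hj, (symle u j huw hjw).mpr hle⟩
  have main' : ∀ u w : Fin n, u < w → (π.symm u < π.symm w ↔ π'.symm u < π'.symm w) :=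
    fun u w huw => main (w : ℕ) w rfl u huw
  -- all comparisons agree
  have allcmp : ∀ u w : Fin n, (π.symm u < π.symm w ↔ π'.symm u < π'.symm w) := by
    intro u w
    rcases lt_trichotomy u w with h | h | h
    · exact main' u w h
    · subst h; simp
    · have hiff := main' w u h
      constructor
      · intro hlt
        rcases lt_trichotomy (π'.symm u) (π'.symm w) with h1 | h1 | h1
        · exact h1
        · exact absurd (π'.symm.injective h1) (ne_of_gt h)
        · exact absurd (hiff.mpr h1) (asymm hlt)
      · intro hlt
        rcases lt_trichotomy (π.symm u) (π.symm w) with h1 | h1 | h1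
        · exact h1
        · exact absurd (π.symm.injective h1) (ne_of_gt h)
        · exact absurd (hiff.mp h1) (asymm hlt)
  -- conclude π = π'
  set F : Fin n → Fin n := fun p => π'.symm (π p) with hF
  have hmono : StrictMono F := by
    intro p q hpq
    have h1 : π.symm (π p) < π.symm (π q) := by simpa using hpq
    have h2 := (allcmp (π p) (π q)).mp h1
    exact h2
  have hsurj : Function.Surjective F := fun q => ⟨π.symm (π' q), by simp [hF]⟩
  have hcoe : ⇑(StrictMono.orderIsoOfSurjective F hmono hsurj) = F :=
    StrictMono.coe_orderIsoOfSurjective F hmono hsurj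
  have heq : StrictMono.orderIsoOfSurjective F hmono hsurj = OrderIso.refl (Fin n) :=
    Subsingleton.elim _ _
  rw [heq] at hcoe
  have hid : ∀ p, F p = p := by
    intro p
    have h1 := congrFun hcoe p
    simpa using h1.symm
  apply Equiv.ext
  intro p
  have := hid p
  rw [hF] at this
  simpa using congrArg π' this

/-- Inversion tables as a pi type. -/
def invTableEquiv (n : ℕ) : {b : Fin n → ℕ // IsInvTable b} ≃ (∀ i : Fin n, Fin (n - (i : ℕ))) where
  toFun b := fun i => ⟨b.1 i, by
    have := b.2 i
    have := i.isLt
    omega⟩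
  invFun f := ⟨fun i => (f i : ℕ), by
    intro i
    show ((f i : ℕ)) ≤ n - ((i : ℕ) + 1)
    have h1 := (f i).isLt
    have h2 := i.isLt
    omega⟩
  left_inv b := by ext i; rfl
  right_inv f := by ext i; rfl

lemma prod_card (n : ℕ) : ∏ i : Fin n, (n - (i : ℕ)) = n.factorial := by
  induction n with
  | zero => simp
  | succ m ih =>
    rw [Fin.prod_univ_succ]
    simp only [Fin.val_zero, Nat.sub_zero, Fin.val_succ]
    have : ∀ i : Fin m, m + 1 - ((i : ℕ) + 1) = m - (i : ℕ) := by intro i; omega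
    rw [Finset.prod_congr rfl (fun i _ => this i), ih, Nat.factorial_succ]

noncomputable instance instFintypeInvTable (n : ℕ) : Fintype {b : Fin n → ℕ // IsInvTable b} :=
  Fintype.ofEquiv _ (invTableEquiv n).symm

lemma card_invTable (n : ℕ) :
    Fintype.card {b : Fin n → ℕ // IsInvTable b} = n.factorial := by
  rw [Fintype.card_congr (invTableEquiv n)]
  rw [Fintype.card_pi]
  simp only [Fintype.card_fin]
  exact prod_card n

/-- The code map as a bijection onto inversion tables. -/
noncomputable def codeEquiv (n : ℕ) : Equiv.Perm (Fin n) ≃ {b : Fin n → ℕ // IsInvTable b} := by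
  apply Equiv.ofBijective (fun π => (⟨code π, isInvTable_code π⟩ : {b : Fin n → ℕ // IsInvTable b}))
  rw [Fintype.bijective_iff_injective_and_card]
  constructor
  · intro π π' h
    exact code_injective (congrArg Subtype.val h)
  · rw [card_invTable, Fintype.card_perm, Fintype.card_fin]

/-- The number of permutations of `{1, …, n}` whose set of ascent bottoms is contained in
`S ⊆ {1, …, n-1}` equals the number of inversion tables of length `n` whose set of
distinct entries is contained in `{0} ∪ S`. -/
theorem card_ascentBottoms_subset_eq_card_invTables (n : ℕ) (hn : 1 ≤ n) (S : Finset ℕ)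
    (hS : S ⊆ Finset.Icc 1 (n - 1)) :
    Nat.card {π : Equiv.Perm (Fin n) // ascentBottoms π ⊆ S} =
      Nat.card {b : Fin n → ℕ // IsInvTable b ∧ dent b ⊆ insert 0 S} := by
  apply Nat.card_congr
  have e1 : {b : Fin n → ℕ // IsInvTable b ∧ dent b ⊆ insert 0 S} ≃
      {x : {b : Fin n → ℕ // IsInvTable b} // dent x.1 ⊆ insert 0 S} :=
    (Equiv.subtypeSubtypeEquivSubtypeInter _ _).symm
  have e2 : {π : Equiv.Perm (Fin n) // ascentBottoms π ⊆ S} ≃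
      {π : Equiv.Perm (Fin n) // dent (code π) ⊆ insert 0 S} :=
    Equiv.subtypeEquivRight (fun π => (dent_code_subset_iff π S).symm)
  have e3 : {π : Equiv.Perm (Fin n) // dent (code π) ⊆ insert 0 S} ≃
      {x : {b : Fin n → ℕ // IsInvTable b} // dent x.1 ⊆ insert 0 S} :=
    (codeEquiv n).subtypeEquiv (fun π => Iff.rfl)
  exact (e2.trans e3).trans e1.symm
end

section
/- Fix n ≥ 1 and a subset S = {s_1, ..., s_k} of {1, ..., n-1} with s_1 < ... < s_k. Then the number of permutations π of {1, ..., n} with A(π) = S equals the number of inversion tables b_1 b_2 ... b_n of length n whose set of distinct entries is exactly {0} ∪ S, i.e. dent(b) = {0, s_1, ..., s_k}. -/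
namespace AB

/-- Insert `x` immediately after the first occurrence of `c`; append at end if absent. -/
def place (c x : ℕ) : List ℕ → List ℕ
  | [] => [x]
  | y :: t => if y = c then y :: x :: t else y :: place c x t

/-- Insert `x` after `c`, or at the front if `c = 0`. -/
def place' (c x : ℕ) (w : List ℕ) : List ℕ :=
  if c = 0 then x :: w else place c x w

/-- The word built by inserting `1, 2, …, n`, value `v` going right after `c v`. -/
def word (c : ℕ → ℕ) : ℕ → List ℕ
  | 0 => []
  | n + 1 => place' (c (n + 1)) (n + 1) (word c n)

lemma mem_place {c x a : ℕ} : ∀ {w : List ℕ}, (a ∈ place c x w ↔ a = x ∨ a ∈ w)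
  | [] => by simp [place]
  | y :: t => by
    simp only [place]
    split
    · simp only [List.mem_cons]; tauto
    · simp only [List.mem_cons, mem_place (w := t)]; tauto

lemma mem_place' {c x a : ℕ} {w : List ℕ} : a ∈ place' c x w ↔ a = x ∨ a ∈ w := by
  unfold place'; split
  · simp
  · exact mem_place

lemma length_place {c x : ℕ} : ∀ (w : List ℕ), (place c x w).length = w.length + 1
  | [] => rfl
  | y :: t => by
    simp only [place]; split
    · simp
    · simp [length_place t]

lemma length_place' {c x : ℕ} (w : List ℕ) : (place' c x w).length = w.length + 1 := by
  unfold place'; split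
  · simp
  · exact length_place w

lemma nodup_place {c x : ℕ} : ∀ {w : List ℕ}, x ∉ w → w.Nodup → (place c x w).Nodup
  | [], _, _ => by simp [place]
  | y :: t, hx, hn => by
    simp only [place]; split
    · simp only [List.nodup_cons, List.mem_cons] at *
      refine ⟨?_, ?_, hn.2⟩
      · rintro (rfl | h); · exact hx (Or.inl rfl)
        · exact hn.1 h
      · intro h; exact hx (Or.inr h)
    · simp only [List.nodup_cons, List.mem_cons] at *
      refine ⟨?_, nodup_place (fun h => hx (Or.inr h)) hn.2⟩
      rw [mem_place]
      rintro (rfl | h)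
      · exact hx (Or.inl rfl)
      · exact hn.1 h

lemma nodup_place' {c x : ℕ} {w : List ℕ} (hx : x ∉ w) (hn : w.Nodup) :
    (place' c x w).Nodup := by
  unfold place'; split
  · simp [hx, hn]
  · exact nodup_place hx hn

lemma mem_word {c : ℕ → ℕ} : ∀ {n a : ℕ}, (a ∈ word c n ↔ 1 ≤ a ∧ a ≤ n)
  | 0, a => by simp [word]; omega
  | n + 1, a => by
    simp only [word, mem_place', mem_word (n := n)]
    omega

lemma length_word {c : ℕ → ℕ} : ∀ n, (word c n).length = n
  | 0 => rfl
  | n + 1 => by simp [word, length_place', length_word n]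

lemma nodup_word {c : ℕ → ℕ} : ∀ n, (word c n).Nodup
  | 0 => by simp [word]
  | n + 1 => by
    refine nodup_place' (fun h => ?_) (nodup_word n)
    rw [mem_word] at h; omega

/-- The set of ascent bottoms of a word. -/
def abots : List ℕ → Finset ℕ
  | y :: z :: t => (if y < z then {y} else ∅) ∪ abots (z :: t)
  | _ => ∅

lemma abots_nil : abots [] = ∅ := rfl
lemma abots_single (y : ℕ) : abots [y] = ∅ := rfl
lemma abots_cons_cons (y z : ℕ) (t : List ℕ) :
    abots (y :: z :: t) = (if y < z then {y} else ∅) ∪ abots (z :: t) := rfl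

lemma abots_cons_of_max {x : ℕ} {w : List ℕ} (h : ∀ y ∈ w, y < x) :
    abots (x :: w) = abots w := by
  cases w with
  | nil => rfl
  | cons z t =>
    rw [abots_cons_cons, if_neg (by have := h z (by simp); omega)]
    simp

lemma place_cons (c x z : ℕ) (t : List ℕ) :
    place c x (z :: t) = z :: (if z = c then x :: t else place c x t) := by
  simp only [place]; split <;> simp_all

lemma abots_place {x c : ℕ} : ∀ {w : List ℕ}, c ∈ w → (∀ y ∈ w, y < x) →
    abots (place c x w) = insert c (abots w)
  | [], hc, _ => by simp at hc
  | y :: t, hc, hlt => by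
    rcases eq_or_ne y c with rfl | hyc
    · rw [place_cons, if_pos rfl, abots_cons_cons,
        if_pos (hlt y (by simp)), abots_cons_of_max (fun z hz => hlt z (by simp [hz]))]
      cases t with
      | nil => simp [abots_nil, abots_single]
      | cons z t' =>
        rw [abots_cons_cons]
        ext a
        by_cases h : y < z <;> simp [h, Finset.mem_insert] <;> tauto
    · have hct : c ∈ t := by
        rcases List.mem_cons.mp hc with h | h
        · exact absurd h.symm hyc
        · exact h
      obtain ⟨z, t', rfl⟩ : ∃ z t', t = z :: t' := by
        cases t with
        | nil => simp at hct
        | cons z t' => exact ⟨z, t', rfl⟩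
      have hplace : ∃ r, place c x (z :: t') = z :: r := by
        rw [place_cons]; exact ⟨_, rfl⟩
      obtain ⟨r, hr⟩ := hplace
      rw [place_cons, if_neg hyc, hr, abots_cons_cons, ← hr,
        abots_place hct (fun u hu => hlt u (by simp [hu])), abots_cons_cons]
      ext a
      by_cases h : y < z <;> simp [h, Finset.mem_insert] <;> tauto

lemma zero_not_mem_abots : ∀ {w : List ℕ}, (∀ y ∈ w, 1 ≤ y) → 0 ∉ abots w
  | [], _ => by simp [abots_nil]
  | [y], _ => by simp [abots_single]
  | y :: z :: t, h => by
    rw [abots_cons_cons]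
    intro hm
    rcases Finset.mem_union.mp hm with hm | hm
    · have := h y (by simp)
      rcases lt_or_ge y z with hlt | hlt
      · rw [if_pos hlt] at hm; simp at hm; omega
      · rw [if_neg (by omega)] at hm; simp at hm
    · exact zero_not_mem_abots (fun u hu => h u (by simp [hu])) hm

lemma abots_word {c : ℕ → ℕ} :
    ∀ {n : ℕ}, (∀ v, 1 ≤ v → v ≤ n → c v < v) →
      abots (word c n) = ((Finset.Icc 1 n).image c).erase 0
  | 0, _ => by simp [word, abots_nil]
  | n + 1, hc => by
    have hIcc : Finset.Icc 1 (n + 1) = insert (n + 1) (Finset.Icc 1 n) := by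
      ext a; simp [Finset.mem_Icc]; omega
    have ih := abots_word (n := n) (fun v h1 h2 => hc v h1 (by omega))
    have hmax : ∀ y ∈ word c n, y < n + 1 := fun y hy => by
      rw [mem_word] at hy; omega
    rcases eq_or_ne (c (n + 1)) 0 with h0 | h0
    · rw [word, place', if_pos h0, abots_cons_of_max hmax, ih, hIcc,
        Finset.image_insert, h0]
      simp
    · have hcm : c (n + 1) ∈ word c n := by
        rw [mem_word]
        have := hc (n + 1) (by omega) le_rfl
        omega
      rw [word, place', if_neg h0, abots_place hcm hmax, ih, hIcc, Finset.image_insert,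
        Finset.erase_insert_of_ne h0]

/-- The element immediately preceding `x`, or `0` if `x` is first (or absent). -/
def prevVal (x : ℕ) : List ℕ → ℕ
  | y :: z :: t => if z = x then y else prevVal x (z :: t)
  | _ => 0

lemma prevVal_of_not_mem {x : ℕ} : ∀ {w : List ℕ}, x ∉ w → prevVal x w = 0
  | [], _ => rfl
  | [_], _ => rfl
  | y :: z :: t, h => by
    rw [prevVal, if_neg (by simp at h; omega)]
    exact prevVal_of_not_mem (fun hm => h (by simp at hm ⊢; tauto))

lemma prevVal_place {x c : ℕ} : ∀ {w : List ℕ}, c ∈ w → x ∉ w →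
    prevVal x (place c x w) = c
  | [], hc, _ => by simp at hc
  | y :: t, hc, hx => by
    rcases eq_or_ne y c with rfl | hyc
    · rw [place_cons, if_pos rfl, prevVal, if_pos rfl]
    · have hct : c ∈ t := by
        rcases List.mem_cons.mp hc with h | h
        · exact absurd h.symm hyc
        · exact h
      obtain ⟨z, t', rfl⟩ : ∃ z t', t = z :: t' := by
        cases t with
        | nil => simp at hct
        | cons z t' => exact ⟨z, t', rfl⟩
      have hxt : x ∉ z :: t' := fun hm => hx (by simp at hm ⊢; tauto)
      have hr : ∃ r, place c x (z :: t') = z :: r := by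
        rw [place_cons]; exact ⟨_, rfl⟩
      obtain ⟨r, hr⟩ := hr
      rw [place_cons, if_neg hyc, hr, prevVal, if_neg (by simp at hx; omega), ← hr]
      exact prevVal_place hct hxt

lemma prevVal_place' {x c : ℕ} {w : List ℕ} (hx : x ∉ w) (hc : c = 0 ∨ c ∈ w) :
    prevVal x (place' c x w) = c := by
  rcases eq_or_ne c 0 with rfl | hc0
  · rw [place', if_pos rfl]
    cases w with
    | nil => rfl
    | cons z t =>
      rw [prevVal, if_neg (by simp at hx; omega)]
      exact prevVal_of_not_mem hx
  · rw [place', if_neg hc0]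
    exact prevVal_place (hc.resolve_left hc0) hx

lemma erase_place' {x c : ℕ} {w : List ℕ} (hx : x ∉ w) :
    (place' c x w).erase x = w := by
  rw [place']
  split
  · exact List.erase_cons_head x w
  · induction w with
    | nil => simp [place]
    | cons y t ih =>
      have hyx : y ≠ x := fun h => hx (by simp [h])
      rw [place_cons]
      split
      · rw [List.erase_cons_tail (by simp [hyx]), List.erase_cons_head]
      · rw [List.erase_cons_tail (by simp [hyx]), ih (fun hm => hx (by simp [hm]))]

lemma word_inj {c c' : ℕ → ℕ} :
    ∀ {n : ℕ}, (∀ v, 1 ≤ v → v ≤ n → c v < v) → (∀ v, 1 ≤ v → v ≤ n → c' v < v) →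
      word c n = word c' n → ∀ v, 1 ≤ v → v ≤ n → c v = c' v
  | 0, _, _, _ => by omega
  | n + 1, hc, hc', h => by
    have hx : (n + 1) ∉ word c n := fun hm => by rw [mem_word] at hm; omega
    have hx' : (n + 1) ∉ word c' n := fun hm => by rw [mem_word] at hm; omega
    have hmem : c (n + 1) = 0 ∨ c (n + 1) ∈ word c n := by
      have := hc (n + 1) (by omega) le_rfl
      rcases eq_or_ne (c (n + 1)) 0 with h0 | h0
      · exact Or.inl h0
      · exact Or.inr (by rw [mem_word]; omega)
    have hmem' : c' (n + 1) = 0 ∨ c' (n + 1) ∈ word c' n := by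
      have := hc' (n + 1) (by omega) le_rfl
      rcases eq_or_ne (c' (n + 1)) 0 with h0 | h0
      · exact Or.inl h0
      · exact Or.inr (by rw [mem_word]; omega)
    have htop : c (n + 1) = c' (n + 1) := by
      have e1 := prevVal_place' hx hmem
      have e2 := prevVal_place' hx' hmem'
      simp only [word] at h
      rw [← e1, ← e2, h]
    have hrest : word c n = word c' n := by
      have e1 := erase_place' (x := n+1) (c := c (n+1)) hx
      have e2 := erase_place' (x := n+1) (c := c' (n+1)) hx'
      simp only [word] at h
      rw [← e1, ← e2, h]
    intro v h1 h2
    rcases eq_or_ne v (n + 1) with rfl | hv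
    · exact htop
    · exact word_inj (fun u hu1 hu2 => hc u hu1 (by omega))
        (fun u hu1 hu2 => hc' u hu1 (by omega)) hrest v h1 (by omega)

lemma mem_abots {a : ℕ} : ∀ {w : List ℕ},
    (a ∈ abots w ↔ ∃ j, j + 1 < w.length ∧ w.getD j 0 < w.getD (j + 1) 0 ∧ w.getD j 0 = a)
  | [] => by simp [abots_nil]
  | [y] => by simp [abots_single]
  | y :: z :: t => by
    rw [abots_cons_cons]
    constructor
    · intro hm
      rcases Finset.mem_union.mp hm with hm | hm
      · by_cases h : y < z
        · rw [if_pos h] at hm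
          simp only [Finset.mem_singleton] at hm
          exact ⟨0, by simp, by simpa using h, by simp [hm.symm]⟩
        · rw [if_neg h] at hm; simp at hm
      · obtain ⟨j, hj1, hj2, hj3⟩ := (mem_abots (w := z :: t)).mp hm
        refine ⟨j + 1, by simpa using hj1, by simpa using hj2, by simpa using hj3⟩
    · rintro ⟨j, hj1, hj2, hj3⟩
      cases j with
      | zero =>
        simp only [List.getD] at hj2 hj3
        simp only [List.length_cons] at hj1
        apply Finset.mem_union_left
        rw [if_pos (by simpa using hj2)]
        simpa using hj3.symm
      | succ j =>
        apply Finset.mem_union_right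
        exact (mem_abots (w := z :: t)).mpr
          ⟨j, by simpa using hj1, by simpa using hj2, by simpa using hj3⟩

/-- The sequence of insertion points extracted from an inversion table. -/
def cfn (n : ℕ) (b : Fin n → ℕ) : ℕ → ℕ :=
  fun v => if h : 1 ≤ v ∧ v ≤ n then b ⟨n - v, by omega⟩ else 0

lemma cfn_lt {n : ℕ} {b : Fin n → ℕ} (hb : IsInvTable b) :
    ∀ v, 1 ≤ v → v ≤ n → cfn n b v < v := by
  intro v h1 h2
  rw [cfn, dif_pos ⟨h1, h2⟩]
  have := hb ⟨n - v, by omega⟩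
  simp only at this
  omega

lemma image_cfn {n : ℕ} (b : Fin n → ℕ) :
    (Finset.Icc 1 n).image (cfn n b) = dent b := by
  ext a
  simp only [Finset.mem_image, Finset.mem_Icc, dent, Finset.mem_univ, true_and, cfn]
  constructor
  · rintro ⟨v, ⟨h1, h2⟩, hv⟩
    rw [dif_pos ⟨h1, h2⟩] at hv
    exact ⟨_, hv⟩
  · rintro ⟨i, hi⟩
    refine ⟨n - (i : ℕ), ⟨by omega, by omega⟩, ?_⟩
    rw [dif_pos ⟨by omega, by omega⟩]
    rw [← hi]
    congr 1
    exact Fin.ext (by simp; omega)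

/-- The word of an inversion table. -/
def wd (n : ℕ) (b : Fin n → ℕ) : List ℕ := word (cfn n b) n

lemma length_wd (n : ℕ) (b : Fin n → ℕ) : (wd n b).length = n := length_word n

lemma mem_wd {n : ℕ} {b : Fin n → ℕ} {a : ℕ} : a ∈ wd n b ↔ 1 ≤ a ∧ a ≤ n :=
  mem_word

lemma wd_getElem_bounds (n : ℕ) (b : Fin n → ℕ) {j : ℕ} (hj : j < (wd n b).length) :
    1 ≤ (wd n b)[j] ∧ (wd n b)[j] ≤ n :=
  mem_wd.mp (List.getElem_mem hj)

/-- The permutation associated to an inversion table. -/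
noncomputable def toPerm (n : ℕ) (b : Fin n → ℕ) : Equiv.Perm (Fin n) :=
  Equiv.ofBijective (fun i : Fin n =>
      (⟨(wd n b)[(i : ℕ)]'(by rw [length_wd]; exact i.2) - 1, by
        have := wd_getElem_bounds n b (j := (i : ℕ)) (by rw [length_wd]; exact i.2)
        omega⟩ : Fin n))
    (Finite.injective_iff_bijective.mp (by
      intro i j hij
      have hnd : (wd n b).Nodup := nodup_word n
      have hi : (i : ℕ) < (wd n b).length := by rw [length_wd]; exact i.2
      have hj : (j : ℕ) < (wd n b).length := by rw [length_wd]; exact j.2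
      have b1 := wd_getElem_bounds n b hi
      have b2 := wd_getElem_bounds n b hj
      have heq : (wd n b)[(i : ℕ)] = (wd n b)[(j : ℕ)] := by
        simp only [Fin.mk.injEq] at hij
        omega
      exact Fin.ext ((List.Nodup.getElem_inj_iff hnd (hi := hi) (hj := hj)).mp heq)))

lemma toPerm_pval {n : ℕ} (b : Fin n → ℕ) {j : ℕ} (hj : j < n) :
    pval (toPerm n b) (j + 1) = (wd n b).getD j 0 := by
  have hj' : j + 1 - 1 < n := by omega
  have hjl : j < (wd n b).length := by rwa [length_wd]
  rw [pval, dif_pos hj', List.getD_eq_getElem _ _ hjl]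
  have hfin : (⟨j + 1 - 1, hj'⟩ : Fin n) = ⟨j, hj⟩ := rfl
  rw [hfin]
  have hb := wd_getElem_bounds n b (j := j) hjl
  simp only [toPerm, Equiv.ofBijective_apply]
  omega

lemma ascentBottoms_toPerm {n : ℕ} (b : Fin n → ℕ) :
    ascentBottoms (toPerm n b) = abots (wd n b) := by
  ext a
  rw [mem_abots]
  simp only [ascentBottoms, Finset.mem_image, Finset.mem_filter, Finset.mem_Icc]
  constructor
  · rintro ⟨i, ⟨⟨h1, h2⟩, hasc⟩, hval⟩
    obtain ⟨j, rfl⟩ : ∃ j, i = j + 1 := ⟨i - 1, by omega⟩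
    have hn1 : 1 ≤ n := by omega
    have hjn : j + 1 < n := by omega
    have e1 := toPerm_pval b (j := j) (by omega)
    have e2 := toPerm_pval b (j := j + 1) (by omega)
    rw [e1, e2] at hasc
    rw [e1] at hval
    exact ⟨j, by rw [length_wd]; omega, hasc, hval⟩
  · rintro ⟨j, hj1, hj2, hj3⟩
    rw [length_wd] at hj1
    have e1 := toPerm_pval b (j := j) (by omega)
    have e2 := toPerm_pval b (j := j + 1) (by omega)
    refine ⟨j + 1, ⟨⟨by omega, by omega⟩, ?_⟩, ?_⟩
    · rw [e1, e2]; exact hj2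
    · rw [e1]; exact hj3

/-- Inversion tables are equivalent to a product of `Fin`s. -/
def invTableEquiv (n : ℕ) : {b : Fin n → ℕ // IsInvTable b} ≃ (∀ i : Fin n, Fin (n - (i : ℕ))) where
  toFun b i := ⟨b.1 i, by have h := b.2 i; have := i.2; omega⟩
  invFun f := ⟨fun i => (f i : ℕ), fun i => by
    show (f i : ℕ) ≤ n - ((i : ℕ) + 1); have := (f i).2; have := i.2; omega⟩
  left_inv b := rfl
  right_inv f := rfl

lemma prod_factorial (n : ℕ) : (∏ j ∈ Finset.range n, (j + 1)) = Nat.factorial n := by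
  induction n with
  | zero => simp
  | succ n ih => rw [Finset.prod_range_succ, ih, Nat.factorial_succ, Nat.mul_comm]

lemma card_invTables (n : ℕ) : Nat.card {b : Fin n → ℕ // IsInvTable b} = Nat.factorial n := by
  rw [Nat.card_congr (invTableEquiv n), Nat.card_pi]
  have : ∀ i : Fin n, Nat.card (Fin (n - (i : ℕ))) = n - (i : ℕ) := fun i => by rw [Nat.card_eq_fintype_card, Fintype.card_fin]
  rw [Finset.prod_congr rfl (fun i _ => this i)]
  rw [Fin.prod_univ_eq_prod_range (fun j => n - j) n]
  rw [← prod_factorial n, ← Finset.prod_range_reflect]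
  refine Finset.prod_congr rfl (fun j hj => ?_)
  rw [Finset.mem_range] at hj
  omega

lemma toPerm_injective (n : ℕ) :
    Function.Injective (fun b : {b : Fin n → ℕ // IsInvTable b} => toPerm n b.1) := by
  intro b b' h
  simp only at h
  have hw : wd n b.1 = wd n b'.1 := by
    apply List.ext_getElem (by rw [length_wd, length_wd])
    intro j hj hj'
    have hjn : j < n := by rwa [length_wd] at hj
    have e1 := toPerm_pval b.1 (j := j) hjn
    have e2 := toPerm_pval b'.1 (j := j) hjn
    rw [List.getD_eq_getElem _ _ hj] at e1
    rw [List.getD_eq_getElem _ _ hj'] at e2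
    rw [← e1, ← e2, h]
  have hc := word_inj (cfn_lt b.2) (cfn_lt b'.2) hw
  ext i
  have hv : 1 ≤ n - (i : ℕ) ∧ n - (i : ℕ) ≤ n := by have := i.2; omega
  have := hc (n - (i : ℕ)) hv.1 hv.2
  rw [cfn, cfn, dif_pos ⟨hv.1, hv.2⟩, dif_pos ⟨hv.1, hv.2⟩] at this
  have hfix : (⟨n - (n - (i : ℕ)), by have := i.2; omega⟩ : Fin n) = i :=
    Fin.ext (by have := i.2; simp; omega)
  rwa [hfix] at this

noncomputable def tablePermEquiv (n : ℕ) :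
    {b : Fin n → ℕ // IsInvTable b} ≃ Equiv.Perm (Fin n) :=
  Equiv.ofBijective _
    ((Nat.bijective_iff_injective_and_card _).mpr
      ⟨toPerm_injective n, by
        rw [card_invTables, Nat.card_eq_fintype_card, Fintype.card_perm, Fintype.card_fin]⟩)

lemma tablePermEquiv_apply (n : ℕ) (b : {b : Fin n → ℕ // IsInvTable b}) :
    tablePermEquiv n b = toPerm n b.1 := rfl

lemma dent_eq (n : ℕ) (hn : 1 ≤ n) (b : {b : Fin n → ℕ // IsInvTable b}) :
    dent b.1 = insert 0 (ascentBottoms (tablePermEquiv n b)) := by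
  rw [tablePermEquiv_apply, ascentBottoms_toPerm, wd, abots_word (cfn_lt b.2), image_cfn]
  have h0 : 0 ∈ dent b.1 := by
    have := b.2 ⟨n - 1, by omega⟩
    simp only at this
    have hz : b.1 ⟨n - 1, by omega⟩ = 0 := by omega
    rw [dent, Finset.mem_image]
    exact ⟨⟨n - 1, by omega⟩, Finset.mem_univ _, hz⟩
  rw [Finset.insert_erase h0]

lemma zero_not_mem_ascentBottoms (n : ℕ) (b : {b : Fin n → ℕ // IsInvTable b}) :
    0 ∉ ascentBottoms (tablePermEquiv n b) := by
  rw [tablePermEquiv_apply, ascentBottoms_toPerm]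
  exact zero_not_mem_abots (fun y hy => (mem_wd.mp hy).1)

end AB

/-- The number of permutations of `{1, …, n}` whose set of ascent bottoms is exactly
`S ⊆ {1, …, n-1}` equals the number of inversion tables of length `n` whose set of
distinct entries is exactly `{0} ∪ S`. -/
theorem card_ascentBottoms_eq_eq_card_invTables (n : ℕ) (hn : 1 ≤ n) (S : Finset ℕ)
    (hS : S ⊆ Finset.Icc 1 (n - 1)) :
    Nat.card {π : Equiv.Perm (Fin n) // ascentBottoms π = S} =
      Nat.card {b : Fin n → ℕ // IsInvTable b ∧ dent b = insert 0 S} := by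
  have h0S : 0 ∉ S := fun h => by
    have := hS h
    rw [Finset.mem_Icc] at this
    omega
  have e1 : {b : Fin n → ℕ // IsInvTable b ∧ dent b = insert 0 S} ≃
      {p : {b : Fin n → ℕ // IsInvTable b} // dent p.1 = insert 0 S} :=
    { toFun := fun x => ⟨⟨x.1, x.2.1⟩, x.2.2⟩
      invFun := fun p => ⟨p.1.1, p.1.2, p.2⟩
      left_inv := fun x => rfl
      right_inv := fun p => rfl }
  have e2 : {p : {b : Fin n → ℕ // IsInvTable b} // dent p.1 = insert 0 S} ≃
      {π : Equiv.Perm (Fin n) // ascentBottoms π = S} := by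
    refine (AB.tablePermEquiv n).subtypeEquiv (fun b => ?_)
    rw [AB.dent_eq n hn b]
    constructor
    · intro h
      have h2 := congrArg (fun t => Finset.erase t 0) h
      rwa [Finset.erase_insert (AB.zero_not_mem_ascentBottoms n b),
        Finset.erase_insert h0S] at h2
    · intro h; rw [h]
  rw [Nat.card_congr (e1.trans e2)]
end

section
/- Fix n ≥ 1 and a subset S = {s_1, ..., s_k} of {1, ..., n-1} with s_1 < ... < s_k, and set s_0 = 0 and s_{k+1} = n. Then the number of ordered set partitions (B_1, ..., B_{k+1}) of {1, ..., n} into exactly k+1 blocks such that the set of block minima { min B_1, ..., min B_{k+1} } equals {1, s_1 + 1, s_2 + 1, ..., s_k + 1} is ∏_{r=1}^{k+1} r^{s_r - s_{r-1}}. -/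
open Finset

lemma sInf_coe_mem {A : Finset ℕ} (h : A.Nonempty) : sInf (↑A : Set ℕ) ∈ A := by
  have : ((↑A : Set ℕ)).Nonempty := by exact_mod_cast h
  exact_mod_cast Nat.sInf_mem this

lemma sInf_coe_le {A : Finset ℕ} {x : ℕ} (h : x ∈ A) : sInf (↑A : Set ℕ) ≤ x :=
  Nat.sInf_le (by exact_mod_cast h)

lemma sInf_coe_erase {A : Finset ℕ} {x : ℕ} (h : A.Nonempty) (hx : sInf (↑A : Set ℕ) ≠ x)
    (hne : (A.erase x).Nonempty) : sInf (↑(A.erase x) : Set ℕ) = sInf (↑A : Set ℕ) := by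
  apply le_antisymm
  · exact sInf_coe_le (Finset.mem_erase.2 ⟨hx, sInf_coe_mem h⟩)
  · exact sInf_coe_le (Finset.mem_of_mem_erase (sInf_coe_mem hne))

lemma sInf_coe_insert_of_le {A : Finset ℕ} {x : ℕ} (h : A.Nonempty)
    (hx : sInf (↑A : Set ℕ) ≤ x) : sInf (↑(insert x A) : Set ℕ) = sInf (↑A : Set ℕ) := by
  apply le_antisymm
  · exact sInf_coe_le (Finset.mem_insert_of_mem (sInf_coe_mem h))
  · rcases Finset.mem_insert.1 (sInf_coe_mem (Finset.insert_nonempty x A)) with h1 | h1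
    · rw [h1]; exact hx
    · exact sInf_coe_le h1

abbrev OSPCond (n k : ℕ) (M : Finset ℕ) (f : Fin k → Finset ℕ) : Prop :=
  (∀ j, (f j).Nonempty) ∧ (∀ i j, i ≠ j → Disjoint (f i) (f j)) ∧
    Finset.univ.biUnion f = Finset.Icc 1 n ∧
    Finset.univ.image (fun j => sInf ((f j : Set ℕ))) = M

lemma OSPCond.block_subset {n k : ℕ} {M : Finset ℕ} {f : Fin k → Finset ℕ}
    (h : OSPCond n k M f) (j : Fin k) : f j ⊆ Finset.Icc 1 n :=
  h.2.2.1 ▸ Finset.subset_biUnion_of_mem f (Finset.mem_univ j)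

lemma OSPCond.sInf_mem_M {n k : ℕ} {M : Finset ℕ} {f : Fin k → Finset ℕ}
    (h : OSPCond n k M f) (j : Fin k) : sInf ((f j : Set ℕ)) ∈ M :=
  h.2.2.2 ▸ Finset.mem_image_of_mem _ (Finset.mem_univ j)

lemma OSPCond.le_of_mem {n k : ℕ} {M : Finset ℕ} {f : Fin k → Finset ℕ}
    (h : OSPCond n k M f) {j : Fin k} {x : ℕ} (hx : x ∈ f j) : x ≤ n :=
  (Finset.mem_Icc.1 (h.block_subset j hx)).2

lemma OSPCond.not_mem_succ {n k : ℕ} {M : Finset ℕ} {f : Fin k → Finset ℕ}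
    (h : OSPCond n k M f) (j : Fin k) : n + 1 ∉ f j := fun hx => by
  have := h.le_of_mem hx; omega

lemma updateA_cond {n k : ℕ} {M : Finset ℕ} (hM : (n+1) ∉ M) (j₀ : Fin k)
    {g : Fin k → Finset ℕ} (hg : OSPCond n k M g) :
    OSPCond (n+1) k M (Function.update g j₀ (insert (n+1) (g j₀))) := by
  have hnot : ∀ j, n + 1 ∉ g j := hg.not_mem_succ
  refine ⟨?_, ?_, ?_, ?_⟩
  · intro j
    rcases eq_or_ne j j₀ with rfl | hj
    · rw [Function.update_self]; exact Finset.insert_nonempty _ _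
    · rw [Function.update_of_ne hj]; exact hg.1 j
  · intro i j hij
    rcases eq_or_ne i j₀ with rfl | hi
    · rw [Function.update_self, Function.update_of_ne (Ne.symm hij)]
      exact Finset.disjoint_insert_left.2 ⟨hnot j, hg.2.1 _ _ hij⟩
    · rw [Function.update_of_ne hi]
      rcases eq_or_ne j j₀ with rfl | hj
      · rw [Function.update_self]
        exact Finset.disjoint_insert_right.2 ⟨hnot i, hg.2.1 _ _ hij⟩
      · rw [Function.update_of_ne hj]; exact hg.2.1 _ _ hij
  · have h1 : Finset.univ.biUnion (Function.update g j₀ (insert (n+1) (g j₀))) =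
        insert (n+1) (Finset.univ.biUnion g) := by
      ext x
      simp only [Finset.mem_biUnion, Finset.mem_univ, true_and, Finset.mem_insert]
      constructor
      · rintro ⟨j, hj⟩
        rcases eq_or_ne j j₀ with rfl | hne
        · rw [Function.update_self] at hj
          rcases Finset.mem_insert.1 hj with h | h
          · exact Or.inl h
          · exact Or.inr ⟨j, h⟩
        · rw [Function.update_of_ne hne] at hj; exact Or.inr ⟨j, hj⟩
      · rintro (rfl | ⟨j, hj⟩)
        · exact ⟨j₀, by rw [Function.update_self]; exact Finset.mem_insert_self _ _⟩
        · refine ⟨j, ?_⟩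
          rcases eq_or_ne j j₀ with rfl | hne
          · rw [Function.update_self]; exact Finset.mem_insert_of_mem hj
          · rwa [Function.update_of_ne hne]
    rw [h1, hg.2.2.1]
    ext x
    simp only [Finset.mem_insert, Finset.mem_Icc]
    omega
  · have h2 : ∀ j, sInf ((Function.update g j₀ (insert (n+1) (g j₀)) j : Finset ℕ) : Set ℕ) =
        sInf ((g j : Finset ℕ) : Set ℕ) := by
      intro j
      rcases eq_or_ne j j₀ with rfl | hne
      · rw [Function.update_self]
        exact sInf_coe_insert_of_le (hg.1 j) ((hg.le_of_mem (sInf_coe_mem (hg.1 j))).trans (by omega))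
      · rw [Function.update_of_ne hne]
    calc Finset.univ.image (fun j => sInf ((Function.update g j₀ (insert (n+1) (g j₀)) j : Finset ℕ) : Set ℕ))
        = Finset.univ.image (fun j => sInf ((g j : Finset ℕ) : Set ℕ)) := by
          apply Finset.image_congr; intro j _; exact h2 j
      _ = M := hg.2.2.2

lemma stepA (n k : ℕ) (M : Finset ℕ) (hM : (n+1) ∉ M) :
    Nat.card {f : Fin k → Finset ℕ // OSPCond (n+1) k M f} =
      k * Nat.card {f : Fin k → Finset ℕ // OSPCond n k M f} := by
  have hbij : Function.Bijective
      (fun p : Fin k × {f : Fin k → Finset ℕ // OSPCond n k M f} =>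
        (⟨Function.update p.2.1 p.1 (insert (n+1) (p.2.1 p.1)),
          updateA_cond hM p.1 p.2.2⟩ : {f : Fin k → Finset ℕ // OSPCond (n+1) k M f})) := by
    constructor
    · rintro ⟨j₀, g, hg⟩ ⟨j₁, g', hg'⟩ h
      have hfun : Function.update g j₀ (insert (n+1) (g j₀)) =
          Function.update g' j₁ (insert (n+1) (g' j₁)) := congrArg Subtype.val h
      have hj : j₀ = j₁ := by
        by_contra hne
        have := congrFun hfun j₀
        rw [Function.update_self, Function.update_of_ne hne] at this
        exact hg'.not_mem_succ j₀ (this ▸ Finset.mem_insert_self _ _)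
      subst hj
      have hgg' : g = g' := by
        funext j
        rcases eq_or_ne j j₀ with rfl | hne
        · have := congrFun hfun j
          rw [Function.update_self, Function.update_self] at this
          have h1 := congrArg (fun A => Finset.erase A (n+1)) this
          simpa [Finset.erase_insert_of_ne, Finset.erase_insert,
            Finset.erase_eq_of_notMem (hg.not_mem_succ j),
            Finset.erase_eq_of_notMem (hg'.not_mem_succ j)] using h1
        · have := congrFun hfun j
          rwa [Function.update_of_ne hne, Function.update_of_ne hne] at this
      exact Prod.ext rfl (Subtype.ext hgg')
    · rintro ⟨f, hf⟩
      have hx : n + 1 ∈ Finset.univ.biUnion f := by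
        rw [hf.2.2.1]; exact Finset.mem_Icc.2 ⟨by omega, le_rfl⟩
      obtain ⟨j₀, -, hj₀⟩ := Finset.mem_biUnion.1 hx
      have hne' : ∀ j, j ≠ j₀ → n + 1 ∉ f j := fun j hj hmem =>
        Finset.disjoint_left.1 (hf.2.1 j j₀ hj) hmem hj₀
      have hminne : ∀ j, sInf ((f j : Finset ℕ) : Set ℕ) ≠ n + 1 := fun j h =>
        hM (h ▸ hf.sInf_mem_M j)
      have hgne : ∀ j, ((f j).erase (n+1)).Nonempty := by
        intro j
        refine ⟨sInf ((f j : Finset ℕ) : Set ℕ), Finset.mem_erase.2 ⟨hminne j, sInf_coe_mem (hf.1 j)⟩⟩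
      have hg : OSPCond n k M (fun j => (f j).erase (n+1)) := by
        refine ⟨hgne, ?_, ?_, ?_⟩
        · intro i j hij
          exact (hf.2.1 i j hij).mono (Finset.erase_subset _ _) (Finset.erase_subset _ _)
        · ext x
          simp only [Finset.mem_biUnion, Finset.mem_univ, true_and, Finset.mem_erase,
            Finset.mem_Icc]
          constructor
          · rintro ⟨j, hx1, hx2⟩
            have := hf.block_subset j hx2
            have := Finset.mem_Icc.1 this
            omega
          · rintro ⟨h1, h2⟩
            have : x ∈ Finset.univ.biUnion f := by
              rw [hf.2.2.1]; exact Finset.mem_Icc.2 ⟨h1, by omega⟩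
            obtain ⟨j, -, hj⟩ := Finset.mem_biUnion.1 this
            exact ⟨j, by omega, hj⟩
        · calc Finset.univ.image (fun j => sInf (((f j).erase (n+1) : Finset ℕ) : Set ℕ))
              = Finset.univ.image (fun j => sInf ((f j : Finset ℕ) : Set ℕ)) := by
                apply Finset.image_congr; intro j _
                exact sInf_coe_erase (hf.1 j) (hminne j) (hgne j)
            _ = M := hf.2.2.2
      refine ⟨⟨j₀, ⟨fun j => (f j).erase (n+1), hg⟩⟩, ?_⟩
      apply Subtype.ext
      funext j
      simp only
      rcases eq_or_ne j j₀ with rfl | hne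
      · rw [Function.update_self, Finset.insert_erase hj₀]
      · rw [Function.update_of_ne hne, Finset.erase_eq_of_notMem (hne' j hne)]
  calc Nat.card {f : Fin k → Finset ℕ // OSPCond (n+1) k M f}
      = Nat.card (Fin k × {f : Fin k → Finset ℕ // OSPCond n k M f}) :=
        (Nat.card_congr (Equiv.ofBijective _ hbij)).symm
    _ = k * Nat.card {f : Fin k → Finset ℕ // OSPCond n k M f} := by
        rw [Nat.card_prod, Nat.card_eq_fintype_card, Fintype.card_fin]

-- BEGIN STEPB
def insB (n k : ℕ) (j₀ : Fin (k+1)) (g : Fin k → Finset ℕ) : Fin (k+1) → Finset ℕ :=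
  Fin.insertNth (α := fun _ => Finset ℕ) j₀ {n+1} g

lemma insB_same (n k : ℕ) (j₀ : Fin (k+1)) (g : Fin k → Finset ℕ) :
    insB n k j₀ g j₀ = {n+1} := Fin.insertNth_apply_same (α := fun _ => Finset ℕ) j₀ _ g

lemma insB_succAbove (n k : ℕ) (j₀ : Fin (k+1)) (g : Fin k → Finset ℕ) (i : Fin k) :
    insB n k j₀ g (j₀.succAbove i) = g i :=
  Fin.insertNth_apply_succAbove (α := fun _ => Finset ℕ) j₀ _ g i

lemma insB_cond {n k : ℕ} {M : Finset ℕ} (j₀ : Fin (k+1))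
    {g : Fin k → Finset ℕ} (hg : OSPCond n k M g) :
    OSPCond (n+1) (k+1) (insert (n+1) M) (insB n k j₀ g) := by
  refine ⟨?_, ?_, ?_, ?_⟩
  · intro j
    rcases eq_or_ne j j₀ with rfl | hne
    · rw [insB_same]; exact Finset.singleton_nonempty _
    · obtain ⟨i, rfl⟩ := Fin.exists_succAbove_eq hne
      rw [insB_succAbove]; exact hg.1 i
  · intro a b hab
    rcases eq_or_ne a j₀ with rfl | ha
    · obtain ⟨i, rfl⟩ := Fin.exists_succAbove_eq (Ne.symm hab)
      rw [insB_same, insB_succAbove]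
      exact Finset.disjoint_singleton_left.2 (hg.not_mem_succ i)
    · obtain ⟨i, rfl⟩ := Fin.exists_succAbove_eq ha
      rcases eq_or_ne b j₀ with rfl | hb
      · rw [insB_same, insB_succAbove]
        exact Finset.disjoint_singleton_right.2 (hg.not_mem_succ i)
      · obtain ⟨i', rfl⟩ := Fin.exists_succAbove_eq hb
        rw [insB_succAbove, insB_succAbove]
        exact hg.2.1 i i' (fun h => hab (congrArg _ h))
  · have hU : Finset.univ.biUnion (insB n k j₀ g) = insert (n+1) (Finset.univ.biUnion g) := by
      ext x
      simp only [Finset.mem_biUnion, Finset.mem_univ, true_and, Finset.mem_insert]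
      constructor
      · rintro ⟨j, hj⟩
        rcases eq_or_ne j j₀ with rfl | hne
        · rw [insB_same, Finset.mem_singleton] at hj; exact Or.inl hj
        · obtain ⟨i, rfl⟩ := Fin.exists_succAbove_eq hne
          rw [insB_succAbove] at hj; exact Or.inr ⟨i, hj⟩
      · rintro (rfl | ⟨i, hi⟩)
        · exact ⟨j₀, by rw [insB_same]; exact Finset.mem_singleton_self _⟩
        · exact ⟨j₀.succAbove i, by rw [insB_succAbove]; exact hi⟩
    rw [hU, hg.2.2.1]
    ext x
    simp only [Finset.mem_insert, Finset.mem_Icc]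
    omega
  · have himg : Finset.univ.image (fun j => sInf ((insB n k j₀ g j : Finset ℕ) : Set ℕ)) =
        insert (n+1) (Finset.univ.image (fun i => sInf ((g i : Finset ℕ) : Set ℕ))) := by
      ext y
      simp only [Finset.mem_image, Finset.mem_univ, true_and, Finset.mem_insert]
      constructor
      · rintro ⟨j, rfl⟩
        rcases eq_or_ne j j₀ with rfl | hne
        · left; rw [insB_same, Finset.coe_singleton, csInf_singleton]
        · obtain ⟨i, rfl⟩ := Fin.exists_succAbove_eq hne
          right; exact ⟨i, by rw [insB_succAbove]⟩
      · rintro (rfl | ⟨i, rfl⟩)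
        · exact ⟨j₀, by rw [insB_same, Finset.coe_singleton, csInf_singleton]⟩
        · exact ⟨j₀.succAbove i, by rw [insB_succAbove]⟩
    rw [himg, hg.2.2.2]

lemma stepB (n k : ℕ) (M : Finset ℕ) (hM : (n+1) ∉ M) :
    Nat.card {f : Fin (k+1) → Finset ℕ // OSPCond (n+1) (k+1) (insert (n+1) M) f} =
      (k+1) * Nat.card {f : Fin k → Finset ℕ // OSPCond n k M f} := by
  have hbij : Function.Bijective
      (fun p : Fin (k+1) × {f : Fin k → Finset ℕ // OSPCond n k M f} =>
        (⟨insB n k p.1 p.2.1, insB_cond p.1 p.2.2⟩ :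
          {f : Fin (k+1) → Finset ℕ // OSPCond (n+1) (k+1) (insert (n+1) M) f})) := by
    constructor
    · rintro ⟨j₀, g, hg⟩ ⟨j₁, g', hg'⟩ h
      have hfun : insB n k j₀ g = insB n k j₁ g' := congrArg Subtype.val h
      have hj : j₀ = j₁ := by
        by_contra hne
        obtain ⟨i, hi⟩ := Fin.exists_succAbove_eq hne
        have h1 := congrFun hfun j₀
        rw [insB_same, ← hi, insB_succAbove] at h1
        exact hg'.not_mem_succ i (h1 ▸ Finset.mem_singleton_self _)
      subst hj
      have hgg' : g = g' := by
        funext i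
        have := congrFun hfun (j₀.succAbove i)
        rwa [insB_succAbove, insB_succAbove] at this
      exact Prod.ext rfl (Subtype.ext hgg')
    · rintro ⟨f, hf⟩
      have hmem : (n+1) ∈ Finset.univ.image (fun j => sInf ((f j : Finset ℕ) : Set ℕ)) := by
        rw [hf.2.2.2]; exact Finset.mem_insert_self _ _
      obtain ⟨j₀, -, hj₀⟩ := Finset.mem_image.1 hmem
      have hblock : f j₀ = {n+1} := by
        ext x
        simp only [Finset.mem_singleton]
        constructor
        · intro hx
          have h1 := hf.le_of_mem hx
          have h2 : n + 1 ≤ x := hj₀ ▸ sInf_coe_le hx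
          omega
        · rintro rfl
          have := sInf_coe_mem (hf.1 j₀)
          rwa [hj₀] at this
      set g : Fin k → Finset ℕ := fun i => f (j₀.succAbove i) with hgdef
      have hnm : ∀ i, (n+1) ∉ g i := by
        intro i hx
        have hd := hf.2.1 _ _ (Fin.succAbove_ne j₀ i)
        exact Finset.disjoint_left.1 hd hx (hblock ▸ Finset.mem_singleton_self _)
      have hg : OSPCond n k M g := by
        refine ⟨fun i => hf.1 _, ?_, ?_, ?_⟩
        · intro i i' hii'
          exact hf.2.1 _ _ (fun h => hii' (Fin.succAbove_right_injective h))
        · ext x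
          simp only [Finset.mem_biUnion, Finset.mem_univ, true_and, Finset.mem_Icc]
          constructor
          · rintro ⟨i, hi⟩
            have h1 := Finset.mem_Icc.1 (hf.block_subset _ hi)
            have h2 : x ≠ n + 1 := fun h => hnm i (h ▸ hi)
            omega
          · rintro ⟨h1, h2⟩
            have : x ∈ Finset.univ.biUnion f := by
              rw [hf.2.2.1]; exact Finset.mem_Icc.2 ⟨h1, by omega⟩
            obtain ⟨j, -, hj⟩ := Finset.mem_biUnion.1 this
            have hjne : j ≠ j₀ := by
              intro h; subst h
              rw [hblock, Finset.mem_singleton] at hj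
              omega
            obtain ⟨i, rfl⟩ := Fin.exists_succAbove_eq hjne
            exact ⟨i, hj⟩
        · have hniX : (n+1) ∉ Finset.univ.image (fun i => sInf ((g i : Finset ℕ) : Set ℕ)) := by
            intro hmem'
            obtain ⟨i, -, hi⟩ := Finset.mem_image.1 hmem'
            exact hnm i (hi ▸ sInf_coe_mem (hf.1 _))
          have hM2 : insert (n+1) M =
              insert (n+1) (Finset.univ.image (fun i => sInf ((g i : Finset ℕ) : Set ℕ))) := by
            rw [← hf.2.2.2]
            ext y
            simp only [Finset.mem_image, Finset.mem_univ, true_and, Finset.mem_insert]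
            constructor
            · rintro ⟨j, rfl⟩
              rcases eq_or_ne j j₀ with rfl | hne
              · exact Or.inl hj₀
              · obtain ⟨i, rfl⟩ := Fin.exists_succAbove_eq hne
                exact Or.inr ⟨i, rfl⟩
            · rintro (rfl | ⟨i, rfl⟩)
              · exact ⟨j₀, hj₀⟩
              · exact ⟨j₀.succAbove i, rfl⟩
          have := congrArg (fun s => Finset.erase s (n+1)) hM2
          simpa [Finset.erase_insert hM, Finset.erase_insert hniX] using this.symm
      refine ⟨⟨j₀, ⟨g, hg⟩⟩, ?_⟩
      apply Subtype.ext
      funext j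
      simp only
      rcases eq_or_ne j j₀ with rfl | hne
      · rw [insB_same, hblock]
      · obtain ⟨i, rfl⟩ := Fin.exists_succAbove_eq hne
        rw [insB_succAbove]
  calc Nat.card {f : Fin (k+1) → Finset ℕ // OSPCond (n+1) (k+1) (insert (n+1) M) f}
      = Nat.card (Fin (k+1) × {f : Fin k → Finset ℕ // OSPCond n k M f}) :=
        (Nat.card_congr (Equiv.ofBijective _ hbij)).symm
    _ = (k+1) * Nat.card {f : Fin k → Finset ℕ // OSPCond n k M f} := by
        rw [Nat.card_prod, Nat.card_eq_fintype_card, Fintype.card_fin]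

lemma sVal_zero (n : ℕ) (S : Finset ℕ) : sVal n S 0 = 0 := rfl

lemma sVal_top (n : ℕ) (S : Finset ℕ) : sVal n S (S.card + 1) = n := by
  simp [sVal]

lemma sVal_eq_getD {n r : ℕ} {S : Finset ℕ} (h0 : r ≠ 0) (h1 : r ≠ S.card + 1) :
    sVal n S r = (S.sort (· ≤ ·)).getD (r - 1) 0 := by
  simp [sVal, h0, h1]

lemma sVal_indep {n r : ℕ} {S : Finset ℕ} (h1 : r ≠ S.card + 1) :
    sVal (n+1) S r = sVal n S r := by
  rcases eq_or_ne r 0 with rfl | h0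
  · rfl
  · rw [sVal_eq_getD h0 h1, sVal_eq_getD h0 h1]

lemma sVal_mem {n r : ℕ} {S : Finset ℕ} (h1 : 1 ≤ r) (h2 : r ≤ S.card) :
    sVal n S r ∈ S := by
  have hlen : (S.sort (· ≤ ·)).length = S.card := Finset.length_sort _
  have hlt : r - 1 < (S.sort (· ≤ ·)).length := by omega
  rw [sVal_eq_getD (by omega) (by omega), List.getD_eq_getElem _ _ hlt]
  exact (Finset.mem_sort _).1 (List.getElem_mem hlt)

lemma sVal_le {n r : ℕ} {S : Finset ℕ} (hS : S ⊆ Finset.Icc 1 n) (h2 : r ≤ S.card) :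
    sVal n S r ≤ n := by
  rcases eq_or_ne r 0 with rfl | h0
  · simp [sVal_zero]
  · exact (Finset.mem_Icc.1 (hS (sVal_mem (by omega) h2))).2

lemma sort_eq_append {n : ℕ} {S : Finset ℕ} (hn : n ∈ S) (hmax : ∀ x ∈ S, x ≤ n) :
    S.sort (· ≤ ·) = (S.erase n).sort (· ≤ ·) ++ [n] := by
  apply List.Perm.eq_of_pairwise' (Finset.pairwise_sort _ _) ?_ ?_
  · exact List.pairwise_append.2 ⟨Finset.pairwise_sort _ _, List.pairwise_singleton _ _, by
      intro x hx y hy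
      rw [List.mem_singleton] at hy
      subst hy
      exact hmax x (Finset.mem_of_mem_erase ((Finset.mem_sort _).1 hx))⟩
  · apply Multiset.coe_eq_coe.1
    have h2 : (((S.erase n).sort (· ≤ ·) ++ [n] : List ℕ) : Multiset ℕ) =
        ((S.erase n).sort (· ≤ ·) : Multiset ℕ) + ([n] : List ℕ) := by
      exact_mod_cast rfl
    rw [h2, Finset.sort_eq, Finset.sort_eq]
    have h3 : (S.erase n).val = S.val.erase n := rfl
    have h4 : (([n] : List ℕ) : Multiset ℕ) = {n} := rfl
    rw [h3, h4]
    calc S.val = n ::ₘ S.val.erase n := (Multiset.cons_erase hn).symm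
      _ = S.val.erase n + {n} := by rw [← Multiset.singleton_add, add_comm]

lemma sVal_erase_max {n r : ℕ} {S : Finset ℕ} (hn : n ∈ S) (hmax : ∀ x ∈ S, x ≤ n)
    (hr : r ≤ S.card) : sVal (n+1) S r = sVal n (S.erase n) r := by
  have hcard : (S.erase n).card = S.card - 1 := Finset.card_erase_of_mem hn
  have hpos : 1 ≤ S.card := Finset.card_pos.2 ⟨n, hn⟩
  rcases eq_or_ne r 0 with rfl | h0
  · rfl
  have hlen : ((S.erase n).sort (· ≤ ·)).length = S.card - 1 := by
    rw [Finset.length_sort, hcard]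
  rw [sVal_eq_getD h0 (by omega), sort_eq_append hn hmax]
  rcases eq_or_ne r S.card with rfl | hrk
  · rw [List.getD_append_right _ _ _ _ (by omega), hlen]
    have h1 : S.card - 1 - (S.card - 1) = 0 := by omega
    rw [h1]
    have h2 : sVal n (S.erase n) S.card = n := by
      have : S.card = (S.erase n).card + 1 := by omega
      rw [this, sVal_top]
    rw [h2]
    rfl
  · rw [List.getD_append _ _ _ _ (by omega), sVal_eq_getD h0 (by omega)]

lemma base_card :
    Nat.card {f : Fin 1 → Finset ℕ // OSPCond 1 1 {1} f} = 1 := by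
  have he : OSPCond 1 1 {1} (fun _ => ({1} : Finset ℕ)) := by
    refine ⟨fun _ => Finset.singleton_nonempty _,
      fun i j hij => absurd (Subsingleton.elim i j) hij, ?_, ?_⟩
    · have huniv : (Finset.univ : Finset (Fin 1)) = {0} := rfl
      rw [huniv, Finset.singleton_biUnion, Finset.Icc_self]
    · have huniv : (Finset.univ : Finset (Fin 1)) = {0} := rfl
      rw [huniv, Finset.image_singleton, Finset.coe_singleton, csInf_singleton]
  have huniq : ∀ f, OSPCond 1 1 {1} f → f = fun _ => ({1} : Finset ℕ) := by
    intro f hf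
    funext j
    have h0 : j = 0 := Subsingleton.elim _ _
    have hu : Finset.univ.biUnion f = {1} := by rw [hf.2.2.1, Finset.Icc_self]
    have huniv : (Finset.univ : Finset (Fin 1)) = {0} := rfl
    rw [huniv, Finset.singleton_biUnion] at hu
    rw [h0]
    exact hu
  haveI : Unique {f : Fin 1 → Finset ℕ // OSPCond 1 1 {1} f} :=
    ⟨⟨⟨_, he⟩⟩, fun x => Subtype.ext (huniq x.1 x.2)⟩
  exact Nat.card_unique

lemma key (n : ℕ) (hn : 1 ≤ n) : ∀ S : Finset ℕ, S ⊆ Finset.Icc 1 (n - 1) →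
    Nat.card {f : Fin (S.card + 1) → Finset ℕ //
        OSPCond n (S.card + 1) (insert 1 (S.image (· + 1))) f} =
      ∏ r ∈ Finset.Icc 1 (S.card + 1), r ^ (sVal n S r - sVal n S (r - 1)) := by
  induction n, hn using Nat.le_induction with
  | base =>
    intro S hS
    have hS0 : S = ∅ := Finset.subset_empty.1 (by simpa using hS)
    subst hS0
    simp only [Finset.card_empty, Finset.image_empty]
    rw [show (insert 1 (∅ : Finset ℕ) : Finset ℕ) = {1} from rfl, base_card]
    rw [Finset.Icc_self, Finset.prod_singleton, one_pow]
  | succ n hn ih =>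
    intro S hS
    have hS' : S ⊆ Finset.Icc 1 n := by simpa using hS
    have hmax : ∀ x ∈ S, x ≤ n := fun x hx => (Finset.mem_Icc.1 (hS' hx)).2
    by_cases hmem : n ∈ S
    · -- case B
      set S' := S.erase n with hS'def
      have hpos : 1 ≤ S.card := Finset.card_pos.2 ⟨n, hmem⟩
      have hcard : S.card = S'.card + 1 := by
        rw [hS'def, Finset.card_erase_of_mem hmem]; omega
      have hS'' : S' ⊆ Finset.Icc 1 (n - 1) := by
        intro x hx
        rw [hS'def] at hx
        have h1 := Finset.mem_Icc.1 (hS' (Finset.mem_of_mem_erase hx))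
        have h2 : x ≠ n := Finset.ne_of_mem_erase hx
        exact Finset.mem_Icc.2 ⟨h1.1, by omega⟩
      have hM : (n + 1) ∉ insert 1 (S'.image (· + 1)) := by
        simp only [Finset.mem_insert, Finset.mem_image]
        push_neg
        refine ⟨by omega, fun x hx h => ?_⟩
        have hxn : x = n := by omega
        subst hxn
        rw [hS'def] at hx
        exact Finset.notMem_erase x S hx
      have hMeq : insert 1 (S.image (· + 1)) = insert (n + 1) (insert 1 (S'.image (· + 1))) := by
        have h1 : S.image (· + 1) = insert (n + 1) (S'.image (· + 1)) := by
          conv_lhs => rw [← Finset.insert_erase hmem]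
          rw [Finset.image_insert]
        rw [h1, Finset.insert_comm]
      rw [hMeq, hcard, stepB n (S'.card + 1) _ hM, ih S' hS'']
      have e1 : sVal (n + 1) S (S'.card + 1 + 1) = n + 1 := by
        rw [show S'.card + 1 + 1 = S.card + 1 by omega, sVal_top]
      have e2 : sVal (n + 1) S (S'.card + 1) = n := by
        rw [show S'.card + 1 = S.card from hcard.symm,
          sVal_erase_max hmem hmax le_rfl, ← hS'def, hcard, sVal_top]
      rw [Finset.prod_Icc_succ_top (by omega : 1 ≤ S'.card + 1 + 1)]
      simp only [Nat.add_sub_cancel]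
      rw [e1, e2]
      have eterm : ∀ r ∈ Finset.Icc 1 (S'.card + 1),
          r ^ (sVal (n + 1) S r - sVal (n + 1) S (r - 1)) =
            r ^ (sVal n S' r - sVal n S' (r - 1)) := by
        intro r hr
        have hr' := Finset.mem_Icc.1 hr
        rw [sVal_erase_max hmem hmax (by omega), sVal_erase_max hmem hmax (by omega), hS'def]
      rw [Finset.prod_congr rfl eterm]
      have : n + 1 - n = 1 := by omega
      rw [this, pow_one, mul_comm]
    · -- case A
      have hSn : S ⊆ Finset.Icc 1 (n - 1) := by
        intro x hx
        have h1 := Finset.mem_Icc.1 (hS' hx)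
        have h2 : x ≠ n := fun h => hmem (h ▸ hx)
        exact Finset.mem_Icc.2 ⟨h1.1, by omega⟩
      have hM : (n + 1) ∉ insert 1 (S.image (· + 1)) := by
        simp only [Finset.mem_insert, Finset.mem_image]
        push_neg
        refine ⟨by omega, fun x hx h => ?_⟩
        have : x = n := by omega
        exact hmem (this ▸ hx)
      rw [stepA n (S.card + 1) _ hM, ih S hSn]
      have hle : sVal n S S.card ≤ n := sVal_le hS' le_rfl
      rw [Finset.prod_Icc_succ_top (by omega : 1 ≤ S.card + 1),
        Finset.prod_Icc_succ_top (by omega : 1 ≤ S.card + 1)]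
      simp only [Nat.add_sub_cancel]
      have eterm : ∀ r ∈ Finset.Icc 1 S.card,
          r ^ (sVal (n + 1) S r - sVal (n + 1) S (r - 1)) =
            r ^ (sVal n S r - sVal n S (r - 1)) := by
        intro r hr
        have hr' := Finset.mem_Icc.1 hr
        rw [sVal_indep (by omega), sVal_indep (by omega)]
      rw [Finset.prod_congr rfl eterm, sVal_top, sVal_top,
        sVal_indep (show S.card ≠ S.card + 1 by omega)]
      have h3 : n + 1 - sVal n S S.card = (n - sVal n S S.card) + 1 := by omega
      rw [h3, pow_succ]
      ring

/-- Let `S = {s_1 < ⋯ < s_k} ⊆ {1, …, n-1}`, with `s_0 = 0` and `s_{k+1} = n`.  The number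
of ordered set partitions `(B_1, …, B_{k+1})` of `{1, …, n}` into exactly `k+1` blocks
(pairwise disjoint nonempty sets covering `{1, …, n}`) whose set of block minima
`{min B_1, …, min B_{k+1}}` equals `{1, s_1 + 1, …, s_k + 1}` is
`∏_{r=1}^{k+1} r^(s_r - s_{r-1})`. -/
theorem card_ordered_set_partitions_with_minima (n : ℕ) (hn : 1 ≤ n) (S : Finset ℕ)
    (hS : S ⊆ Finset.Icc 1 (n - 1)) :
    Nat.card {f : Fin (S.card + 1) → Finset ℕ //
        (∀ j, (f j).Nonempty) ∧ (∀ i j, i ≠ j → Disjoint (f i) (f j)) ∧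
        Finset.univ.biUnion f = Finset.Icc 1 n ∧
        Finset.univ.image (fun j => sInf ((f j : Set ℕ))) = insert 1 (S.image (· + 1))} =
      ∏ r ∈ Finset.Icc 1 (S.card + 1), r ^ (sVal n S r - sVal n S (r - 1)) :=
  key n hn S hS
end

section
/- Fix n ≥ 1 and a subset S = {s_1, ..., s_k} of {1, ..., n-1} with s_1 < ... < s_k. Then the number of permutations π of {1, ..., n} with A(π) ⊆ S equals the number of inversion tables b of length n such that every element of {1, ..., n-1} missing from dent(b) lies in {n - s_1, n - s_2, ..., n - s_k}; equivalently, {0, 1, ..., n-1} \ {n - s_1, ..., n - s_k} ⊆ dent(b). -/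
namespace ABproof

open Finset

def tabFinset (n : ℕ) : Finset (Fin n → ℕ) :=
  Fintype.piFinset (fun i : Fin n => Finset.range (n - (i : ℕ)))

lemma mem_tabFinset {n : ℕ} (b : Fin n → ℕ) : b ∈ tabFinset n ↔ IsInvTable b := by
  simp only [tabFinset, Fintype.mem_piFinset, Finset.mem_range, IsInvTable]
  refine forall_congr' fun i => ?_
  have := i.2
  omega

def Ntab (n : ℕ) (R : Finset ℕ) : ℕ :=
  ((tabFinset n).filter (fun b => R ⊆ dent b)).card

def Qtab (n : ℕ) (R : Finset ℕ) : ℕ :=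
  ∏ i ∈ Finset.range n, (1 + ((Finset.Ioo i n) \ R).card)

lemma Ntab_eq_zero {n : ℕ} {R : Finset ℕ} (h : ∃ x ∈ R, n ≤ x) : Ntab n R = 0 := by
  obtain ⟨x, hxR, hxn⟩ := h
  rw [Ntab, Finset.card_eq_zero, Finset.filter_eq_empty_iff]
  intro b hb hsub
  have hx : x ∈ dent b := hsub hxR
  rw [dent, Finset.mem_image] at hx
  obtain ⟨i, -, hi⟩ := hx
  have := (mem_tabFinset b).1 hb i
  have := i.2
  omega

lemma dent_cons {n : ℕ} (b : Fin (n+1) → ℕ) :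
    dent b = insert (b 0) (dent (Fin.tail b)) := by
  ext x
  simp only [dent, Finset.mem_image, Finset.mem_insert, Finset.mem_univ, true_and,
    Fin.exists_fin_succ, Fin.tail]
  exact or_congr eq_comm Iff.rfl

lemma Ntab_succ (n : ℕ) (R : Finset ℕ) :
    Ntab (n+1) R = ∑ v ∈ Finset.range (n+1), Ntab n (R.erase v) := by
  rw [Ntab]
  have H : ∀ b ∈ (tabFinset (n+1)).filter (fun b => R ⊆ dent b),
      b 0 ∈ Finset.range (n+1) := by
    intro b hb
    obtain ⟨hb1, -⟩ := Finset.mem_filter.1 hb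
    have h : b 0 ≤ n + 1 - 1 := (mem_tabFinset b).1 hb1 0
    exact Finset.mem_range.2 (by omega)
  rw [Finset.card_eq_sum_card_fiberwise (f := fun b => b 0) (t := Finset.range (n+1)) (fun b hb => H b hb)]
  refine Finset.sum_congr rfl fun v hv => ?_
  rw [Finset.mem_range] at hv
  rw [Ntab]
  apply Finset.card_bij (fun b _ => Fin.tail b)
  · -- maps into target
    intro b hb
    simp only [Finset.mem_filter] at hb ⊢
    obtain ⟨⟨hb1, hb2⟩, hb0⟩ := hb
    constructor
    · rw [mem_tabFinset] at hb1 ⊢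
      intro i
      have h := hb1 i.succ
      rw [Fin.val_succ] at h
      simp only [Fin.tail]
      omega
    · rw [dent_cons, hb0, Finset.subset_insert_iff] at hb2
      exact hb2
  · -- injective
    intro b1 hb1 b2 hb2 heq
    simp only [Finset.mem_filter] at hb1 hb2
    have h1 : b1 0 = v := hb1.2
    have h2 : b2 0 = v := hb2.2
    have := Fin.cons_self_tail b1
    rw [← Fin.cons_self_tail b1, ← Fin.cons_self_tail b2, heq, h1, h2]
  · -- surjective
    intro c hc
    simp only [Finset.mem_filter] at hc
    refine ⟨Fin.cons v c, ?_, ?_⟩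
    · simp only [Finset.mem_filter]
      refine ⟨⟨?_, ?_⟩, ?_⟩
      · rw [mem_tabFinset]
        intro i
        refine Fin.cases ?_ ?_ i
        · rw [Fin.cons_zero, Fin.val_zero]
          omega
        · intro j
          have h := (mem_tabFinset c).1 hc.1 j
          rw [Fin.cons_succ, Fin.val_succ]
          omega
      · rw [dent_cons, Fin.cons_zero, Fin.tail_cons, Finset.subset_insert_iff]
        exact hc.2
      · simp
    · simp [Fin.tail_cons]

end ABproof
namespace ABproof

open Finset

def gfun (n : ℕ) (R : Finset ℕ) (i : ℕ) : ℕ := ((Finset.Ioo i n) \ R).card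

def Tfun (n : ℕ) (R : Finset ℕ) (v : ℕ) : ℕ :=
  ∏ i ∈ Finset.range n, (if i < v then 2 + gfun n R i else 1 + gfun n R i)

def Ufun (n : ℕ) (R : Finset ℕ) (v : ℕ) : ℕ :=
  ∏ i ∈ (Finset.range n).erase v, (if i < v then 2 + gfun n R i else 1 + gfun n R i)

lemma Tfun_eq_U_mul {n : ℕ} (R : Finset ℕ) {v : ℕ} (hv : v < n) :
    Tfun n R v = Ufun n R v * (1 + gfun n R v) := by
  rw [Tfun, ← Finset.mul_prod_erase _ _ (Finset.mem_range.2 hv), if_neg (lt_irrefl v),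
    mul_comm]
  rfl

lemma Tfun_succ_eq {n : ℕ} (R : Finset ℕ) {v : ℕ} (hv : v < n) :
    Tfun n R (v+1) = Ufun n R v * (2 + gfun n R v) := by
  rw [Tfun, ← Finset.mul_prod_erase _ _ (Finset.mem_range.2 hv),
    if_pos (Nat.lt_succ_self v), mul_comm]
  congr 1
  refine Finset.prod_congr rfl fun i hi => ?_
  have hne : i ≠ v := Finset.ne_of_mem_erase hi
  by_cases h : i < v
  · rw [if_pos h, if_pos (by omega : i < v + 1)]
  · rw [if_neg h, if_neg (by omega : ¬ i < v + 1)]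

lemma Tfun_eq_add {n : ℕ} (R : Finset ℕ) :
    ∀ w, w ≤ n → Tfun n R w = Tfun n R 0 + ∑ v ∈ Finset.range w, Ufun n R v := by
  intro w
  induction w with
  | zero => simp
  | succ w ih =>
    intro hw
    have hw' : w < n := by omega
    calc Tfun n R (w+1) = Ufun n R w * (2 + gfun n R w) := Tfun_succ_eq R hw'
      _ = Ufun n R w * (1 + gfun n R w) + Ufun n R w := by ring
      _ = Tfun n R w + Ufun n R w := by rw [← Tfun_eq_U_mul R hw']
      _ = (Tfun n R 0 + ∑ v ∈ Finset.range w, Ufun n R v) + Ufun n R w := by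
          rw [ih (le_of_lt hw')]
      _ = Tfun n R 0 + ∑ v ∈ Finset.range (w+1), Ufun n R v := by
          rw [Finset.sum_range_succ]; ring

lemma gfun_eq_filter {n : ℕ} (R : Finset ℕ) (v : ℕ) :
    gfun n R v = ((Finset.Ioo 0 n \ R).filter (fun w => v < w)).card := by
  unfold gfun
  congr 1
  ext x
  simp only [Finset.mem_sdiff, Finset.mem_Ioo, Finset.mem_filter]
  constructor
  · rintro ⟨⟨h1, h2⟩, h3⟩; exact ⟨⟨⟨by omega, h2⟩, h3⟩, h1⟩
  · rintro ⟨⟨⟨h0, h2⟩, h3⟩, h1⟩; exact ⟨⟨h1, h2⟩, h3⟩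

lemma sum_Ug {n : ℕ} (R : Finset ℕ) :
    (∑ v ∈ Finset.range n, Ufun n R v * gfun n R v) + gfun n R 0 * Tfun n R 0
      = ∑ w ∈ Finset.Ioo 0 n \ R, Tfun n R w := by
  have h1 : ∀ v, Ufun n R v * gfun n R v
      = ∑ w ∈ Finset.Ioo 0 n \ R, (if v < w then Ufun n R v else 0) := by
    intro v
    rw [gfun_eq_filter, ← Finset.sum_filter, Finset.sum_const, smul_eq_mul, mul_comm]
  calc (∑ v ∈ Finset.range n, Ufun n R v * gfun n R v) + gfun n R 0 * Tfun n R 0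
      = (∑ v ∈ Finset.range n, ∑ w ∈ Finset.Ioo 0 n \ R,
          (if v < w then Ufun n R v else 0)) + gfun n R 0 * Tfun n R 0 := by
        rw [Finset.sum_congr rfl fun v _ => h1 v]
    _ = (∑ w ∈ Finset.Ioo 0 n \ R, ∑ v ∈ Finset.range n,
          (if v < w then Ufun n R v else 0)) + gfun n R 0 * Tfun n R 0 := by
        rw [Finset.sum_comm]
    _ = (∑ w ∈ Finset.Ioo 0 n \ R, ∑ v ∈ Finset.range w, Ufun n R v)
          + gfun n R 0 * Tfun n R 0 := by
        congr 1
        refine Finset.sum_congr rfl fun w hw => ?_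
        rw [← Finset.sum_filter]
        congr 1
        have hwn : w < n := by
          simp only [Finset.mem_sdiff, Finset.mem_Ioo] at hw
          exact hw.1.2
        ext x
        simp only [Finset.mem_filter, Finset.mem_range]
        omega
    _ = ∑ w ∈ Finset.Ioo 0 n \ R, (Tfun n R 0 + ∑ v ∈ Finset.range w, Ufun n R v) := by
        rw [Finset.sum_add_distrib, Finset.sum_const, smul_eq_mul, gfun, add_comm]
    _ = ∑ w ∈ Finset.Ioo 0 n \ R, Tfun n R w := by
        refine Finset.sum_congr rfl fun w hw => ?_
        have hwn : w ≤ n := by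
          simp only [Finset.mem_sdiff, Finset.mem_Ioo] at hw
          omega
        rw [Tfun_eq_add R w hwn]

lemma sum_Icc_split {n : ℕ} (R : Finset ℕ) (hn : 1 ≤ n) (hR : ∀ x ∈ R, x < n) :
    ∑ v ∈ Finset.Icc 1 n, Tfun n R v
      = Tfun n R n + (∑ w ∈ Finset.Ioo 0 n \ R, Tfun n R w)
        + ∑ v ∈ R.erase 0, Tfun n R v := by
  have h1 : Finset.Icc 1 n = insert n (Finset.Ioo 0 n) := by
    ext x; simp only [Finset.mem_Icc, Finset.mem_insert, Finset.mem_Ioo]; omega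
  have h2 : n ∉ Finset.Ioo 0 n := by simp
  rw [h1, Finset.sum_insert h2, add_assoc]
  congr 1
  have h3 : Finset.Ioo 0 n \ R = (Finset.Ioo 0 n).filter (fun x => ¬ x ∈ R) := by
    rw [Finset.sdiff_eq_filter]
  have h4 : R.erase 0 = (Finset.Ioo 0 n).filter (fun x => x ∈ R) := by
    ext x
    simp only [Finset.mem_erase, Finset.mem_filter, Finset.mem_Ioo]
    constructor
    · rintro ⟨hx0, hxR⟩; exact ⟨⟨Nat.pos_of_ne_zero hx0, hR x hxR⟩, hxR⟩
    · rintro ⟨⟨h0, -⟩, hxR⟩; exact ⟨by omega, hxR⟩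
  rw [h3, h4, add_comm, Finset.sum_filter_add_sum_filter_not]

lemma key_identity {n : ℕ} (hn : 1 ≤ n) (R : Finset ℕ) (hR : ∀ x ∈ R, x < n) :
    Tfun n R n = (2 + gfun n R 0) * Tfun n R 0 + ∑ v ∈ R.erase 0, Tfun n R v := by
  have hc : Tfun n R n = Tfun n R 0 + ∑ v ∈ Finset.range n, Ufun n R v :=
    Tfun_eq_add R n le_rfl
  have hd := sum_Ug R (n := n)
  have he : ∑ v ∈ Finset.range n, Ufun n R v * (2 + gfun n R v)
      = ∑ v ∈ Finset.Icc 1 n, Tfun n R v := by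
    have : ∀ v ∈ Finset.range n, Ufun n R v * (2 + gfun n R v) = Tfun n R (v+1) := by
      intro v hv
      exact (Tfun_succ_eq R (Finset.mem_range.1 hv)).symm
    rw [Finset.sum_congr rfl this]
    rw [← Finset.Ico_add_one_right_eq_Icc, Finset.sum_Ico_eq_sum_range]
    refine Finset.sum_congr (by norm_num) fun i _ => ?_
    rw [Nat.add_comm]
  have hf := sum_Icc_split R hn hR
  have hsplit : ∑ v ∈ Finset.range n, Ufun n R v * (2 + gfun n R v)
      = 2 * (∑ v ∈ Finset.range n, Ufun n R v)
        + ∑ v ∈ Finset.range n, Ufun n R v * gfun n R v := by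
    rw [Finset.mul_sum, ← Finset.sum_add_distrib]
    refine Finset.sum_congr rfl fun v _ => by ring
  -- set up atoms and finish with omega
  set X := Tfun n R n with hX
  set D := Tfun n R 0 with hD
  set SU := ∑ v ∈ Finset.range n, Ufun n R v with hSU
  set A := ∑ v ∈ Finset.range n, Ufun n R v * gfun n R v with hA
  set B := ∑ w ∈ Finset.Ioo 0 n \ R, Tfun n R w with hB
  set C := ∑ v ∈ R.erase 0, Tfun n R v with hC
  set g0 := gfun n R 0 with hg0
  have hP : (2 + g0) * D = 2 * D + g0 * D := by ring
  rw [hP]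
  have hIcc : ∑ v ∈ Finset.Icc 1 n, Tfun n R v = X + B + C := hf
  rw [hsplit, hIcc] at he
  set P := g0 * D with hPP
  omega

end ABproof

namespace ABproof

open Finset

lemma Qtab_eq_Tfun_zero (n : ℕ) (R : Finset ℕ) : Qtab n R = Tfun n R 0 := by
  rw [Qtab, Tfun]
  exact Finset.prod_congr rfl fun i _ => by rw [if_neg (Nat.not_lt_zero i)]; rfl

lemma Qtab_succ_of_not_mem {n : ℕ} {R : Finset ℕ} (hnR : n ∉ R) :
    Qtab (n+1) R = Tfun n R n := by
  rw [Qtab, Finset.prod_range_succ]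
  have hlast : Finset.Ioo n (n+1) \ R = ∅ := by
    ext x
    simp only [Finset.mem_sdiff, Finset.mem_Ioo, Finset.notMem_empty, iff_false, not_and]
    intro h; omega
  rw [hlast]
  simp only [Finset.card_empty, add_zero, mul_one]
  rw [Tfun]
  refine Finset.prod_congr rfl fun i hi => ?_
  have hi' : i < n := Finset.mem_range.1 hi
  rw [if_pos hi']
  have hins : Finset.Ioo i (n+1) \ R = insert n (Finset.Ioo i n \ R) := by
    ext x
    simp only [Finset.mem_sdiff, Finset.mem_Ioo, Finset.mem_insert]
    constructor
    · rintro ⟨⟨h1, h2⟩, h3⟩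
      by_cases hx : x = n
      · exact Or.inl hx
      · exact Or.inr ⟨⟨h1, by omega⟩, h3⟩
    · rintro (rfl | ⟨⟨h1, h2⟩, h3⟩)
      · exact ⟨⟨hi', by omega⟩, hnR⟩
      · exact ⟨⟨h1, by omega⟩, h3⟩
  rw [hins, Finset.card_insert_of_notMem (by simp)]
  rw [gfun]
  omega

lemma Qtab_erase_mem {n v : ℕ} {R : Finset ℕ} (hv : v ∈ R) (h1 : 1 ≤ v) (h2 : v < n) :
    Qtab n (R.erase v) = Tfun n R v := by
  rw [Qtab, Tfun]
  refine Finset.prod_congr rfl fun i hi => ?_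
  have hi' : i < n := Finset.mem_range.1 hi
  by_cases h : i < v
  · rw [if_pos h]
    have hins : Finset.Ioo i n \ R.erase v = insert v (Finset.Ioo i n \ R) := by
      ext x
      simp only [Finset.mem_sdiff, Finset.mem_Ioo, Finset.mem_insert, Finset.mem_erase]
      constructor
      · rintro ⟨⟨ha, hb⟩, hc⟩
        by_cases hx : x = v
        · exact Or.inl hx
        · exact Or.inr ⟨⟨ha, hb⟩, fun hmem => hc ⟨hx, hmem⟩⟩
      · rintro (rfl | ⟨⟨ha, hb⟩, hc⟩)
        · exact ⟨⟨h, h2⟩, fun hmem => hmem.1 rfl⟩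
        · exact ⟨⟨ha, hb⟩, fun hmem => hc hmem.2⟩
    rw [hins, Finset.card_insert_of_notMem (by simp [hv])]
    rw [gfun]
    omega
  · rw [if_neg h]
    have heq : Finset.Ioo i n \ R.erase v = Finset.Ioo i n \ R := by
      ext x
      simp only [Finset.mem_sdiff, Finset.mem_Ioo, Finset.mem_erase]
      constructor
      · rintro ⟨⟨ha, hb⟩, hc⟩
        exact ⟨⟨ha, hb⟩, fun hmem => hc ⟨by omega, hmem⟩⟩
      · rintro ⟨⟨ha, hb⟩, hc⟩
        exact ⟨⟨ha, hb⟩, fun hmem => hc hmem.2⟩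
    rw [heq]
    rfl

lemma Qtab_erase_zero (n : ℕ) (R : Finset ℕ) : Qtab n (R.erase 0) = Qtab n R := by
  rw [Qtab, Qtab]
  refine Finset.prod_congr rfl fun i _ => ?_
  congr 2
  ext x
  simp only [Finset.mem_sdiff, Finset.mem_Ioo, Finset.mem_erase]
  constructor
  · rintro ⟨⟨ha, hb⟩, hc⟩
    exact ⟨⟨ha, hb⟩, fun hmem => hc ⟨by omega, hmem⟩⟩
  · rintro ⟨⟨ha, hb⟩, hc⟩
    exact ⟨⟨ha, hb⟩, fun hmem => hc hmem.2⟩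

lemma Qtab_succ_of_mem {n : ℕ} {R : Finset ℕ} (hnR : n ∈ R) :
    Qtab (n+1) R = Qtab n (R.erase n) := by
  rw [Qtab, Qtab, Finset.prod_range_succ]
  have hlast : Finset.Ioo n (n+1) \ R = ∅ := by
    ext x
    simp only [Finset.mem_sdiff, Finset.mem_Ioo, Finset.notMem_empty, iff_false, not_and]
    intro h; omega
  rw [hlast]
  simp only [Finset.card_empty, add_zero, mul_one]
  refine Finset.prod_congr rfl fun i hi => ?_
  have hi' : i < n := Finset.mem_range.1 hi
  congr 2
  ext x
  simp only [Finset.mem_sdiff, Finset.mem_Ioo, Finset.mem_erase]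
  constructor
  · rintro ⟨⟨ha, hb⟩, hc⟩
    have hxn : x ≠ n := fun h => hc (h ▸ hnR)
    exact ⟨⟨ha, by omega⟩, fun hmem => hc hmem.2⟩
  · rintro ⟨⟨ha, hb⟩, hc⟩
    refine ⟨⟨ha, by omega⟩, fun hmem => hc ⟨by omega, hmem⟩⟩

lemma Ntab_zero_empty : Ntab 0 (∅ : Finset ℕ) = 1 := by
  rw [Ntab]
  rw [Finset.filter_true_of_mem (fun b _ => Finset.empty_subset _)]
  rw [tabFinset, Fintype.card_piFinset]
  simp

theorem Ntab_eq_Qtab : ∀ n (R : Finset ℕ), (∀ x ∈ R, x < n) → Ntab n R = Qtab n R := by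
  intro n
  induction n with
  | zero =>
    intro R hR
    have hRe : R = ∅ := Finset.eq_empty_of_forall_notMem fun x hx => by
      have := hR x hx; omega
    subst hRe
    rw [Ntab_zero_empty, Qtab]
    simp
  | succ n ih =>
    intro R hR
    rw [Ntab_succ]
    by_cases hn : n ∈ R
    · rw [Finset.sum_eq_single n
        (fun v _ hvn => Ntab_eq_zero ⟨n, Finset.mem_erase.2 ⟨fun h => hvn h.symm, hn⟩, le_rfl⟩)
        (fun h => absurd (Finset.mem_range.2 (Nat.lt_succ_self n)) h)]
      rw [ih (R.erase n) (fun x hx => by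
        have h1 := Finset.mem_erase.1 hx
        have := hR x h1.2
        omega)]
      exact (Qtab_succ_of_mem hn).symm
    · -- n ∉ R
      have hR' : ∀ x ∈ R, x < n := fun x hx => by
        have := hR x hx
        have : x ≠ n := fun h => hn (h ▸ hx)
        omega
      have hIH : ∀ v, Ntab n (R.erase v) = Qtab n (R.erase v) := fun v =>
        ih (R.erase v) (fun x hx => hR' x (Finset.mem_erase.1 hx).2)
      rcases Nat.eq_zero_or_pos n with rfl | hn1
      · have hRe : R = ∅ := Finset.eq_empty_of_forall_notMem fun x hx => by
          have := hR' x hx; omega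
        subst hRe
        rw [Finset.sum_range_one]
        simp only [Finset.erase_empty]
        rw [Ntab_zero_empty, Qtab]
        have : Finset.Ioo 0 1 = (∅ : Finset ℕ) := by ext x; simp; omega
        simp [this]
      · -- main case
        rw [Finset.sum_congr rfl (fun v _ => hIH v)]
        have hsub : R.erase 0 ⊆ Finset.range (n+1) := fun x hx => by
          have := hR' x (Finset.mem_erase.1 hx).2
          exact Finset.mem_range.2 (by omega)
        rw [← Finset.sum_sdiff hsub]
        have hterm1 : ∀ v ∈ Finset.range (n+1) \ R.erase 0,
            Qtab n (R.erase v) = Tfun n R 0 := by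
          intro v hv
          have hv' := (Finset.mem_sdiff.1 hv).2
          rw [← Qtab_eq_Tfun_zero]
          by_cases hv0 : v = 0
          · subst hv0; exact Qtab_erase_zero n R
          · have hvR : v ∉ R := fun hmem => hv' (Finset.mem_erase.2 ⟨hv0, hmem⟩)
            rw [Finset.erase_eq_of_notMem hvR]
        have hterm2 : ∀ v ∈ R.erase 0, Qtab n (R.erase v) = Tfun n R v := by
          intro v hv
          obtain ⟨hv0, hvR⟩ := Finset.mem_erase.1 hv
          exact Qtab_erase_mem hvR (Nat.pos_of_ne_zero hv0) (hR' v hvR)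
        rw [Finset.sum_congr rfl hterm1, Finset.sum_congr rfl hterm2,
          Finset.sum_const, smul_eq_mul]
        have hcard : (Finset.range (n+1) \ R.erase 0).card = 2 + gfun n R 0 := by
          rw [Finset.card_sdiff_of_subset hsub, Finset.card_range]
          have h4 : R.erase 0 = (Finset.Ioo 0 n).filter (fun x => x ∈ R) := by
            ext x
            simp only [Finset.mem_erase, Finset.mem_filter, Finset.mem_Ioo]
            constructor
            · rintro ⟨hx0, hxR⟩; exact ⟨⟨Nat.pos_of_ne_zero hx0, hR' x hxR⟩, hxR⟩
            · rintro ⟨⟨h0, -⟩, hxR⟩; exact ⟨by omega, hxR⟩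
          have h3 : gfun n R 0 = ((Finset.Ioo 0 n).filter (fun x => ¬ x ∈ R)).card := by
            rw [gfun, Finset.sdiff_eq_filter]
          have h5 := Finset.card_filter_add_card_filter_not
            (s := Finset.Ioo 0 n) (p := fun x => x ∈ R)
          have h6 : (Finset.Ioo 0 n).card = n - 1 := by
            rw [Nat.card_Ioo]; omega
          have h7 : (R.erase 0).card ≤ n - 1 := by
            rw [h4]
            calc ((Finset.Ioo 0 n).filter _).card ≤ (Finset.Ioo 0 n).card :=
              Finset.card_filter_le _ _
            _ = n - 1 := h6
          rw [h4]
          omega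
        rw [hcard, Qtab_succ_of_not_mem hn]
        exact (key_identity hn1 R hR').symm

end ABproof

namespace ABproof

open Finset Equiv

variable {n : ℕ}

def ins (p : Fin (n+1)) (σ : Equiv.Perm (Fin n)) : Equiv.Perm (Fin (n+1)) :=
  (finSuccEquiv' p).trans ((Equiv.optionCongr σ).trans (finSuccEquiv' (Fin.last n)).symm)

lemma ins_apply_self (p : Fin (n+1)) (σ : Equiv.Perm (Fin n)) :
    ins p σ p = Fin.last n := by
  simp [ins, finSuccEquiv'_at, finSuccEquiv'_symm_none]

lemma ins_apply_succAbove (p : Fin (n+1)) (σ : Equiv.Perm (Fin n)) (k : Fin n) :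
    ins p σ (p.succAbove k) = (σ k).castSucc := by
  simp only [ins, Equiv.trans_apply, finSuccEquiv'_succAbove, Equiv.optionCongr_apply,
    Option.map_some, finSuccEquiv'_symm_some]
  rw [Fin.succAbove_last]

lemma ins_bijective :
    Function.Bijective (fun x : Fin (n+1) × Equiv.Perm (Fin n) => ins x.1 x.2) := by
  constructor
  · rintro ⟨p, σ⟩ ⟨q, τ⟩ heq
    simp only at heq
    have hpq : p = q := by
      have h1 : ins p σ p = Fin.last n := ins_apply_self p σ
      have h2 : ins q τ q = Fin.last n := ins_apply_self q τ
      rw [heq] at h1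
      exact (ins q τ).injective (h1.trans h2.symm)
    subst hpq
    have hστ : σ = τ := by
      apply Equiv.ext
      intro k
      have h1 := ins_apply_succAbove p σ k
      have h2 := ins_apply_succAbove p τ k
      rw [heq] at h1
      have := h1.symm.trans h2
      exact Fin.castSucc_injective n (this)
    rw [hστ]
  · intro π
    set p := π.symm (Fin.last n) with hp
    have hπp : π p = Fin.last n := Equiv.apply_symm_apply π _
    have hne : ∀ k : Fin n, π (p.succAbove k) ≠ Fin.last n := by
      intro k h
      exact Fin.succAbove_ne p k (π.injective (h.trans hπp.symm))
    have finj : Function.Injective (fun k : Fin n => (π (p.succAbove k)).castPred (hne k)) := by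
      intro a b hab
      have : π (p.succAbove a) = π (p.succAbove b) := by
        have := congrArg Fin.val hab
        simp only [Fin.coe_castPred] at this
        exact Fin.ext this
      exact Fin.succAbove_right_injective (π.injective this)
    refine ⟨⟨p, Equiv.ofBijective _ (Finite.injective_iff_bijective.1 finj)⟩, ?_⟩
    apply Equiv.ext
    intro x
    by_cases hx : x = p
    · subst hx
      simp only [ins_apply_self]
      exact hπp.symm
    · obtain ⟨k, hk⟩ := Fin.exists_succAbove_eq hx
      rw [← hk]
      simp only [ins_apply_succAbove, Equiv.ofBijective_apply]
      rw [Fin.castSucc_castPred]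

lemma pval_le {m : ℕ} (σ : Equiv.Perm (Fin m)) (i : ℕ) : pval σ i ≤ m := by
  rw [pval]
  split
  · have := (σ ⟨i - 1, by assumption⟩).isLt
    omega
  · omega

lemma pval_eq {m : ℕ} (σ : Equiv.Perm (Fin m)) {i : ℕ} (h : i - 1 < m) :
    pval σ i = (σ ⟨i - 1, h⟩ : ℕ) + 1 := dif_pos h

lemma pval_ins_of_le (p : Fin (n+1)) (σ : Equiv.Perm (Fin n)) {i : ℕ}
    (h1 : 1 ≤ i) (h2 : i ≤ (p : ℕ)) : pval (ins p σ) i = pval σ i := by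
  have hpn : (p : ℕ) ≤ n := Nat.lt_succ_iff.1 p.isLt
  have hin : i - 1 < n := by omega
  have hin1 : i - 1 < n + 1 := by omega
  rw [pval_eq _ hin1, pval_eq _ hin]
  have key : (⟨i-1, hin1⟩ : Fin (n+1)) = p.succAbove ⟨i-1, hin⟩ := by
    rw [Fin.succAbove_of_castSucc_lt]
    · rfl
    · show ((⟨i-1, hin⟩ : Fin n).castSucc : Fin (n+1)) < p
      rw [Fin.lt_def, Fin.coe_castSucc]
      have hv : ((⟨i-1, hin⟩ : Fin n) : ℕ) = i - 1 := rfl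
      rw [hv]
      omega
  rw [key, ins_apply_succAbove]
  rfl

lemma pval_ins_self (p : Fin (n+1)) (σ : Equiv.Perm (Fin n)) :
    pval (ins p σ) ((p : ℕ) + 1) = n + 1 := by
  have hin1 : (p : ℕ) + 1 - 1 < n + 1 := p.isLt
  rw [pval_eq _ hin1]
  have : (⟨(p : ℕ) + 1 - 1, hin1⟩ : Fin (n+1)) = p := by
    apply Fin.ext; simp
  rw [this, ins_apply_self]
  simp [Fin.last]

lemma pval_ins_of_gt (p : Fin (n+1)) (σ : Equiv.Perm (Fin n)) {i : ℕ}
    (h1 : (p : ℕ) + 1 ≤ i) (h2 : i ≤ n) : pval (ins p σ) (i + 1) = pval σ i := by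
  have hin : i - 1 < n := by omega
  have hin1 : i + 1 - 1 < n + 1 := by omega
  rw [pval_eq _ hin1, pval_eq _ hin]
  have key : (⟨i + 1 - 1, hin1⟩ : Fin (n+1)) = p.succAbove ⟨i-1, hin⟩ := by
    rw [Fin.succAbove_of_le_castSucc]
    · apply Fin.ext
      show i + 1 - 1 = (i - 1) + 1
      omega
    · show p ≤ ((⟨i-1, hin⟩ : Fin n).castSucc : Fin (n+1))
      rw [Fin.le_def, Fin.coe_castSucc]
      have hv : ((⟨i-1, hin⟩ : Fin n) : ℕ) = i - 1 := rfl
      rw [hv]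
      omega
  rw [key, ins_apply_succAbove]
  rfl

lemma mem_ascentBottoms {m : ℕ} (π : Equiv.Perm (Fin m)) (x : ℕ) :
    x ∈ ascentBottoms π ↔
      ∃ i, 1 ≤ i ∧ i ≤ m - 1 ∧ pval π i < pval π (i+1) ∧ pval π i = x := by
  simp only [ascentBottoms, Finset.mem_image, Finset.mem_filter, Finset.mem_Icc]
  constructor
  · rintro ⟨i, ⟨⟨hi1, hi2⟩, hasc⟩, hval⟩
    exact ⟨i, hi1, hi2, hasc, hval⟩
  · rintro ⟨i, hi1, hi2, hasc, hval⟩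
    exact ⟨i, ⟨⟨hi1, hi2⟩, hasc⟩, hval⟩

end ABproof

namespace ABproof

open Finset Equiv

variable {n : ℕ}

lemma ascentBottoms_ins_pos (p : Fin (n+1)) (σ : Equiv.Perm (Fin n)) (hp : 1 ≤ (p:ℕ)) :
    ascentBottoms (ins p σ) = insert (pval σ (p:ℕ)) (ascentBottoms σ) := by
  have hpn : (p:ℕ) ≤ n := Nat.lt_succ_iff.1 p.isLt
  have hn1 : 1 ≤ n := le_trans hp hpn
  ext x
  rw [mem_ascentBottoms, Finset.mem_insert, mem_ascentBottoms]
  constructor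
  · rintro ⟨i, h1, h2, hasc, hval⟩
    have h2' : i ≤ n := by omega
    rcases lt_trichotomy i (p:ℕ) with hip | hip | hip
    · right
      refine ⟨i, h1, by omega, ?_, ?_⟩
      · rw [← pval_ins_of_le p σ h1 (by omega),
          ← pval_ins_of_le p σ (by omega : 1 ≤ i+1) (by omega : i+1 ≤ (p:ℕ))]
        exact hasc
      · rw [← pval_ins_of_le p σ h1 (by omega)]; exact hval
    · left
      rw [← hval, hip, pval_ins_of_le p σ hp le_rfl]
    · by_cases hip2 : i = (p:ℕ) + 1
      · exfalso
        have e1 : pval (ins p σ) i = n + 1 := by rw [hip2]; exact pval_ins_self p σ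
        have e2 : pval (ins p σ) (i+1) = pval σ i := by
          exact pval_ins_of_gt p σ (by omega) (by omega)
        have := pval_le σ i
        omega
      · right
        have e1 : pval (ins p σ) i = pval σ (i-1) := by
          have h := pval_ins_of_gt p σ (i := i - 1) (by omega) (by omega)
          rwa [(by omega : i - 1 + 1 = i)] at h
        have e2 : pval (ins p σ) (i+1) = pval σ i :=
          pval_ins_of_gt p σ (by omega) (by omega)
        refine ⟨i - 1, by omega, by omega, ?_, ?_⟩
        · rw [(by omega : i - 1 + 1 = i), ← e1, ← e2]; exact hasc
        · rw [← e1]; exact hval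
  · rintro (hx | ⟨i, h1, h2, hasc, hval⟩)
    · refine ⟨(p:ℕ), hp, by omega, ?_, ?_⟩
      · rw [pval_ins_of_le p σ hp le_rfl, pval_ins_self]
        have := pval_le σ (p:ℕ); omega
      · rw [pval_ins_of_le p σ hp le_rfl]; exact hx.symm
    · rcases Nat.lt_or_ge i (p:ℕ) with hip | hip
      · refine ⟨i, h1, by omega, ?_, ?_⟩
        · rw [pval_ins_of_le p σ h1 (by omega),
            pval_ins_of_le p σ (by omega : 1 ≤ i+1) (by omega : i+1 ≤ (p:ℕ))]
          exact hasc
        · rw [pval_ins_of_le p σ h1 (by omega)]; exact hval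
      · by_cases hip2 : i = (p:ℕ)
        · refine ⟨(p:ℕ), hp, by omega, ?_, ?_⟩
          · rw [pval_ins_of_le p σ hp le_rfl, pval_ins_self]
            have := pval_le σ (p:ℕ); omega
          · rw [pval_ins_of_le p σ hp le_rfl, ← hip2]; exact hval
        · refine ⟨i+1, by omega, by omega, ?_, ?_⟩
          · rw [pval_ins_of_gt p σ (by omega) (by omega : i ≤ n)]
            have e2 : pval (ins p σ) (i+1+1) = pval σ (i+1) :=
              pval_ins_of_gt p σ (by omega) (by omega)
            rw [e2]
            exact hasc
          · rw [pval_ins_of_gt p σ (by omega) (by omega : i ≤ n)]; exact hval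

lemma ascentBottoms_ins_zero (p : Fin (n+1)) (σ : Equiv.Perm (Fin n)) (hp : (p:ℕ) = 0) :
    ascentBottoms (ins p σ) = ascentBottoms σ := by
  ext x
  rw [mem_ascentBottoms, mem_ascentBottoms]
  constructor
  · rintro ⟨i, h1, h2, hasc, hval⟩
    have h2' : i ≤ n := by omega
    by_cases hi1 : i = 1
    · exfalso
      have e1 : pval (ins p σ) i = n + 1 := by
        have h := pval_ins_self p σ
        rw [hp] at h
        rw [hi1]
        simpa using h
      have e2 : pval (ins p σ) (i+1) = pval σ i :=
        pval_ins_of_gt p σ (by omega) (by omega)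
      have := pval_le σ i
      omega
    · have e1 : pval (ins p σ) i = pval σ (i-1) := by
        have h := pval_ins_of_gt p σ (i := i - 1) (by omega) (by omega)
        rwa [(by omega : i - 1 + 1 = i)] at h
      have e2 : pval (ins p σ) (i+1) = pval σ i :=
        pval_ins_of_gt p σ (by omega) (by omega)
      refine ⟨i - 1, by omega, by omega, ?_, ?_⟩
      · rw [(by omega : i - 1 + 1 = i), ← e1, ← e2]; exact hasc
      · rw [← e1]; exact hval
  · rintro ⟨i, h1, h2, hasc, hval⟩
    refine ⟨i+1, by omega, by omega, ?_, ?_⟩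
    · rw [pval_ins_of_gt p σ (by omega) (by omega : i ≤ n)]
      have e2 : pval (ins p σ) (i+1+1) = pval σ (i+1) :=
        pval_ins_of_gt p σ (by omega) (by omega)
      rw [e2]
      exact hasc
    · rw [pval_ins_of_gt p σ (by omega) (by omega : i ≤ n)]; exact hval

end ABproof

namespace ABproof

open Finset Equiv

variable {n : ℕ}

def cardP (n : ℕ) (S : Finset ℕ) : ℕ :=
  Fintype.card {π : Equiv.Perm (Fin n) // ascentBottoms π ⊆ S}

lemma AB_ins_subset_iff (p : Fin (n+1)) (σ : Equiv.Perm (Fin n)) (S : Finset ℕ) :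
    ascentBottoms (ins p σ) ⊆ S ↔
      (ascentBottoms σ ⊆ S ∧ ((p:ℕ) = 0 ∨ pval σ (p:ℕ) ∈ S)) := by
  by_cases hp : (p:ℕ) = 0
  · rw [ascentBottoms_ins_zero p σ hp]
    simp [hp]
  · rw [ascentBottoms_ins_pos p σ (Nat.pos_of_ne_zero hp), Finset.insert_subset_iff]
    constructor
    · rintro ⟨h1, h2⟩; exact ⟨h2, Or.inr h1⟩
    · rintro ⟨h1, (h0 | h2)⟩
      · exact absurd h0 hp
      · exact ⟨h2, h1⟩

lemma count_positions (σ : Equiv.Perm (Fin n)) (S : Finset ℕ) :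
    Fintype.card {pp : Fin (n+1) // (pp:ℕ) = 0 ∨ pval σ (pp:ℕ) ∈ S}
      = 1 + (S.filter (fun s => 1 ≤ s ∧ s ≤ n)).card := by
  rw [Fintype.card_subtype]
  have hsplit : (Finset.univ.filter (fun pp : Fin (n+1) => (pp:ℕ) = 0 ∨ pval σ (pp:ℕ) ∈ S))
      = insert 0 (Finset.univ.filter
          (fun pp : Fin (n+1) => (pp:ℕ) ≠ 0 ∧ pval σ (pp:ℕ) ∈ S)) := by
    ext q
    simp only [Finset.mem_filter, Finset.mem_univ, true_and, Finset.mem_insert]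
    constructor
    · rintro (h0 | hS)
      · left; exact Fin.ext (by simpa using h0)
      · by_cases h0 : (q:ℕ) = 0
        · left; exact Fin.ext (by simpa using h0)
        · right; exact ⟨h0, hS⟩
    · rintro (rfl | ⟨h0, hS⟩)
      · left; simp
      · right; exact hS
  rw [hsplit, Finset.card_insert_of_notMem (by simp), add_comm]
  congr 1
  refine Finset.card_bij (t := S.filter (fun s => 1 ≤ s ∧ s ≤ n))
    (fun pp _ => pval σ (pp:ℕ)) ?_ ?_ ?_
  · intro pp hpp
    simp only [Finset.mem_filter, Finset.mem_univ, true_and] at hpp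
    obtain ⟨h0, hS⟩ := hpp
    have hlt : (pp:ℕ) - 1 < n := by have := pp.isLt; omega
    rw [Finset.mem_filter]
    refine ⟨hS, ?_, ?_⟩
    · rw [pval_eq σ hlt]; omega
    · rw [pval_eq σ hlt]
      have := (σ ⟨(pp:ℕ) - 1, hlt⟩).isLt
      omega
  · intro pp hpp qq hqq heq
    simp only [Finset.mem_filter, Finset.mem_univ, true_and] at hpp hqq
    have hlt1 : (pp:ℕ) - 1 < n := by have := pp.isLt; omega
    have hlt2 : (qq:ℕ) - 1 < n := by have := qq.isLt; omega
    rw [pval_eq σ hlt1, pval_eq σ hlt2] at heq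
    have hv : (σ ⟨(pp:ℕ)-1, hlt1⟩ : Fin n) = σ ⟨(qq:ℕ)-1, hlt2⟩ := Fin.ext (by omega)
    have := σ.injective hv
    have hv2 : (pp:ℕ) - 1 = (qq:ℕ) - 1 := congrArg Fin.val this
    have h0p := hpp.1
    have h0q := hqq.1
    exact Fin.ext (by omega)
  · intro s hs
    simp only [Finset.mem_filter] at hs
    obtain ⟨hsS, hs1, hsn⟩ := hs
    have hs1n : s - 1 < n := by omega
    set k : Fin n := σ.symm ⟨s - 1, hs1n⟩ with hk
    have hklt : (k:ℕ) < n := k.isLt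
    have hv : ((⟨s - 1, hs1n⟩ : Fin n) : ℕ) = s - 1 := rfl
    have hlt : ((k:ℕ) + 1 : ℕ) - 1 < n := by omega
    have hmk : (⟨(k:ℕ) + 1 - 1, hlt⟩ : Fin n) = k :=
      Fin.ext (show (k:ℕ) + 1 - 1 = (k:ℕ) by omega)
    have hpv : pval σ ((k:ℕ) + 1) = s := by
      rw [pval_eq σ hlt, hmk, hk, Equiv.apply_symm_apply, hv]
      omega
    refine ⟨⟨(k:ℕ) + 1, by omega⟩, ?_, ?_⟩
    · simp only [Finset.mem_filter, Finset.mem_univ, true_and]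
      rw [hpv]
      exact ⟨by omega, hsS⟩
    · exact hpv

lemma cardP_succ (S : Finset ℕ) :
    cardP (n+1) S = (1 + (S.filter (fun s => 1 ≤ s ∧ s ≤ n)).card) * cardP n S := by
  have e0 : {x : Fin (n+1) × Equiv.Perm (Fin n) // ascentBottoms (ins x.1 x.2) ⊆ S}
      ≃ {π : Equiv.Perm (Fin (n+1)) // ascentBottoms π ⊆ S} :=
    (Equiv.ofBijective _ ins_bijective).subtypeEquiv (fun a => Iff.rfl)
  have e2 : {x : Fin (n+1) × Equiv.Perm (Fin n) // ascentBottoms (ins x.1 x.2) ⊆ S}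
      ≃ {x : Fin (n+1) × Equiv.Perm (Fin n) //
          ascentBottoms x.2 ⊆ S ∧ ((x.1:ℕ) = 0 ∨ pval x.2 (x.1:ℕ) ∈ S)} :=
    Equiv.subtypeEquivRight (fun x => AB_ins_subset_iff x.1 x.2 S)
  have e3 : {x : Fin (n+1) × Equiv.Perm (Fin n) //
          ascentBottoms x.2 ⊆ S ∧ ((x.1:ℕ) = 0 ∨ pval x.2 (x.1:ℕ) ∈ S)}
      ≃ Σ τ : {τ : Equiv.Perm (Fin n) // ascentBottoms τ ⊆ S},
          {pp : Fin (n+1) // (pp:ℕ) = 0 ∨ pval τ.1 (pp:ℕ) ∈ S} :=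
    { toFun := fun x => ⟨⟨x.1.2, x.2.1⟩, ⟨x.1.1, x.2.2⟩⟩
      invFun := fun y => ⟨(y.2.1, y.1.1), y.1.2, y.2.2⟩
      left_inv := fun x => rfl
      right_inv := fun y => rfl }
  rw [cardP, Fintype.card_congr (e0.symm.trans (e2.trans e3)), Fintype.card_sigma]
  rw [Finset.sum_congr rfl (fun τ _ => count_positions τ.1 S)]
  rw [Finset.sum_const, smul_eq_mul, Finset.card_univ, mul_comm]
  rfl

lemma cardP_zero (S : Finset ℕ) : cardP 0 S = 1 := by
  rw [cardP]
  have hall : ∀ π : Equiv.Perm (Fin 0), ascentBottoms π ⊆ S := by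
    intro π x hx
    rw [mem_ascentBottoms] at hx
    obtain ⟨i, h1, h2, -, -⟩ := hx
    omega
  rw [Fintype.card_congr (Equiv.subtypeUnivEquiv hall)]
  simp

theorem cardP_eq_prod (n : ℕ) (S : Finset ℕ) :
    cardP n S = ∏ j ∈ Finset.range n, (1 + (S.filter (fun s => 1 ≤ s ∧ s ≤ j)).card) := by
  induction n with
  | zero => rw [cardP_zero]; simp
  | succ m ih =>
    rw [cardP_succ, ih, Finset.prod_range_succ, mul_comm]

end ABproof


namespace ABproof

open Finset

lemma Qtab_factor {n i : ℕ} (hi : i < n) (S : Finset ℕ) (hS : S ⊆ Finset.Icc 1 (n-1)) :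
    ((Finset.Ioo i n) \ (Finset.range n \ S.image (fun s => n - s))).card
      = (S.filter (fun s => 1 ≤ s ∧ s ≤ n - 1 - i)).card := by
  have hset : (Finset.Ioo i n) \ (Finset.range n \ S.image (fun s => n - s))
      = (S.filter (fun s => 1 ≤ s ∧ s ≤ n - 1 - i)).image (fun s => n - s) := by
    ext x
    simp only [Finset.mem_sdiff, Finset.mem_Ioo, Finset.mem_range, Finset.mem_image,
      Finset.mem_filter, not_and, not_not]
    constructor
    · rintro ⟨⟨hix, hxn⟩, himg⟩
      obtain ⟨s, hsS, hsx⟩ := himg hxn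
      have hsI := Finset.mem_Icc.1 (hS hsS)
      exact ⟨s, ⟨hsS, by omega, by omega⟩, hsx⟩
    · rintro ⟨s, ⟨hsS, hs1, hs2⟩, rfl⟩
      have hsI := Finset.mem_Icc.1 (hS hsS)
      refine ⟨⟨by omega, by omega⟩, fun _ => ⟨s, hsS, rfl⟩⟩
  rw [hset]
  apply Finset.card_image_of_injOn
  intro s1 hs1 s2 hs2 heq
  dsimp only at heq
  simp only [Finset.mem_coe, Finset.mem_filter] at hs1 hs2
  have h1 := Finset.mem_Icc.1 (hS hs1.1)
  have h2 := Finset.mem_Icc.1 (hS hs2.1)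
  have hn1 : 1 ≤ n := by omega
  omega

lemma Qtab_eq_prodS (n : ℕ) (S : Finset ℕ) (hS : S ⊆ Finset.Icc 1 (n-1)) :
    Qtab n (Finset.range n \ S.image (fun s => n - s))
      = ∏ j ∈ Finset.range n, (1 + (S.filter (fun s => 1 ≤ s ∧ s ≤ j)).card) := by
  rw [Qtab]
  rw [Finset.prod_congr rfl (fun i hi =>
    by rw [Qtab_factor (Finset.mem_range.1 hi) S hS])]
  exact Finset.prod_range_reflect (fun j => 1 + (S.filter (fun s => 1 ≤ s ∧ s ≤ j)).card) n

lemma natCard_tables (n : ℕ) (R : Finset ℕ) :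
    Nat.card {b : Fin n → ℕ // IsInvTable b ∧ R ⊆ dent b} = Ntab n R := by
  letI : Fintype {b : Fin n → ℕ // IsInvTable b ∧ R ⊆ dent b} :=
    Fintype.ofFinset ((tabFinset n).filter (fun b => R ⊆ dent b))
      (fun b => by rw [Finset.mem_filter, mem_tabFinset]; exact Iff.rfl)
  rw [Nat.card_eq_fintype_card, Ntab]
  exact Fintype.card_ofFinset _ _

end ABproof

/-- The number of permutations of `{1, …, n}` whose set of ascent bottoms is contained in
`S = {s_1, …, s_k} ⊆ {1, …, n-1}` equals the number of inversion tables `b` of length `n`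
with `{0, 1, …, n-1} \ {n - s_1, …, n - s_k} ⊆ dent b`, i.e. such that every element of
`{1, …, n-1}` missing from `dent b` lies in `{n - s_1, …, n - s_k}`. -/
theorem card_ascentBottoms_subset_eq_card_invTables_missing (n : ℕ) (hn : 1 ≤ n)
    (S : Finset ℕ) (hS : S ⊆ Finset.Icc 1 (n - 1)) :
    Nat.card {π : Equiv.Perm (Fin n) // ascentBottoms π ⊆ S} =
      Nat.card {b : Fin n → ℕ // IsInvTable b ∧
        Finset.range n \ S.image (fun s => n - s) ⊆ dent b} := by
  have hR : ∀ x ∈ Finset.range n \ S.image (fun s => n - s), x < n := fun x hx =>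
    Finset.mem_range.1 (Finset.mem_sdiff.1 hx).1
  calc Nat.card {π : Equiv.Perm (Fin n) // ascentBottoms π ⊆ S}
      = ABproof.cardP n S := Nat.card_eq_fintype_card
    _ = ∏ j ∈ Finset.range n, (1 + (S.filter (fun s => 1 ≤ s ∧ s ≤ j)).card) :=
        ABproof.cardP_eq_prod n S
    _ = ABproof.Qtab n (Finset.range n \ S.image (fun s => n - s)) :=
        (ABproof.Qtab_eq_prodS n S hS).symm
    _ = ABproof.Ntab n (Finset.range n \ S.image (fun s => n - s)) :=
        (ABproof.Ntab_eq_Qtab n _ hR).symm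
    _ = Nat.card {b : Fin n → ℕ // IsInvTable b ∧
          Finset.range n \ S.image (fun s => n - s) ⊆ dent b} :=
        (ABproof.natCard_tables n _).symm
end

section
/- For every n ≥ 1, the number of pairs (π, τ) of permutations of {1, ..., n} with A(τ) ⊆ D(π) equals the number of pairs (π, τ) of permutations of {1, ..., n} with D(π) ⊆ A(τ). -/
/-- The descent set `D(π) = { i ∈ {1, …, n-1} : a_i > a_{i+1} }`. -/
def descentSet {n : ℕ} (π : Equiv.Perm (Fin n)) : Finset ℕ :=
  (Finset.Icc 1 (n - 1)).filter fun i => pval π (i + 1) < pval π i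

namespace CardPairs

variable {n : ℕ}




variable {n : ℕ}

lemma perm_inv_apply_self {α : Type*} (f : Equiv.Perm α) (x : α) : f⁻¹ (f x) = x :=
  Equiv.Perm.inv_eq_iff_eq.mpr rfl

lemma perm_apply_inv_self {α : Type*} (f : Equiv.Perm α) (x : α) : f (f⁻¹ x) = x :=
  (Equiv.eq_symm_apply f).mp rfl

/-- Left-to-right maxima positions of the word of `w`. -/
def lrmaxSet (w : Equiv.Perm (Fin n)) : Finset (Fin n) :=
  Finset.univ.filter (fun i => ∀ j, j < i → w j < w i)

lemma mem_lrmaxSet {w : Equiv.Perm (Fin n)} {i : Fin n} :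
    i ∈ lrmaxSet w ↔ ∀ j, j < i → w j < w i := by
  simp [lrmaxSet]

lemma zero_mem_lrmaxSet (w : Equiv.Perm (Fin n)) (i : Fin n) :
    (⟨0, i.pos⟩ : Fin n) ∈ lrmaxSet w := by
  rw [mem_lrmaxSet]
  intro j hj
  exact absurd hj (by simp [Fin.lt_def])

/-- The block of position `i` : lr-maxima positions that are `≤ i`. -/
def blk (w : Equiv.Perm (Fin n)) (i : Fin n) : Finset (Fin n) :=
  (lrmaxSet w).filter (fun j => j ≤ i)

lemma mem_blk {w : Equiv.Perm (Fin n)} {i j : Fin n} :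
    j ∈ blk w i ↔ j ∈ lrmaxSet w ∧ j ≤ i := Finset.mem_filter

lemma blk_nonempty (w : Equiv.Perm (Fin n)) (i : Fin n) : (blk w i).Nonempty :=
  ⟨⟨0, i.pos⟩, mem_blk.2 ⟨zero_mem_lrmaxSet w i, Fin.le_def.2 (Nat.zero_le _)⟩⟩

/-- The start of the block containing position `i`. -/
def bstart (w : Equiv.Perm (Fin n)) (i : Fin n) : Fin n :=
  (blk w i).max' (blk_nonempty w i)

lemma bstart_mem (w : Equiv.Perm (Fin n)) (i : Fin n) : bstart w i ∈ lrmaxSet w :=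
  (mem_blk.1 (Finset.max'_mem _ (blk_nonempty w i))).1

lemma bstart_le (w : Equiv.Perm (Fin n)) (i : Fin n) : bstart w i ≤ i :=
  (mem_blk.1 (Finset.max'_mem _ (blk_nonempty w i))).2

lemma le_bstart {w : Equiv.Perm (Fin n)} {i j : Fin n} (hj : j ∈ lrmaxSet w) (hji : j ≤ i) :
    j ≤ bstart w i :=
  Finset.le_max' _ _ (mem_blk.2 ⟨hj, hji⟩)

lemma bstart_of_lrmax {w : Equiv.Perm (Fin n)} {i : Fin n} (h : i ∈ lrmaxSet w) :
    bstart w i = i :=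
  le_antisymm (bstart_le w i) (le_bstart h le_rfl)

lemma bstart_mono (w : Equiv.Perm (Fin n)) {i i' : Fin n} (h : i ≤ i') :
    bstart w i ≤ bstart w i' :=
  le_bstart (bstart_mem w i) (le_trans (bstart_le w i) h)

lemma bstart_succ {w : Equiv.Perm (Fin n)} {i : Fin n} (h : (i : ℕ) + 1 < n)
    (hnl : (⟨(i : ℕ) + 1, h⟩ : Fin n) ∉ lrmaxSet w) :
    bstart w ⟨(i : ℕ) + 1, h⟩ = bstart w i := by
  refine le_antisymm ?_ (bstart_mono w (Fin.le_def.2 (by simp)))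
  have hb := bstart_mem w (⟨(i : ℕ) + 1, h⟩ : Fin n)
  have hble := bstart_le w (⟨(i : ℕ) + 1, h⟩ : Fin n)
  refine le_bstart hb ?_
  rcases lt_or_eq_of_le hble with h' | h'
  · rw [Fin.lt_def] at h'
    rw [Fin.le_def]
    simp at h' ⊢
    omega
  · exact absurd (h' ▸ hb) hnl

/-- Values at left-to-right maxima are monotone. -/
lemma lrmax_val_mono {w : Equiv.Perm (Fin n)} {b b' : Fin n} (hb : b ∈ lrmaxSet w)
    (hb' : b' ∈ lrmaxSet w) (h : b ≤ b') : w b ≤ w b' := by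
  rcases lt_or_eq_of_le h with h' | h'
  · exact le_of_lt ((mem_lrmaxSet.1 hb') b h')
  · exact le_of_eq (by rw [h'])

/-- Every value is at most the value at its block start. -/
lemma val_le_bstart (w : Equiv.Perm (Fin n)) (i : Fin n) : w i ≤ w (bstart w i) := by
  suffices H : ∀ m : ℕ, ∀ i : Fin n, (i : ℕ) < m → w i ≤ w (bstart w i) from H n i i.isLt
  intro m
  induction m with
  | zero => exact fun i hi => absurd hi (by omega)
  | succ m ih' =>
  intro i hi
  have ih : ∀ j : Fin n, j < i → w j ≤ w (bstart w j) := fun j hj =>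
    ih' j (by rw [Fin.lt_def] at hj; omega)
  by_cases h : i ∈ lrmaxSet w
  · rw [bstart_of_lrmax h]
  · have : ∃ j, j < i ∧ w i ≤ w j := by
      by_contra hc
      push_neg at hc
      exact h (mem_lrmaxSet.2 (fun j hj => hc j hj))
    obtain ⟨j, hj, hij⟩ := this
    calc w i ≤ w j := hij
      _ ≤ w (bstart w j) := ih j hj
      _ ≤ w (bstart w i) := lrmax_val_mono (bstart_mem w j) (bstart_mem w i)
          (bstart_mono w (le_of_lt hj))



/-- Positions whose block start is `j` (used when `j` is an lr-max). -/
def bfiber (w : Equiv.Perm (Fin n)) (j : Fin n) : Finset (Fin n) :=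
  Finset.univ.filter (fun e => bstart w e = j)

lemma mem_bfiber {w : Equiv.Perm (Fin n)} {j e : Fin n} :
    e ∈ bfiber w j ↔ bstart w e = j := by simp [bfiber]

lemma bfiber_nonempty {w : Equiv.Perm (Fin n)} {j : Fin n} (h : j ∈ lrmaxSet w) :
    (bfiber w j).Nonempty := ⟨j, mem_bfiber.2 (bstart_of_lrmax h)⟩

/-- The end of the block starting at `j`. -/
def bend (w : Equiv.Perm (Fin n)) (j : Fin n) : Fin n :=
  if h : j ∈ lrmaxSet w then (bfiber w j).max' (bfiber_nonempty h) else j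

lemma bstart_bend {w : Equiv.Perm (Fin n)} {j : Fin n} (h : j ∈ lrmaxSet w) :
    bstart w (bend w j) = j := by
  rw [bend, dif_pos h]
  exact mem_bfiber.1 (Finset.max'_mem (bfiber w j) (bfiber_nonempty h))

lemma le_bend {w : Equiv.Perm (Fin n)} {j e : Fin n} (h : j ∈ lrmaxSet w)
    (he : bstart w e = j) : e ≤ bend w j := by
  rw [bend, dif_pos h]
  exact Finset.le_max' (bfiber w j) e (mem_bfiber.2 he)

/-- The successor map: cycles each block. -/
def succF (w : Equiv.Perm (Fin n)) (i : Fin n) : Fin n :=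
  if h : (i : ℕ) + 1 < n then
    (if (⟨(i : ℕ) + 1, h⟩ : Fin n) ∈ lrmaxSet w then bstart w i else ⟨(i : ℕ) + 1, h⟩)
  else bstart w i

/-- The predecessor map. -/
def predF (w : Equiv.Perm (Fin n)) (j : Fin n) : Fin n :=
  if j ∈ lrmaxSet w then bend w j else ⟨(j : ℕ) - 1, lt_of_le_of_lt (by omega) j.isLt⟩

lemma val_ne_zero_of_not_lrmax {w : Equiv.Perm (Fin n)} {j : Fin n} (h : j ∉ lrmaxSet w) :
    (j : ℕ) ≠ 0 := by
  intro h0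
  have : j = ⟨0, j.pos⟩ := Fin.ext h0
  exact h (this ▸ zero_mem_lrmaxSet w j)

lemma succF_predF (w : Equiv.Perm (Fin n)) (j : Fin n) : succF w (predF w j) = j := by
  by_cases h : j ∈ lrmaxSet w
  · rw [predF, if_pos h]
    set e := bend w j with he
    have hbse : bstart w e = j := bstart_bend h
    rw [succF]
    by_cases h1 : (e : ℕ) + 1 < n
    · rw [dif_pos h1]
      have hnl : (⟨(e : ℕ) + 1, h1⟩ : Fin n) ∈ lrmaxSet w := by
        by_contra hnl
        have hbs := bstart_succ h1 hnl
        rw [hbse] at hbs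
        have hle := le_bend h hbs
        rw [Fin.le_def] at hle
        simp at hle
        rw [← he] at hle
        exact lt_irrefl _ hle
      rw [if_pos hnl, hbse]
    · rw [dif_neg h1, hbse]
  · rw [predF, if_neg h]
    have h0 : (j : ℕ) ≠ 0 := val_ne_zero_of_not_lrmax h
    rw [succF]
    have h1 : (j : ℕ) - 1 + 1 < n := by have := j.isLt; omega
    rw [dif_pos h1]
    have hj : (⟨(j : ℕ) - 1 + 1, h1⟩ : Fin n) = j := Fin.ext (by simp; omega)
    rw [hj, if_neg h]

lemma predF_succF (w : Equiv.Perm (Fin n)) (i : Fin n) : predF w (succF w i) = i := by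
  have key : ∀ h1 : (i : ℕ) + 1 < n, (⟨(i : ℕ) + 1, h1⟩ : Fin n) ∈ lrmaxSet w →
      bend w (bstart w i) = i := by
    intro h1 hl
    refine le_antisymm ?_ (le_bend (bstart_mem w i) rfl)
    by_contra hc
    push_neg at hc
    have h2 : (⟨(i : ℕ) + 1, h1⟩ : Fin n) ≤ bend w (bstart w i) := by
      rw [Fin.le_def]
      have := Fin.lt_def.1 hc
      simpa using this
    have h3 : (⟨(i : ℕ) + 1, h1⟩ : Fin n) ≤ bstart w (bend w (bstart w i)) :=
      le_bstart hl h2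
    rw [bstart_bend (bstart_mem w i)] at h3
    have h4 := Fin.le_def.1 (le_trans h3 (bstart_le w i))
    simp at h4
  have keyEnd : (i : ℕ) + 1 = n → bend w (bstart w i) = i := by
    intro h1
    refine le_antisymm ?_ (le_bend (bstart_mem w i) rfl)
    rw [Fin.le_def]
    have := (bend w (bstart w i)).isLt
    omega
  rw [succF]
  by_cases h1 : (i : ℕ) + 1 < n
  · rw [dif_pos h1]
    by_cases hl : (⟨(i : ℕ) + 1, h1⟩ : Fin n) ∈ lrmaxSet w
    · rw [if_pos hl, predF, if_pos (bstart_mem w i)]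
      exact key h1 hl
    · rw [if_neg hl, predF, if_neg hl]
      exact Fin.ext (by simp)
  · rw [dif_neg h1, predF, if_pos (bstart_mem w i)]
    exact keyEnd (by have := i.isLt; omega)

/-- The block successor as a permutation. -/
def succPerm (w : Equiv.Perm (Fin n)) : Equiv.Perm (Fin n) :=
  ⟨succF w, predF w, predF_succF w, succF_predF w⟩

/-- The inverse-Foata map. -/
def U (w : Equiv.Perm (Fin n)) : Equiv.Perm (Fin n) :=
  w * (succPerm w) * w⁻¹

lemma U_apply (w : Equiv.Perm (Fin n)) (x : Fin n) :
    U w x = w (succF w (w⁻¹ x)) := rfl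

lemma U_apply_w (w : Equiv.Perm (Fin n)) (i : Fin n) :
    U w (w i) = w (succF w i) := by
  rw [U_apply, perm_inv_apply_self]

/-- Weak-excedance-below-max set of a permutation. -/
def WS (p : Equiv.Perm (Fin n)) : Finset (Fin n) :=
  Finset.univ.filter (fun x => (x : ℕ) ≤ (p x : ℕ) ∧ ((p x : ℕ)) + 1 < n)

lemma mem_WS {p : Equiv.Perm (Fin n)} {x : Fin n} :
    x ∈ WS p ↔ (x : ℕ) ≤ (p x : ℕ) ∧ ((p x : ℕ)) + 1 < n := by simp [WS]

lemma top_le_bstart_last (w : Equiv.Perm (Fin n)) {i : Fin n} (hi : (i : ℕ) + 1 = n) :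
    ∀ k : Fin n, w k ≤ w (bstart w i) := by
  intro k
  have h1 : k ≤ i := Fin.le_def.2 (by have := k.isLt; omega)
  calc w k ≤ w (bstart w k) := val_le_bstart w k
    _ ≤ w (bstart w i) := lrmax_val_mono (bstart_mem w k) (bstart_mem w i) (bstart_mono w h1)

/-- Key characterization: `w i` lies in `WS (U w)` iff position `i` is an ascent
with bottom value `w i`. -/
lemma wval_mem_WS_U (w : Equiv.Perm (Fin n)) (i : Fin n) :
    w i ∈ WS (U w) ↔ ∃ h : (i : ℕ) + 1 < n, w i < w ⟨(i : ℕ) + 1, h⟩ := by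
  rw [mem_WS, U_apply_w, succF]
  by_cases h1 : (i : ℕ) + 1 < n
  · rw [dif_pos h1]
    by_cases hl : (⟨(i : ℕ) + 1, h1⟩ : Fin n) ∈ lrmaxSet w
    · rw [if_pos hl]
      have hasc : w i < w ⟨(i : ℕ) + 1, h1⟩ :=
        (mem_lrmaxSet.1 hl) i (Fin.lt_def.2 (by simp))
      have hb : w (bstart w i) < w ⟨(i : ℕ) + 1, h1⟩ :=
        (mem_lrmaxSet.1 hl) (bstart w i) (Fin.lt_def.2 (by
          have := Fin.le_def.1 (bstart_le w i); simp; omega))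
      constructor
      · intro _; exact ⟨h1, hasc⟩
      · intro _
        refine ⟨Fin.le_def.1 (val_le_bstart w i), ?_⟩
        have h2 := Fin.lt_def.1 hb
        have := (w ⟨(i : ℕ) + 1, h1⟩).isLt
        omega
    · rw [if_neg hl]
      constructor
      · intro ⟨hle, _⟩
        refine ⟨h1, Fin.lt_def.2 (lt_of_le_of_ne hle ?_)⟩
        intro heq
        have : w i = w ⟨(i : ℕ) + 1, h1⟩ := Fin.ext heq
        have := w.injective this
        rw [Fin.ext_iff] at this
        simp at this
      · intro ⟨_, hlt⟩
        refine ⟨le_of_lt (Fin.lt_def.1 hlt), ?_⟩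
        rw [mem_lrmaxSet] at hl
        push_neg at hl
        obtain ⟨j, hj, hnlt⟩ := hl
        have hne : w ⟨(i : ℕ) + 1, h1⟩ ≠ w j := by
          intro heq
          have := w.injective heq
          rw [this] at hj
          exact absurd hj (lt_irrefl _)
        have h2 : w ⟨(i : ℕ) + 1, h1⟩ < w j := lt_of_le_of_ne hnlt hne
        have h3 := Fin.lt_def.1 h2
        have := (w j).isLt
        omega
  · rw [dif_neg h1]
    have hi : (i : ℕ) + 1 = n := by have := i.isLt; omega
    constructor
    · intro ⟨_, hlt⟩
      exfalso
      have htop := top_le_bstart_last w hi (w⁻¹ ⟨n - 1, by omega⟩)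
      rw [perm_apply_inv_self] at htop
      have := Fin.le_def.1 htop
      simp at this
      omega
    · intro ⟨h, _⟩; omega

lemma succF_eq_next {w : Equiv.Perm (Fin n)} {i : Fin n} (h1 : (i : ℕ) + 1 < n)
    (hnl : (⟨(i : ℕ) + 1, h1⟩ : Fin n) ∉ lrmaxSet w) :
    succF w i = ⟨(i : ℕ) + 1, h1⟩ := by
  rw [succF, dif_pos h1, if_neg hnl]

lemma succF_eq_bstart {w : Equiv.Perm (Fin n)} {i : Fin n}
    (h : (i : ℕ) + 1 = n ∨ ∃ h1 : (i : ℕ) + 1 < n, (⟨(i : ℕ) + 1, h1⟩ : Fin n) ∈ lrmaxSet w) :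
    succF w i = bstart w i := by
  rw [succF]
  rcases h with h | ⟨h1, hl⟩
  · rw [dif_neg (by omega)]
  · rw [dif_pos h1, if_pos hl]

lemma bstart_succF (w : Equiv.Perm (Fin n)) (i : Fin n) :
    bstart w (succF w i) = bstart w i := by
  rw [succF]
  by_cases h1 : (i : ℕ) + 1 < n
  · rw [dif_pos h1]
    by_cases hl : (⟨(i : ℕ) + 1, h1⟩ : Fin n) ∈ lrmaxSet w
    · rw [if_pos hl]
      exact bstart_of_lrmax (bstart_mem w i)
    · rw [if_neg hl]
      exact bstart_succ h1 hl
  · rw [dif_neg h1]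
    exact bstart_of_lrmax (bstart_mem w i)

lemma bstart_predF (w : Equiv.Perm (Fin n)) (j : Fin n) :
    bstart w (predF w j) = bstart w j := by
  conv_rhs => rw [← succF_predF w j]
  rw [bstart_succF]

lemma bstart_succPerm_zpow (w : Equiv.Perm (Fin n)) (k : ℤ) (i : Fin n) :
    bstart w ((succPerm w ^ k) i) = bstart w i := by
  induction k using Int.induction_on with
  | zero => simp
  | succ m ih =>
    have : (succPerm w ^ ((m : ℤ) + 1)) i = succPerm w ((succPerm w ^ (m : ℤ)) i) := by
      rw [add_comm, zpow_add, zpow_one]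
      simp [Equiv.Perm.mul_apply]
    rw [this]
    have : succPerm w ((succPerm w ^ (m : ℤ)) i) = succF w ((succPerm w ^ (m : ℤ)) i) := rfl
    rw [this, bstart_succF, ih]
  | pred m ih =>
    have : (succPerm w ^ (-(m : ℤ) - 1)) i = (succPerm w)⁻¹ ((succPerm w ^ (-(m : ℤ))) i) := by
      rw [sub_eq_add_neg, add_comm, zpow_add, zpow_neg_one]
      simp [Equiv.Perm.mul_apply]
    rw [this]
    have hinv : ((succPerm w)⁻¹ ((succPerm w ^ (-(m : ℤ))) i)) = predF w ((succPerm w ^ (-(m : ℤ))) i) := rfl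
    rw [hinv, bstart_predF, ih]

lemma sameCycle_bstart_eq {w : Equiv.Perm (Fin n)} {i j : Fin n}
    (h : (succPerm w).SameCycle i j) : bstart w i = bstart w j := by
  obtain ⟨k, hk⟩ := h
  rw [← hk, bstart_succPerm_zpow]

lemma sameCycle_bstart (w : Equiv.Perm (Fin n)) (i : Fin n) :
    (succPerm w).SameCycle i (bstart w i) := by
  suffices H : ∀ m : ℕ, ∀ i : Fin n, n - (i : ℕ) ≤ m → (succPerm w).SameCycle i (bstart w i) from
    H n i (by omega)
  intro m
  induction m with
  | zero => intro i hi; exact absurd hi (by have := i.isLt; omega)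
  | succ m ih =>
    intro i hi
    by_cases h1 : (i : ℕ) + 1 < n
    · by_cases hl : (⟨(i : ℕ) + 1, h1⟩ : Fin n) ∈ lrmaxSet w
      · have : succPerm w i = bstart w i := succF_eq_bstart (Or.inr ⟨h1, hl⟩)
        exact ⟨1, by simpa using this⟩
      · have hstep : succPerm w i = ⟨(i : ℕ) + 1, h1⟩ := succF_eq_next h1 hl
        have hsc : (succPerm w).SameCycle i (⟨(i : ℕ) + 1, h1⟩ : Fin n) := ⟨1, by simpa using hstep⟩
        have h2 := ih (⟨(i : ℕ) + 1, h1⟩ : Fin n) (by simp; omega)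
        have hbs : bstart w (⟨(i : ℕ) + 1, h1⟩ : Fin n) = bstart w i := bstart_succ h1 hl
        exact hsc.trans (hbs ▸ h2)
    · have : succPerm w i = bstart w i := succF_eq_bstart (Or.inl (by have := i.isLt; omega))
      exact ⟨1, by simpa using this⟩

/-- Cycle-maxima of a permutation. -/
def Mset (p : Equiv.Perm (Fin n)) : Finset (Fin n) :=
  Finset.univ.filter (fun x => ∀ y, p.SameCycle x y → y ≤ x)

lemma mem_Mset {p : Equiv.Perm (Fin n)} {x : Fin n} :
    x ∈ Mset p ↔ ∀ y, p.SameCycle x y → y ≤ x := by simp [Mset]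

lemma sameCycle_U_iff {w : Equiv.Perm (Fin n)} {a b : Fin n} :
    (U w).SameCycle (w a) (w b) ↔ (succPerm w).SameCycle a b := by
  rw [U, Equiv.Perm.sameCycle_conj]
  simp

lemma wb_mem_Mset {w : Equiv.Perm (Fin n)} {b : Fin n} (hb : b ∈ lrmaxSet w) :
    w b ∈ Mset (U w) := by
  rw [mem_Mset]
  intro y hy
  have hy' : (U w).SameCycle (w b) (w (w⁻¹ y)) := by
    rwa [perm_apply_inv_self]
  rw [sameCycle_U_iff] at hy'
  have hbs : bstart w b = bstart w (w⁻¹ y) := sameCycle_bstart_eq hy'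
  rw [bstart_of_lrmax hb] at hbs
  calc y = w (w⁻¹ y) := (perm_apply_inv_self w y).symm
    _ ≤ w (bstart w (w⁻¹ y)) := val_le_bstart w _
    _ = w b := by rw [← hbs]

lemma mem_Mset_eq_bstart {w : Equiv.Perm (Fin n)} {x : Fin n} (hx : x ∈ Mset (U w)) :
    x = w (bstart w (w⁻¹ x)) := by
  have hsc : (U w).SameCycle (w (w⁻¹ x)) (w (bstart w (w⁻¹ x))) :=
    sameCycle_U_iff.2 (sameCycle_bstart w (w⁻¹ x))
  rw [perm_apply_inv_self] at hsc
  have h1 : w (bstart w (w⁻¹ x)) ≤ x := (mem_Mset.1 hx) _ hsc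
  have h2 : x ≤ w (bstart w (w⁻¹ x)) := by
    conv_lhs => rw [← perm_apply_inv_self w x]
    exact val_le_bstart w _
  exact le_antisymm h2 h1

/-- Seen values: image of positions `≤ i`. -/
def seen (w : Equiv.Perm (Fin n)) (i : Fin n) : Finset (Fin n) :=
  (Finset.Iic i).image w

lemma mem_seen {w : Equiv.Perm (Fin n)} {i z : Fin n} :
    z ∈ seen w i ↔ w⁻¹ z ≤ i := by
  simp only [seen, Finset.mem_image, Finset.mem_Iic]
  constructor
  · rintro ⟨j, hj, rfl⟩
    simpa using hj
  · intro h
    exact ⟨w⁻¹ z, h, by simp⟩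

lemma min'_congr {s t : Finset (Fin n)} (h : s = t) (hs : s.Nonempty) (ht : t.Nonempty) :
    s.min' hs = t.min' ht := by subst h; rfl

lemma w_zero_eq_min (w : Equiv.Perm (Fin n)) (hn : 0 < n) :
    w ⟨0, hn⟩ = (Mset (U w)).min'
      ⟨w ⟨0, hn⟩, wb_mem_Mset (zero_mem_lrmaxSet w ⟨0, hn⟩)⟩ := by
  refine le_antisymm (Finset.le_min' _ _ _ ?_) (Finset.min'_le _ _
    (wb_mem_Mset (zero_mem_lrmaxSet w ⟨0, hn⟩)))
  intro x hx
  rw [mem_Mset_eq_bstart hx]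
  exact lrmax_val_mono (zero_mem_lrmaxSet w ⟨0, hn⟩) (bstart_mem w _)
    (Fin.le_def.2 (Nat.zero_le _))

lemma Uw_mem_seen_iff (w : Equiv.Perm (Fin n)) (i : Fin n) :
    U w (w i) ∈ seen w i ↔
      ((i : ℕ) + 1 = n ∨ ∃ h1 : (i : ℕ) + 1 < n, (⟨(i : ℕ) + 1, h1⟩ : Fin n) ∈ lrmaxSet w) := by
  rw [U_apply_w, mem_seen, perm_inv_apply_self]
  constructor
  · intro h
    by_cases h1 : (i : ℕ) + 1 < n
    · by_cases hl : (⟨(i : ℕ) + 1, h1⟩ : Fin n) ∈ lrmaxSet w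
      · exact Or.inr ⟨h1, hl⟩
      · rw [succF_eq_next h1 hl, Fin.le_def] at h
        simp at h
    · exact Or.inl (by have := i.isLt; omega)
  · intro h
    rw [succF_eq_bstart h]
    exact bstart_le w i

lemma w_lrmax_eq_min {w : Equiv.Perm (Fin n)} {i i0 : Fin n} (hi : i ∈ lrmaxSet w)
    (hi0 : (i0 : ℕ) + 1 = (i : ℕ)) :
    w i = ((Mset (U w)) \ seen w i0).min'
      ⟨w i, Finset.mem_sdiff.2 ⟨wb_mem_Mset hi, by
        rw [mem_seen, perm_inv_apply_self, Fin.le_def]; omega⟩⟩ := by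
  have hmem : w i ∈ Mset (U w) \ seen w i0 := Finset.mem_sdiff.2 ⟨wb_mem_Mset hi, by
    rw [mem_seen, perm_inv_apply_self, Fin.le_def]; omega⟩
  refine le_antisymm (Finset.le_min' _ _ _ ?_) (Finset.min'_le _ _ hmem)
  intro x hx
  rw [Finset.mem_sdiff] at hx
  obtain ⟨hxm, hxs⟩ := hx
  have hxb := mem_Mset_eq_bstart hxm
  rw [mem_seen] at hxs
  push_neg at hxs
  -- `w⁻¹ x = bstart w (w⁻¹ x)` since `x = w (bstart w (w⁻¹ x))`
  have hfix : bstart w (w⁻¹ x) = w⁻¹ x := by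
    have : w⁻¹ x = w⁻¹ (w (bstart w (w⁻¹ x))) := by conv_lhs => rw [hxb]
    rw [perm_inv_apply_self] at this
    exact this.symm
  have hge : i ≤ w⁻¹ x := by
    rw [Fin.le_def]
    have := Fin.lt_def.1 hxs
    omega
  calc w i ≤ w (bstart w (w⁻¹ x)) :=
        lrmax_val_mono hi (bstart_mem w _) (by rw [hfix]; exact hge)
    _ = x := hxb.symm

theorem U_injective : Function.Injective (U : Equiv.Perm (Fin n) → Equiv.Perm (Fin n)) := by
  intro w w' hU
  have key : ∀ m : ℕ, ∀ i : Fin n, (i : ℕ) ≤ m → w i = w' i := by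
    intro m
    induction m with
    | zero =>
      intro i hi
      have h0 : i = ⟨0, i.pos⟩ := Fin.ext (by simp; omega)
      rw [h0, w_zero_eq_min w i.pos, w_zero_eq_min w' i.pos]
      exact min'_congr (by rw [hU]) _ _
    | succ m ih =>
      intro i hi
      rcases Nat.lt_or_ge (i : ℕ) (m + 1) with h | h
      · exact ih i (by omega)
      · have hiv : (i : ℕ) = m + 1 := by omega
        have hm : m < n := by have := i.isLt; omega
        have hin := i.isLt
        let i0 : Fin n := ⟨m, hm⟩
        have hi0v : (i0 : ℕ) = m := rfl
        have hIH : ∀ j : Fin n, j ≤ i0 → w j = w' j := fun j hj => ih j (Fin.le_def.1 hj)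
        have hseen : seen w i0 = seen w' i0 := by
          unfold seen
          apply Finset.image_congr
          intro j hj
          exact hIH j (Finset.mem_Iic.1 hj)
        have hwi0 : w i0 = w' i0 := hIH i0 le_rfl
        have hfin : (⟨(i0 : ℕ) + 1, by omega⟩ : Fin n) = i := Fin.ext (by simp; omega)
        by_cases hz : U w (w i0) ∈ seen w i0
        · have hc := (Uw_mem_seen_iff w i0).1 hz
          have hc' := (Uw_mem_seen_iff w' i0).1 (by rw [← hwi0, ← hU, ← hseen]; exact hz)
          have hl : i ∈ lrmaxSet w := by
            rcases hc with h' | ⟨h1, hl⟩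
            · exfalso; omega
            · rwa [hfin] at hl
          have hl' : i ∈ lrmaxSet w' := by
            rcases hc' with h' | ⟨h1, hl'⟩
            · exfalso; omega
            · rwa [hfin] at hl'
          rw [w_lrmax_eq_min (i0 := i0) hl (by omega), w_lrmax_eq_min (i0 := i0) hl' (by omega)]
          exact min'_congr (by rw [hU, hseen]) _ _
        · have hc := (Uw_mem_seen_iff w i0).not.1 hz
          have hz' : U w' (w' i0) ∉ seen w' i0 := by rw [← hwi0, ← hU, ← hseen]; exact hz
          have hc' := (Uw_mem_seen_iff w' i0).not.1 hz'
          push_neg at hc hc'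
          obtain ⟨hne, hnl⟩ := hc
          obtain ⟨hne', hnl'⟩ := hc'
          have h1 : (i0 : ℕ) + 1 < n := by omega
          have e1 : w i = U w (w i0) := by
            rw [U_apply_w, succF_eq_next h1 (hnl h1), hfin]
          have e2 : w' i = U w' (w' i0) := by
            rw [U_apply_w, succF_eq_next h1 (hnl' h1), hfin]
          rw [e1, e2, ← hwi0, ← hU]
  exact Equiv.ext (fun i => key n i (le_of_lt i.isLt))

/-- `U` as an equivalence. -/
noncomputable def Uequiv : Equiv.Perm (Fin n) ≃ Equiv.Perm (Fin n) :=
  Equiv.ofBijective U (Finite.injective_iff_bijective.1 U_injective)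

lemma B0_aux (x : Fin n) : n - 2 - (x : ℕ) < n := by have := x.isLt; omega

/-- Reversal of `[0, n-2]` fixing `n-1`. -/
def B0fun (x : Fin n) : Fin n :=
  if (x : ℕ) + 1 = n then x else ⟨n - 2 - (x : ℕ), B0_aux x⟩

lemma B0fun_involutive : Function.Involutive (B0fun (n := n)) := by
  intro x
  have hx := x.isLt
  unfold B0fun
  split_ifs with h1 h2
  · rfl
  · exfalso; simp at h2; omega
  · apply Fin.ext; simp; omega

def B0 : Equiv.Perm (Fin n) := B0fun_involutive.toPerm

lemma B0_apply (x : Fin n) : B0 x = B0fun x := rfl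

lemma B0_val (x : Fin n) :
    ((B0 x : Fin n) : ℕ) = if (x : ℕ) + 1 = n then (x : ℕ) else n - 2 - (x : ℕ) := by
  rw [B0_apply]
  unfold B0fun
  split_ifs <;> rfl

lemma A0_aux1 (x : Fin n) : n - 2 < n := by have := x.isLt; omega
lemma A0_aux2 (x : Fin n) : n - 1 < n := by have := x.isLt; omega
lemma A0_aux3 (x : Fin n) : n - 3 - (x : ℕ) < n := by have := x.isLt; omega

/-- Swaps `n-1 ↔ n-2`, reverses `[0, n-3]`. -/
def A0fun (x : Fin n) : Fin n :=
  if (x : ℕ) + 1 = n then ⟨n - 2, A0_aux1 x⟩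
  else if (x : ℕ) + 2 = n then ⟨n - 1, A0_aux2 x⟩
  else ⟨n - 3 - (x : ℕ), A0_aux3 x⟩

lemma A0fun_involutive : Function.Involutive (A0fun (n := n)) := by
  intro x
  have hx := x.isLt
  unfold A0fun
  split_ifs with h1 h2 h3 h4 h5 h6 h7 <;> first
    | rfl
    | (apply Fin.ext; simp_all; omega)
    | (exfalso; simp_all; omega)

def A0 : Equiv.Perm (Fin n) := A0fun_involutive.toPerm

lemma A0_val (x : Fin n) :
    ((A0 x : Fin n) : ℕ) =
      if (x : ℕ) + 1 = n then n - 2 else if (x : ℕ) + 2 = n then n - 1 else n - 3 - (x : ℕ) := by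
  show ((A0fun x : Fin n) : ℕ) = _
  unfold A0fun
  split_ifs <;> rfl

/-- The set of `x` that fail the weak-excedance condition (and are not the top). -/
def badSet (p : Equiv.Perm (Fin n)) : Finset (Fin n) :=
  Finset.univ.filter (fun x => (x : ℕ) + 1 < n ∧ ¬((x : ℕ) ≤ (p x : ℕ) ∧ ((p x : ℕ)) + 1 < n))

lemma mem_badSet {p : Equiv.Perm (Fin n)} {x : Fin n} :
    x ∈ badSet p ↔ (x : ℕ) + 1 < n ∧ ¬((x : ℕ) ≤ (p x : ℕ) ∧ ((p x : ℕ)) + 1 < n) := by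
  simp only [badSet, Finset.mem_filter, Finset.mem_univ, true_and]

/-- The conjugation complementation lemma. -/
lemma WS_conj (p : Equiv.Perm (Fin n)) :
    WS (A0 * p * B0) = (badSet p).image (fun x => B0 x) := by
  ext y
  have himg : (y ∈ (badSet p).image (fun x => B0 x)) ↔ B0 y ∈ badSet p := by
    constructor
    · rintro h
      rw [Finset.mem_image] at h
      obtain ⟨x, hx, rfl⟩ := h
      rwa [show B0 ((B0 : Equiv.Perm (Fin n)) x) = x from B0fun_involutive x]
    · intro h
      rw [Finset.mem_image]
      exact ⟨B0 y, h, B0fun_involutive y⟩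
  rw [himg, mem_WS, mem_badSet]
  simp only [Equiv.Perm.mul_apply]
  rw [A0_val]
  have hyv : (y : ℕ) = if ((B0 y : Fin n) : ℕ) + 1 = n then ((B0 y : Fin n) : ℕ)
      else n - 2 - ((B0 y : Fin n) : ℕ) := by
    conv_lhs => rw [show y = B0 ((B0 : Equiv.Perm (Fin n)) y) from (B0fun_involutive y).symm]
    rw [B0_val]
  have hu : ((B0 y : Fin n) : ℕ) < n := (B0 (n := n) y).isLt
  have hv : ((p (B0 y) : Fin n) : ℕ) < n := (p (B0 (n := n) y)).isLt
  rw [hyv]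
  split_ifs <;> omega

lemma pval_eq (w : Equiv.Perm (Fin n)) {i : ℕ} (h : i - 1 < n) :
    pval w i = (w ⟨i - 1, h⟩ : ℕ) + 1 := by rw [pval, dif_pos h]

/-- Bridge: `ascentBottoms` via `WS (U w)`. -/
lemma ascentBottoms_eq (w : Equiv.Perm (Fin n)) :
    ascentBottoms w = (WS (U w)).image (fun x : Fin n => (x : ℕ) + 1) := by
  ext v
  simp only [ascentBottoms, Finset.mem_image, Finset.mem_filter, Finset.mem_Icc]
  constructor
  · rintro ⟨i, ⟨⟨hi1, hi2⟩, hasc⟩, rfl⟩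
    have hin : i - 1 < n := by omega
    have hin2 : (i + 1) - 1 < n := by omega
    refine ⟨w ⟨i - 1, hin⟩, ?_, by rw [pval_eq w hin]⟩
    rw [wval_mem_WS_U]
    have hlt : (i - 1 : ℕ) + 1 < n := by omega
    refine ⟨hlt, ?_⟩
    have : (⟨(i - 1 : ℕ) + 1, hlt⟩ : Fin n) = ⟨(i + 1) - 1, hin2⟩ := Fin.ext (by simp; omega)
    rw [this, Fin.lt_def]
    rw [pval_eq w hin, pval_eq w hin2] at hasc
    omega
  · rintro ⟨x, hx, rfl⟩
    have hx' := hx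
    rw [show x = w (w⁻¹ x) from (perm_apply_inv_self w x).symm] at hx'
    rw [wval_mem_WS_U] at hx'
    obtain ⟨h1, hasc⟩ := hx'
    set i : ℕ := ((w⁻¹ x : Fin n) : ℕ) + 1 with hidef
    have hin : i - 1 < n := by omega
    have hin2 : (i + 1) - 1 < n := by omega
    refine ⟨i, ⟨⟨by omega, by omega⟩, ?_⟩, ?_⟩
    · rw [pval_eq w hin, pval_eq w hin2]
      have e1 : (⟨i - 1, hin⟩ : Fin n) = w⁻¹ x :=
        Fin.ext (by show i - 1 = ((w⁻¹ x : Fin n) : ℕ); omega)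
      have e2 : (⟨(i + 1) - 1, hin2⟩ : Fin n) = ⟨((w⁻¹ x : Fin n) : ℕ) + 1, h1⟩ :=
        Fin.ext (by show i + 1 - 1 = ((w⁻¹ x : Fin n) : ℕ) + 1; omega)
      rw [e1, e2]
      have := Fin.lt_def.1 hasc
      omega
    · rw [pval_eq w hin]
      have e1 : (⟨i - 1, hin⟩ : Fin n) = w⁻¹ x :=
        Fin.ext (by show i - 1 = ((w⁻¹ x : Fin n) : ℕ); omega)
      rw [e1, perm_apply_inv_self]

lemma ascentBottoms_subset_Icc (w : Equiv.Perm (Fin n)) :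
    ascentBottoms w ⊆ Finset.Icc 1 (n - 1) := by
  rw [ascentBottoms_eq]
  intro v hv
  rw [Finset.mem_image] at hv
  obtain ⟨x, hx, rfl⟩ := hv
  rw [mem_WS] at hx
  rw [Finset.mem_Icc]
  omega

lemma descentSet_subset_Icc (π : Equiv.Perm (Fin n)) :
    descentSet π ⊆ Finset.Icc 1 (n - 1) := Finset.filter_subset _ _

/-- Bridge: reversal complements-and-reflects the descent set. -/
lemma descentSet_rev (π : Equiv.Perm (Fin n)) :
    descentSet (π * Fin.revPerm) =
      (Finset.Icc 1 (n - 1) \ descentSet π).image (fun i => n - i) := by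
  ext i
  rw [descentSet, Finset.mem_filter, Finset.mem_Icc, Finset.mem_image]
  constructor
  · rintro ⟨⟨hi1, hi2⟩, hdesc⟩
    have hn1 : 1 ≤ n := by omega
    refine ⟨n - i, ?_, by omega⟩
    rw [Finset.mem_sdiff, Finset.mem_Icc]
    refine ⟨⟨by omega, by omega⟩, ?_⟩
    rw [descentSet, Finset.mem_filter, Finset.mem_Icc]
    push_neg
    intro _
    have hin : i - 1 < n := by omega
    have hin2 : (i + 1) - 1 < n := by omega
    rw [pval_eq _ hin, pval_eq _ hin2] at hdesc
    have hjn : (n - i) - 1 < n := by omega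
    have hjn2 : ((n - i) + 1) - 1 < n := by omega
    rw [pval_eq _ hjn, pval_eq _ hjn2]
    have e1 : ((π * Fin.revPerm : Equiv.Perm (Fin n))) ⟨i - 1, hin⟩ = π ⟨(n - i + 1) - 1, hjn2⟩ := by
      have harg : (Fin.revPerm (⟨i - 1, hin⟩ : Fin n)) = (⟨(n - i + 1) - 1, hjn2⟩ : Fin n) :=
        Fin.ext (by simp only [Fin.revPerm_apply, Fin.val_rev]; omega)
      rw [Equiv.Perm.mul_apply, harg]
    have e2 : ((π * Fin.revPerm : Equiv.Perm (Fin n))) ⟨(i + 1) - 1, hin2⟩ = π ⟨(n - i) - 1, hjn⟩ := by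
      have harg : (Fin.revPerm (⟨(i + 1) - 1, hin2⟩ : Fin n)) = (⟨(n - i) - 1, hjn⟩ : Fin n) :=
        Fin.ext (by simp only [Fin.revPerm_apply, Fin.val_rev]; omega)
      rw [Equiv.Perm.mul_apply, harg]
    rw [e1, e2] at hdesc
    omega
  · rintro ⟨j, hj, rfl⟩
    rw [Finset.mem_sdiff, Finset.mem_Icc] at hj
    obtain ⟨⟨hj1, hj2⟩, hnd⟩ := hj
    rw [descentSet, Finset.mem_filter, Finset.mem_Icc] at hnd
    push_neg at hnd
    have hasc := hnd ⟨hj1, hj2⟩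
    have hjn : j - 1 < n := by omega
    have hjn2 : (j + 1) - 1 < n := by omega
    rw [pval_eq _ hjn, pval_eq _ hjn2] at hasc
    have hne : π ⟨j - 1, hjn⟩ ≠ π ⟨(j + 1) - 1, hjn2⟩ := by
      intro h
      have := π.injective h
      rw [Fin.ext_iff] at this
      simp at this
      omega
    have hlt : (π ⟨j - 1, hjn⟩ : ℕ) < (π ⟨(j + 1) - 1, hjn2⟩ : ℕ) := by
      have : (π ⟨j - 1, hjn⟩ : ℕ) ≠ (π ⟨(j + 1) - 1, hjn2⟩ : ℕ) := fun h => hne (Fin.ext h)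
      omega
    refine ⟨⟨by omega, by omega⟩, ?_⟩
    have hin : (n - j) - 1 < n := by omega
    have hin2 : ((n - j) + 1) - 1 < n := by omega
    rw [pval_eq _ hin, pval_eq _ hin2]
    have e1 : ((π * Fin.revPerm : Equiv.Perm (Fin n))) ⟨(n - j) - 1, hin⟩ = π ⟨(j + 1) - 1, hjn2⟩ := by
      have harg : (Fin.revPerm (⟨(n - j) - 1, hin⟩ : Fin n)) = (⟨(j + 1) - 1, hjn2⟩ : Fin n) :=
        Fin.ext (by simp only [Fin.revPerm_apply, Fin.val_rev]; omega)
      rw [Equiv.Perm.mul_apply, harg]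
    have e2 : ((π * Fin.revPerm : Equiv.Perm (Fin n))) ⟨(n - j) + 1 - 1, hin2⟩ = π ⟨j - 1, hjn⟩ := by
      have harg : (Fin.revPerm (⟨(n - j) + 1 - 1, hin2⟩ : Fin n)) = (⟨j - 1, hjn⟩ : Fin n) :=
        Fin.ext (by simp only [Fin.revPerm_apply, Fin.val_rev]; omega)
      rw [Equiv.Perm.mul_apply, harg]
    rw [e1, e2]
    omega

/-- The ascent-bottom complementing bijection. -/
noncomputable def PsiEquiv : Equiv.Perm (Fin n) ≃ Equiv.Perm (Fin n) :=
  Uequiv.trans ((Equiv.mulRight B0).trans ((Equiv.mulLeft A0).trans Uequiv.symm))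

lemma U_PsiEquiv (τ : Equiv.Perm (Fin n)) : U (PsiEquiv τ) = A0 * U τ * B0 := by
  have h1 : PsiEquiv τ = Uequiv.symm (A0 * (U τ * B0)) := rfl
  have h2 : U (Uequiv.symm (A0 * (U τ * B0))) = A0 * (U τ * B0) :=
    Uequiv.apply_symm_apply _
  rw [h1, h2, mul_assoc]

lemma image_badSet_eq (p : Equiv.Perm (Fin n)) :
    ((badSet p).image (fun x => (B0 : Equiv.Perm (Fin n)) x)).image
        (fun x : Fin n => (x : ℕ) + 1) =
      (Finset.Icc 1 (n - 1) \ (WS p).image (fun x : Fin n => (x : ℕ) + 1)).image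
        (fun v => n - v) := by
  ext v
  simp only [Finset.mem_image, Finset.mem_sdiff, Finset.mem_Icc]
  constructor
  · rintro ⟨y, ⟨x, hx, rfl⟩, rfl⟩
    rw [mem_badSet] at hx
    obtain ⟨hx1, hx2⟩ := hx
    have hB : ((B0 (n := n) x : Fin n) : ℕ) = n - 2 - (x : ℕ) := by
      rw [B0_val, if_neg (by omega)]
    refine ⟨(x : ℕ) + 1, ⟨⟨by omega, by omega⟩, ?_⟩, by omega⟩
    rintro ⟨x', hx', hval⟩
    rw [mem_WS] at hx'
    have : x' = x := Fin.ext (by omega)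
    rw [this] at hx'
    exact hx2 hx'
  · rintro ⟨j, ⟨⟨hj1, hj2⟩, hnotin⟩, rfl⟩
    have hjn : j - 1 < n := by omega
    set x : Fin n := ⟨j - 1, hjn⟩ with hxdef
    have hxv : (x : ℕ) = j - 1 := rfl
    have hxmem : x ∈ badSet p := by
      rw [mem_badSet]
      refine ⟨by omega, ?_⟩
      intro hcond
      exact hnotin ⟨x, mem_WS.2 hcond, by omega⟩
    have hB : ((B0 (n := n) x : Fin n) : ℕ) = n - 2 - (x : ℕ) := by
      rw [B0_val, if_neg (by omega)]
    exact ⟨B0 x, ⟨x, hxmem, rfl⟩, by omega⟩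

lemma ascentBottoms_Psi (τ : Equiv.Perm (Fin n)) :
    ascentBottoms (PsiEquiv τ) =
      (Finset.Icc 1 (n - 1) \ ascentBottoms τ).image (fun v => n - v) := by
  rw [ascentBottoms_eq, U_PsiEquiv, WS_conj, image_badSet_eq, ascentBottoms_eq]

lemma subset_iff_compl {A D : Finset ℕ} (hA : A ⊆ Finset.Icc 1 (n - 1))
    (hD : D ⊆ Finset.Icc 1 (n - 1)) :
    A ⊆ D ↔ (Finset.Icc 1 (n - 1) \ D).image (fun i => n - i) ⊆
      (Finset.Icc 1 (n - 1) \ A).image (fun i => n - i) := by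
  constructor
  · intro hAD v hv
    rw [Finset.mem_image] at hv ⊢
    obtain ⟨j, hj, rfl⟩ := hv
    rw [Finset.mem_sdiff] at hj
    refine ⟨j, Finset.mem_sdiff.2 ⟨hj.1, fun hjA => hj.2 (hAD hjA)⟩, rfl⟩
  · intro himg a ha
    have haI := hA ha
    by_contra haD
    have : n - a ∈ (Finset.Icc 1 (n - 1) \ D).image (fun i => n - i) :=
      Finset.mem_image.2 ⟨a, Finset.mem_sdiff.2 ⟨haI, haD⟩, rfl⟩
    have h2 := himg this
    rw [Finset.mem_image] at h2
    obtain ⟨b, hb, hba⟩ := h2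
    rw [Finset.mem_sdiff, Finset.mem_Icc] at hb
    rw [Finset.mem_Icc] at haI
    have : b = a := by omega
    exact hb.2 (this ▸ ha)


end CardPairs

/-- The number of pairs `(π, τ)` of permutations of `{1, …, n}` with `A(τ) ⊆ D(π)` equals
the number of pairs `(π, τ)` of permutations of `{1, …, n}` with `D(π) ⊆ A(τ)`. -/
theorem card_pairs_ascentBottoms_subset_descentSet_eq_card_pairs_descentSet_subset
    (n : ℕ) (hn : 1 ≤ n) :
    Nat.card {p : Equiv.Perm (Fin n) × Equiv.Perm (Fin n) //
        ascentBottoms p.2 ⊆ descentSet p.1} =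
      Nat.card {p : Equiv.Perm (Fin n) × Equiv.Perm (Fin n) //
        descentSet p.1 ⊆ ascentBottoms p.2} := by
  apply Nat.card_congr
  refine Equiv.subtypeEquiv
    (Equiv.prodCongr (Equiv.mulRight Fin.revPerm) CardPairs.PsiEquiv) ?_
  intro p
  have h1 : ((Equiv.prodCongr (Equiv.mulRight Fin.revPerm) CardPairs.PsiEquiv) p).1 =
      p.1 * Fin.revPerm := rfl
  have h2 : ((Equiv.prodCongr (Equiv.mulRight Fin.revPerm) CardPairs.PsiEquiv) p).2 =
      CardPairs.PsiEquiv p.2 := rfl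
  rw [h1, h2, CardPairs.descentSet_rev, CardPairs.ascentBottoms_Psi]
  exact CardPairs.subset_iff_compl (CardPairs.ascentBottoms_subset_Icc _)
    (CardPairs.descentSet_subset_Icc _)
end
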